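/- arXiv:2602.06978 — 8 statements merged into one kernel-verified Lean document; each statement's English description precedes it below -/
import Mathlib

section
/- Let T > 0, τ > 0, α, β ∈ (0,1] and a, b ≥ 0. Let u : [-τ, T] → ℝ be continuous and nonnegative and f : [0, T] → ℝ continuous and nonnegative, and suppose that for all t ∈ [0, T], u(t) ≤ f(t) + a ∫₀ᵗ (t-s)^{α-1} u(s) ds + b ∫₀ᵗ (t-s)^{β-1} u(s-τ) ds. Set θ = a T^α/α + b T^β/β and H = sup_{s ∈ [-τ,0]} u(s). If θ < 1, then sup_{t ∈ [0,T]} u(t) ≤ ( sup_{t ∈ [0,T]} f(t) + b (T^β/β) H ) / (1 - θ). -/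
open MeasureTheory Set Real

lemma sing_integrable (t γ : ℝ) (ht : 0 ≤ t) (hγ : 0 < γ) :
    IntegrableOn (fun s => (t - s) ^ (γ - 1)) (Set.Ioc (0:ℝ) t) volume := by
  rw [← intervalIntegrable_iff_integrableOn_Ioc_of_le ht]
  have h := (intervalIntegral.intervalIntegrable_rpow' (a := 0) (b := t)
      (r := γ - 1) (by linarith)).comp_sub_left t
  simpa using h.symm

lemma sing_integral (t γ : ℝ) (ht : 0 ≤ t) (hγ : 0 < γ) :
    ∫ s in Set.Ioc (0:ℝ) t, (t - s) ^ (γ - 1) = t ^ γ / γ := by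
  rw [← intervalIntegral.integral_of_le ht,
    intervalIntegral.integral_comp_sub_left (fun x => x ^ (γ - 1)) t]
  simp only [sub_self, sub_zero]
  rw [integral_rpow (Or.inl (by linarith))]
  rw [sub_add_cancel, Real.zero_rpow (by linarith), sub_zero]

lemma sing_mono (t γ C : ℝ) (ht : 0 ≤ t) (hγ : 0 < γ) (_hC : 0 ≤ C)
    (v : ℝ → ℝ) (hv : ∀ s ∈ Set.Ioc (0:ℝ) t, 0 ≤ v s ∧ v s ≤ C) :
    ∫ s in Set.Ioc (0:ℝ) t, (t - s) ^ (γ - 1) * v s ≤ C * (t ^ γ / γ) := by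
  have hint : IntegrableOn (fun s => C * (t - s) ^ (γ - 1)) (Set.Ioc (0:ℝ) t) volume :=
    (sing_integrable t γ ht hγ).const_mul C
  have h1 : ∫ s in Set.Ioc (0:ℝ) t, (t - s) ^ (γ - 1) * v s
      ≤ ∫ s in Set.Ioc (0:ℝ) t, C * (t - s) ^ (γ - 1) := by
    apply integral_mono_of_nonneg
    · filter_upwards [ae_restrict_mem measurableSet_Ioc] with s hs
      exact mul_nonneg (Real.rpow_nonneg (by linarith [hs.2]) _) (hv s hs).1
    · exact hint
    · filter_upwards [ae_restrict_mem measurableSet_Ioc] with s hs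
      calc (t - s) ^ (γ - 1) * v s ≤ (t - s) ^ (γ - 1) * C :=
            mul_le_mul_of_nonneg_left (hv s hs).2 (Real.rpow_nonneg (by linarith [hs.2]) _)
        _ = C * (t - s) ^ (γ - 1) := mul_comm _ _
  rw [integral_const_mul, sing_integral t γ ht hγ] at h1
  exact h1

/-- **Quantitative small-horizon fractional Grönwall–Wendroff inequality.**
If a nonnegative continuous `u` satisfies
`u(t) ≤ f(t) + a ∫₀ᵗ (t-s)^(α-1) u(s) ds + b ∫₀ᵗ (t-s)^(β-1) u(s-τ) ds` on `[0,T]`,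
and `θ = a T^α/α + b T^β/β < 1`, then
`sup_{[0,T]} u ≤ (sup_{[0,T]} f + b (T^β/β) H) / (1-θ)`,
where `H = sup_{[-τ,0]} u`. -/
theorem scalar_fractional_gronwall_wendroff_small_horizon
    (T τ α β a b : ℝ) (hT : 0 < T) (hτ : 0 < τ)
    (hα : α ∈ Set.Ioc (0:ℝ) 1) (hβ : β ∈ Set.Ioc (0:ℝ) 1)
    (ha : 0 ≤ a) (hb : 0 ≤ b)
    (u f : ℝ → ℝ)
    (hu : ContinuousOn u (Set.Icc (-τ) T))
    (hu0 : ∀ t ∈ Set.Icc (-τ) T, 0 ≤ u t)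
    (hf : ContinuousOn f (Set.Icc (0:ℝ) T))
    (hf0 : ∀ t ∈ Set.Icc (0:ℝ) T, 0 ≤ f t)
    (hineq : ∀ t ∈ Set.Icc (0:ℝ) T,
      u t ≤ f t + a * (∫ s in Set.Ioc (0:ℝ) t, (t - s) ^ (α - 1) * u s)
        + b * (∫ s in Set.Ioc (0:ℝ) t, (t - s) ^ (β - 1) * u (s - τ)))
    (θ H : ℝ)
    (hθ : θ = a * T ^ α / α + b * T ^ β / β)
    (hH : H = ⨆ s : Set.Icc (-τ) (0:ℝ), u s)
    (hθ1 : θ < 1) :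
    (⨆ t : Set.Icc (0:ℝ) T, u t) ≤
      ((⨆ t : Set.Icc (0:ℝ) T, f t) + b * (T ^ β / β) * H) / (1 - θ) := by
  obtain ⟨hα0, hα1⟩ := hα
  obtain ⟨hβ0, hβ1⟩ := hβ
  have hτ0 : -τ ≤ 0 := by linarith
  have hsub1 : Set.Icc (0:ℝ) T ⊆ Set.Icc (-τ) T := Set.Icc_subset_Icc (by linarith) le_rfl
  have hsub2 : Set.Icc (-τ) (0:ℝ) ⊆ Set.Icc (-τ) T := Set.Icc_subset_Icc le_rfl hT.le
  set M := ⨆ t : Set.Icc (0:ℝ) T, u t with hM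
  set F := ⨆ t : Set.Icc (0:ℝ) T, f t with hF
  have hbu : BddAbove (Set.range fun t : Set.Icc (0:ℝ) T => u t) := by
    rw [← Set.image_eq_range]
    exact (isCompact_Icc.image_of_continuousOn (hu.mono hsub1)).bddAbove
  have hbf : BddAbove (Set.range fun t : Set.Icc (0:ℝ) T => f t) := by
    rw [← Set.image_eq_range]
    exact (isCompact_Icc.image_of_continuousOn hf).bddAbove
  have hbH : BddAbove (Set.range fun s : Set.Icc (-τ) (0:ℝ) => u s) := by
    rw [← Set.image_eq_range]
    exact (isCompact_Icc.image_of_continuousOn (hu.mono hsub2)).bddAbove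
  have hMle : ∀ t ∈ Set.Icc (0:ℝ) T, u t ≤ M := fun t ht => le_ciSup hbu ⟨t, ht⟩
  have hFle : ∀ t ∈ Set.Icc (0:ℝ) T, f t ≤ F := fun t ht => le_ciSup hbf ⟨t, ht⟩
  have hHle : ∀ s ∈ Set.Icc (-τ) (0:ℝ), u s ≤ H := fun s hs => hH ▸ le_ciSup hbH ⟨s, hs⟩
  have h0T : (0:ℝ) ∈ Set.Icc (0:ℝ) T := ⟨le_rfl, hT.le⟩
  have hM0 : 0 ≤ M := (hu0 0 (hsub1 h0T)).trans (hMle 0 h0T)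
  have hH0 : 0 ≤ H := (hu0 0 (hsub1 h0T)).trans (hHle 0 ⟨hτ0, le_rfl⟩)
  have hF0 : 0 ≤ F := (hf0 0 h0T).trans (hFle 0 h0T)
  have key : ∀ t ∈ Set.Icc (0:ℝ) T,
      u t ≤ F + a * (M * (T ^ α / α)) + b * ((H + M) * (T ^ β / β)) := by
    intro t ht
    have hI1 : (∫ s in Set.Ioc (0:ℝ) t, (t - s) ^ (α - 1) * u s) ≤ M * (t ^ α / α) := by
      apply sing_mono t α M ht.1 hα0 hM0
      intro s hs
      have hs' : s ∈ Set.Icc (0:ℝ) T := ⟨hs.1.le, hs.2.trans ht.2⟩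
      exact ⟨hu0 s (hsub1 hs'), hMle s hs'⟩
    have hI2 : (∫ s in Set.Ioc (0:ℝ) t, (t - s) ^ (β - 1) * u (s - τ))
        ≤ (H + M) * (t ^ β / β) := by
      apply sing_mono t β (H + M) ht.1 hβ0 (by linarith)
      intro s hs
      have hmem : s - τ ∈ Set.Icc (-τ) T := ⟨by linarith [hs.1], by linarith [hs.2, ht.2]⟩
      refine ⟨hu0 _ hmem, ?_⟩
      rcases le_or_gt (s - τ) 0 with h | h
      · have := hHle (s - τ) ⟨hmem.1, h⟩; linarith
      · have := hMle (s - τ) ⟨h.le, hmem.2⟩; linarith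
    have htα : t ^ α ≤ T ^ α := Real.rpow_le_rpow ht.1 ht.2 hα0.le
    have htβ : t ^ β ≤ T ^ β := Real.rpow_le_rpow ht.1 ht.2 hβ0.le
    calc u t ≤ f t + a * (∫ s in Set.Ioc (0:ℝ) t, (t - s) ^ (α - 1) * u s)
        + b * (∫ s in Set.Ioc (0:ℝ) t, (t - s) ^ (β - 1) * u (s - τ)) := hineq t ht
      _ ≤ F + a * (M * (T ^ α / α)) + b * ((H + M) * (T ^ β / β)) := by
          gcongr ?_ + a * ?_ + b * ?_
          · exact hFle t ht
          · exact hI1.trans (by gcongr)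
          · exact hI2.trans (by gcongr)
  haveI : Nonempty (Set.Icc (0:ℝ) T) := ⟨⟨0, h0T⟩⟩
  have hM' : M ≤ F + b * (T ^ β / β) * H + θ * M := by
    calc M ≤ F + a * (M * (T ^ α / α)) + b * ((H + M) * (T ^ β / β)) :=
          ciSup_le (fun t => key t t.2)
      _ = F + b * (T ^ β / β) * H + (a * T ^ α / α + b * T ^ β / β) * M := by ring
      _ = F + b * (T ^ β / β) * H + θ * M := by rw [hθ]
  rw [le_div_iff₀ (by linarith)]
  nlinarith [hM']
end

section
/- Let n ≥ 1, T > 0, τ > 0, α ∈ (0,1], x₀ ∈ ℝⁿ, and let φ : [-τ, 0] → ℝⁿ be continuous with φ(0) = x₀. Let G : [0,T] × ℝⁿ × ℝⁿ → ℝⁿ be continuous and satisfy ‖G(t, u₁, v₁) - G(t, u₂, v₂)‖ ≤ L (‖u₁ - u₂‖ + ‖v₁ - v₂‖) for all t and all arguments. For continuous x : [-τ, T] → ℝⁿ with x = φ on [-τ, 0], define (𝒯x)(t) = x₀ + (1/Γ(α)) ∫₀ᵗ (t-s)^{α-1} G(s, x(s), x(s-τ)) ds for t ∈ [0,T] and (𝒯x)(t)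 = φ(t) for t ∈ [-τ, 0]. Then for every κ ∈ (0,1) there exists ρ > 0 such that for all such x₁, x₂, sup_{t ∈ [0,T]} e^{-ρ t} ‖(𝒯x₁)(t) - (𝒯x₂)(t)‖ ≤ κ · sup_{t ∈ [0,T]} e^{-ρ t} ‖x₁(t) - x₂(t)‖; in particular 𝒯 is a strict contraction in the exponentially weighted norm ‖x‖_ρ = sup_{t ∈ [0,T]} e^{-ρ t} ‖x(t)‖. -/
open MeasureTheory Set Real

/-- Integrability of the scaled Gamma integrand. -/
lemma volterra_aux_integrableF {α ρ : ℝ} (hα : 0 < α) (hρ : 0 < ρ) :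
    IntegrableOn (fun u : ℝ => u ^ (α - 1) * Real.exp (-(ρ * u))) (Set.Ioi 0) := by
  have h := integrableOn_rpow_mul_exp_neg_mul_rpow (s := α - 1) (p := 1) (b := ρ)
    (by linarith) (by norm_num) hρ
  refine h.congr_fun (fun x hx => ?_) measurableSet_Ioi
  beta_reduce; rw [Real.rpow_one, neg_mul]

/-- Key kernel estimate: the exponentially weighted fractional kernel integral is bounded by
`exp (ρ t) * (1/ρ)^α * Γ(α)`. -/
lemma volterra_aux_kernel {α ρ t : ℝ} (hα : 0 < α) (hρ : 0 < ρ) (ht : 0 ≤ t) :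
    ∫ s in Set.Ioc (0:ℝ) t, (t - s) ^ (α - 1) * Real.exp (ρ * s) ≤
      Real.exp (ρ * t) * ((1 / ρ) ^ α * Real.Gamma α) := by
  set F : ℝ → ℝ := fun u => u ^ (α - 1) * Real.exp (-(ρ * u)) with hF
  have hFint : IntegrableOn F (Set.Ioi 0) := volterra_aux_integrableF hα hρ
  have heq : ∫ s in Set.Ioc (0:ℝ) t, (t - s) ^ (α - 1) * Real.exp (ρ * s)
      = Real.exp (ρ * t) * ∫ u in Set.Ioc (0:ℝ) t, F u := by
    rw [← intervalIntegral.integral_of_le ht, ← intervalIntegral.integral_of_le ht]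
    calc ∫ s in (0:ℝ)..t, (t - s) ^ (α - 1) * Real.exp (ρ * s)
        = ∫ s in (0:ℝ)..t, Real.exp (ρ * t) * F (t - s) := by
          apply intervalIntegral.integral_congr
          intro s _
          show (t - s) ^ (α - 1) * Real.exp (ρ * s)
            = Real.exp (ρ * t) * ((t - s) ^ (α - 1) * Real.exp (-(ρ * (t - s))))
          rw [mul_comm (Real.exp (ρ * t)), mul_assoc, ← Real.exp_add]
          congr 2
          ring
      _ = Real.exp (ρ * t) * ∫ s in (0:ℝ)..t, F (t - s) := by
          rw [intervalIntegral.integral_const_mul]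
      _ = Real.exp (ρ * t) * ∫ u in (0:ℝ)..t, F u := by
          rw [intervalIntegral.integral_comp_sub_left F t]
          norm_num
  rw [heq]
  have hmono : ∫ u in Set.Ioc (0:ℝ) t, F u ≤ ∫ u in Set.Ioi (0:ℝ), F u := by
    refine setIntegral_mono_set hFint ?_ (HasSubset.Subset.eventuallyLE Set.Ioc_subset_Ioi_self)
    refine (ae_restrict_iff' measurableSet_Ioi).2 (Filter.Eventually.of_forall fun u hu => ?_)
    have : (0:ℝ) ≤ u ^ (α - 1) := Real.rpow_nonneg (le_of_lt hu) _
    positivity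
  have hval : ∫ u in Set.Ioi (0:ℝ), F u = (1 / ρ) ^ α * Real.Gamma α :=
    Real.integral_rpow_mul_exp_neg_mul_Ioi hα hρ
  rw [← hval]
  exact mul_le_mul_of_nonneg_left hmono (le_of_lt (Real.exp_pos _))

set_option maxHeartbeats 1000000 in
/-- **Contraction of the Volterra operator in an exponentially weighted norm.**
Given the delayed fractional Volterra operator
`(𝒯x)(t) = x₀ + (1/Γ(α)) ∫₀ᵗ (t-s)^(α-1) G(s, x(s), x(s-τ)) ds` on `[0,T]`
(extended by the history `φ` on `[-τ,0]`), with `G` continuous and Lipschitz,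
for every `κ ∈ (0,1)` there is a weight `ρ > 0` making `𝒯` a `κ`-contraction
in the norm `‖x‖_ρ = sup_{t∈[0,T]} e^(-ρt) ‖x(t)‖` on functions sharing the
history `φ`. -/
theorem volterra_operator_contraction_weighted_norm
    (n : ℕ) (hn : 1 ≤ n) (T τ α L : ℝ) (hT : 0 < T) (hτ : 0 < τ)
    (hα : α ∈ Set.Ioc (0:ℝ) 1)
    (x₀ : EuclideanSpace ℝ (Fin n)) (φ : ℝ → EuclideanSpace ℝ (Fin n))
    (hφ : ContinuousOn φ (Set.Icc (-τ) (0:ℝ))) (hφ0 : φ 0 = x₀)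
    (G : ℝ → EuclideanSpace ℝ (Fin n) → EuclideanSpace ℝ (Fin n) →
      EuclideanSpace ℝ (Fin n))
    (hGc : ContinuousOn
      (fun p : ℝ × EuclideanSpace ℝ (Fin n) × EuclideanSpace ℝ (Fin n) =>
        G p.1 p.2.1 p.2.2)
      (Set.Icc (0:ℝ) T ×ˢ (Set.univ ×ˢ Set.univ)))
    (hGL : ∀ t ∈ Set.Icc (0:ℝ) T, ∀ u₁ v₁ u₂ v₂,
      ‖G t u₁ v₁ - G t u₂ v₂‖ ≤ L * (‖u₁ - u₂‖ + ‖v₁ - v₂‖))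
    (𝒯 : (ℝ → EuclideanSpace ℝ (Fin n)) → ℝ → EuclideanSpace ℝ (Fin n))
    (h𝒯 : ∀ x : ℝ → EuclideanSpace ℝ (Fin n),
      (∀ t ∈ Set.Icc (0:ℝ) T, 𝒯 x t =
        x₀ + (Real.Gamma α)⁻¹ •
          ∫ s in Set.Ioc (0:ℝ) t, ((t - s) ^ (α - 1)) • G s (x s) (x (s - τ))) ∧
      (∀ t ∈ Set.Icc (-τ) (0:ℝ), 𝒯 x t = φ t))
    (κ : ℝ) (hκ : κ ∈ Set.Ioo (0:ℝ) 1) :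
    ∃ ρ > 0, ∀ x₁ x₂ : ℝ → EuclideanSpace ℝ (Fin n),
      ContinuousOn x₁ (Set.Icc (-τ) T) → ContinuousOn x₂ (Set.Icc (-τ) T) →
      (∀ t ∈ Set.Icc (-τ) (0:ℝ), x₁ t = φ t) →
      (∀ t ∈ Set.Icc (-τ) (0:ℝ), x₂ t = φ t) →
      (⨆ t : Set.Icc (0:ℝ) T, Real.exp (-ρ * t) * ‖𝒯 x₁ t - 𝒯 x₂ t‖) ≤
        κ * ⨆ t : Set.Icc (0:ℝ) T, Real.exp (-ρ * t) * ‖x₁ t - x₂ t‖ := by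
  obtain ⟨hα0, hα1⟩ := hα
  obtain ⟨hκ0, hκ1⟩ := hκ
  have hΓ : 0 < Real.Gamma α := Real.Gamma_pos_of_pos hα0
  set L' : ℝ := max L 0 with hL'
  have hL'0 : 0 ≤ L' := le_max_right _ _
  -- choice of the weight ρ
  set ρ : ℝ := max 1 ((2 * L' / κ + 1) ^ α⁻¹) with hρdef
  have hρ1 : (1:ℝ) ≤ ρ := le_max_left _ _
  have hρ0 : 0 < ρ := lt_of_lt_of_le one_pos hρ1
  have hbase : (0:ℝ) ≤ 2 * L' / κ + 1 := by positivity
  have hρα : 2 * L' / κ ≤ ρ ^ α := by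
    have h1 : (2 * L' / κ + 1) ^ α⁻¹ ≤ ρ := le_max_right _ _
    have h2 : ((2 * L' / κ + 1) ^ α⁻¹) ^ α ≤ ρ ^ α :=
      Real.rpow_le_rpow (Real.rpow_nonneg hbase _) h1 (le_of_lt hα0)
    rw [← Real.rpow_mul hbase, inv_mul_cancel₀ (ne_of_gt hα0), Real.rpow_one] at h2
    nlinarith [Real.rpow_nonneg hbase α⁻¹]
  have hkey : 2 * L' * (1 / ρ) ^ α ≤ κ := by
    have hρα0 : 0 < ρ ^ α := Real.rpow_pos_of_pos hρ0 _
    have h3 : 2 * L' ≤ κ * ρ ^ α := by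
      rw [div_le_iff₀ hκ0] at hρα
      linarith [hρα]
    rw [div_rpow zero_le_one (le_of_lt hρ0), Real.one_rpow]
    rw [mul_div_assoc] at *
    calc 2 * L' * (1 / ρ ^ α) ≤ κ * ρ ^ α * (1 / ρ ^ α) := by
          apply mul_le_mul_of_nonneg_right h3
          positivity
      _ = κ := by field_simp
  refine ⟨ρ, hρ0, ?_⟩
  intro x₁ x₂ hc₁ hc₂ hx₁ hx₂
  have hτT : Set.Icc (0:ℝ) T ⊆ Set.Icc (-τ) T :=
    Set.Icc_subset_Icc (by linarith) le_rfl
  haveI : Nonempty (Set.Icc (0:ℝ) T) := ⟨⟨0, le_rfl, le_of_lt hT⟩⟩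
  set d : ℝ → ℝ := fun s => ‖x₁ s - x₂ s‖ with hd
  set M : ℝ := ⨆ t : Set.Icc (0:ℝ) T, Real.exp (-ρ * t) * d t with hM
  have hMnn : 0 ≤ M := Real.iSup_nonneg fun t => by positivity
  -- boundedness of the weighted difference
  have hdc : ContinuousOn d (Set.Icc (-τ) T) := (hc₁.sub hc₂).norm
  have hbdd : BddAbove (Set.range fun t : Set.Icc (0:ℝ) T =>
      Real.exp (-ρ * t) * d t) := by
    have hcont : ContinuousOn (fun t : ℝ => Real.exp (-ρ * t) * d t) (Set.Icc (0:ℝ) T) := by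
      exact ((Real.continuous_exp.comp (continuous_const.mul continuous_id)).continuousOn).mul
        (hdc.mono hτT)
    have himg := (isCompact_Icc.image_of_continuousOn hcont).bddAbove
    have : (Set.range fun t : Set.Icc (0:ℝ) T => Real.exp (-ρ * t) * d t)
        = (fun t : ℝ => Real.exp (-ρ * t) * d t) '' Set.Icc (0:ℝ) T := by
      ext y
      simp [Set.mem_image]
    rwa [this]
  -- pointwise bound d s ≤ M * exp (ρ s)
  have hdM : ∀ s ∈ Set.Icc (0:ℝ) T, d s ≤ M * Real.exp (ρ * s) := by
    intro s hs
    have h1 : Real.exp (-ρ * s) * d s ≤ M :=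
      le_ciSup hbdd (⟨s, hs⟩ : Set.Icc (0:ℝ) T)
    have h2 : Real.exp (-ρ * s) > 0 := Real.exp_pos _
    have := mul_le_mul_of_nonneg_right h1 (le_of_lt (Real.exp_pos (ρ * s)))
    calc d s = Real.exp (-ρ * s) * d s * Real.exp (ρ * s) := by
          rw [mul_comm (Real.exp (-ρ * s)) (d s), mul_assoc, ← Real.exp_add]
          norm_num
      _ ≤ M * Real.exp (ρ * s) := this
  have hd0 : ∀ s ∈ Set.Icc (-τ) (0:ℝ), d s = 0 := by
    intro s hs
    simp only [hd, hx₁ s hs, hx₂ s hs, sub_self, norm_zero]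
  -- delayed bound
  have hdMτ : ∀ s ∈ Set.Ioc (0:ℝ) T, d (s - τ) ≤ M * Real.exp (ρ * s) := by
    intro s hs
    rcases le_or_gt (s - τ) 0 with h | h
    · rw [hd0 (s - τ) ⟨by linarith [hs.1], h⟩]
      positivity
    · have h1 : d (s - τ) ≤ M * Real.exp (ρ * (s - τ)) :=
        hdM (s - τ) ⟨le_of_lt h, by linarith [hs.2]⟩
      calc d (s - τ) ≤ M * Real.exp (ρ * (s - τ)) := h1
        _ ≤ M * Real.exp (ρ * s) := by
            apply mul_le_mul_of_nonneg_left _ hMnn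
            apply Real.exp_le_exp.2
            nlinarith
  -- main pointwise estimate
  apply ciSup_le
  rintro ⟨t, ht0, htT⟩
  simp only
  -- continuity / boundedness of the composed nonlinearities
  have hxmem : ∀ i : Fin 2, True := fun _ => trivial
  have hcomp : ∀ x : ℝ → EuclideanSpace ℝ (Fin n), ContinuousOn x (Set.Icc (-τ) T) →
      ContinuousOn (fun s => G s (x s) (x (s - τ))) (Set.Icc (0:ℝ) T) := by
    intro x hx
    have h1 : ContinuousOn (fun s : ℝ => (s, x s, x (s - τ)))
        (Set.Icc (0:ℝ) T) := by
      refine continuousOn_id.prodMk ((hx.mono hτT).prodMk ?_)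
      refine ContinuousOn.comp hx (continuous_id.sub continuous_const).continuousOn ?_
      intro s hs
      exact ⟨by simp; linarith [hs.1], by simp; linarith [hs.2]⟩
    refine hGc.comp h1 ?_
    intro s hs
    exact ⟨hs, trivial, trivial⟩
  have hg₁ := hcomp x₁ hc₁
  have hg₂ := hcomp x₂ hc₂
  set g₁ : ℝ → EuclideanSpace ℝ (Fin n) := fun s => G s (x₁ s) (x₁ (s - τ)) with hg₁def
  set g₂ : ℝ → EuclideanSpace ℝ (Fin n) := fun s => G s (x₂ s) (x₂ (s - τ)) with hg₂def
  obtain ⟨C₁, hC₁⟩ := isCompact_Icc.exists_bound_of_continuousOn hg₁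
  obtain ⟨C₂, hC₂⟩ := isCompact_Icc.exists_bound_of_continuousOn hg₂
  -- integrability of the kernel
  have hrpow : IntervalIntegrable (fun u : ℝ => u ^ (α - 1)) volume 0 t :=
    intervalIntegral.intervalIntegrable_rpow' (by linarith)
  have hker : IntegrableOn (fun s : ℝ => (t - s) ^ (α - 1)) (Set.Ioc 0 t) := by
    have h1 := (hrpow.comp_sub_left t).symm
    have : IntervalIntegrable (fun s : ℝ => (t - s) ^ (α - 1)) volume 0 t := by
      simpa using h1
    exact (intervalIntegrable_iff_integrableOn_Ioc_of_le ht0).1 this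
  have hmeasK : AEStronglyMeasurable (fun s : ℝ => (t - s) ^ (α - 1))
      (volume.restrict (Set.Ioc 0 t)) := by
    rw [← Measure.restrict_congr_set MeasureTheory.Ioo_ae_eq_Ioc]
    refine ContinuousOn.aestronglyMeasurable ?_ measurableSet_Ioo
    refine ((continuous_const.sub continuous_id).continuousOn).rpow_const ?_
    intro s hs
    left
    have : s < t := hs.2
    simp only [ne_eq, Pi.sub_apply, id_eq, sub_eq_zero]
    intro h
    rw [h] at this
    exact lt_irrefl _ this
  have hmeas : ∀ x : ℝ → EuclideanSpace ℝ (Fin n), ContinuousOn x (Set.Icc (-τ) T) →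
      IntegrableOn (fun s => ((t - s) ^ (α - 1)) • G s (x s) (x (s - τ))) (Set.Ioc 0 t) := by
    intro x hx
    obtain ⟨C, hC⟩ := isCompact_Icc.exists_bound_of_continuousOn (hcomp x hx)
    have hsub : Set.Ioc (0:ℝ) t ⊆ Set.Icc (0:ℝ) T := fun s hs =>
      ⟨le_of_lt hs.1, le_trans hs.2 htT⟩
    have hbnd : IntegrableOn (fun s : ℝ => (t - s) ^ (α - 1) * C) (Set.Ioc 0 t) :=
      hker.mul_const C
    refine Integrable.mono' hbnd ?_ ?_
    · refine AEStronglyMeasurable.smul hmeasK ?_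
      exact (((hcomp x hx).mono hsub).aestronglyMeasurable measurableSet_Ioc)
    · refine (ae_restrict_iff' measurableSet_Ioc).2 (Filter.Eventually.of_forall fun s hs => ?_)
      rw [norm_smul, Real.norm_eq_abs, abs_of_nonneg (Real.rpow_nonneg (by linarith [hs.2]) _)]
      have := hC s (hsub hs)
      have hknn : (0:ℝ) ≤ (t - s) ^ (α - 1) := Real.rpow_nonneg (by linarith [hs.2]) _
      exact mul_le_mul_of_nonneg_left this hknn
  have hint₁ := hmeas x₁ hc₁
  have hint₂ := hmeas x₂ hc₂
  -- integrability of the dominating function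
  have hdomint : IntegrableOn (fun s : ℝ => (t - s) ^ (α - 1) * Real.exp (ρ * s))
      (Set.Ioc 0 t) := by
    have hFint : IntegrableOn (fun u : ℝ => u ^ (α - 1) * Real.exp (-(ρ * u)))
        (Set.Ioc 0 t) := (volterra_aux_integrableF hα0 hρ0).mono_set Set.Ioc_subset_Ioi_self
    have h1 : IntervalIntegrable (fun u : ℝ => u ^ (α - 1) * Real.exp (-(ρ * u))) volume 0 t :=
      (intervalIntegrable_iff_integrableOn_Ioc_of_le ht0).2 hFint
    have h2 := (h1.comp_sub_left t).symm
    have h3 : IntervalIntegrable (fun s : ℝ => (t - s) ^ (α - 1) * Real.exp (-(ρ * (t - s))))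
        volume 0 t := by simpa using h2
    have h4 : IntegrableOn (fun s : ℝ => (t - s) ^ (α - 1) * Real.exp (-(ρ * (t - s))))
        (Set.Ioc 0 t) := (intervalIntegrable_iff_integrableOn_Ioc_of_le ht0).1 h3
    have h5 : IntegrableOn
        (fun s : ℝ => Real.exp (ρ * t) * ((t - s) ^ (α - 1) * Real.exp (-(ρ * (t - s)))))
        (Set.Ioc 0 t) := h4.const_mul (Real.exp (ρ * t))
    refine h5.congr_fun (fun s _ => ?_) measurableSet_Ioc
    have e1 : Real.exp (ρ * s) = Real.exp (ρ * t) * Real.exp (-(ρ * (t - s))) := by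
      rw [← Real.exp_add]
      congr 1
      ring
    show Real.exp (ρ * t) * ((t - s) ^ (α - 1) * Real.exp (-(ρ * (t - s))))
      = (t - s) ^ (α - 1) * Real.exp (ρ * s)
    rw [e1]
    ring
  -- express the difference of the operator values
  have hT₁ := (h𝒯 x₁).1 t ⟨ht0, htT⟩
  have hT₂ := (h𝒯 x₂).1 t ⟨ht0, htT⟩
  have hdiff : 𝒯 x₁ t - 𝒯 x₂ t = (Real.Gamma α)⁻¹ •
      ∫ s in Set.Ioc (0:ℝ) t, ((t - s) ^ (α - 1)) • (g₁ s - g₂ s) := by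
    rw [hT₁, hT₂, add_sub_add_left_eq_sub, ← smul_sub, ← integral_sub hint₁ hint₂]
    congr 1
    apply setIntegral_congr_fun measurableSet_Ioc
    intro s _
    simp only [smul_sub]; rfl
  -- norm estimate on the integral
  have hsub : Set.Ioc (0:ℝ) t ⊆ Set.Icc (0:ℝ) T := fun s hs =>
    ⟨le_of_lt hs.1, le_trans hs.2 htT⟩
  have hnorm : ‖∫ s in Set.Ioc (0:ℝ) t, ((t - s) ^ (α - 1)) • (g₁ s - g₂ s)‖ ≤
      ∫ s in Set.Ioc (0:ℝ) t, 2 * L' * M * ((t - s) ^ (α - 1) * Real.exp (ρ * s)) := by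
    have hdom2 : IntegrableOn
        (fun s : ℝ => 2 * L' * M * ((t - s) ^ (α - 1) * Real.exp (ρ * s)))
        (Set.Ioc 0 t) := hdomint.const_mul (2 * L' * M)
    refine norm_integral_le_of_norm_le hdom2 ?_
    refine (ae_restrict_iff' measurableSet_Ioc).2 (Filter.Eventually.of_forall fun s hs => ?_)
    have hts : (0:ℝ) ≤ t - s := by linarith [hs.2]
    have hknn : (0:ℝ) ≤ (t - s) ^ (α - 1) := Real.rpow_nonneg hts _
    rw [norm_smul, Real.norm_eq_abs, abs_of_nonneg hknn]
    have hGest : ‖g₁ s - g₂ s‖ ≤ L' * (d s + d (s - τ)) := by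
      have h1 := hGL s (hsub hs) (x₁ s) (x₁ (s - τ)) (x₂ s) (x₂ (s - τ))
      have h2 : L * (‖x₁ s - x₂ s‖ + ‖x₁ (s - τ) - x₂ (s - τ)‖)
          ≤ L' * (d s + d (s - τ)) := by
        apply mul_le_mul_of_nonneg_right (le_max_left _ _)
        positivity
      exact le_trans h1 h2
    have hsum : d s + d (s - τ) ≤ 2 * (M * Real.exp (ρ * s)) := by
      have h1 := hdM s (hsub hs)
      have h2 := hdMτ s ⟨hs.1, le_trans hs.2 htT⟩
      linarith
    calc (t - s) ^ (α - 1) * ‖g₁ s - g₂ s‖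
        ≤ (t - s) ^ (α - 1) * (L' * (2 * (M * Real.exp (ρ * s)))) := by
          apply mul_le_mul_of_nonneg_left _ hknn
          calc ‖g₁ s - g₂ s‖ ≤ L' * (d s + d (s - τ)) := hGest
            _ ≤ L' * (2 * (M * Real.exp (ρ * s))) :=
                mul_le_mul_of_nonneg_left hsum hL'0
      _ = 2 * L' * M * ((t - s) ^ (α - 1) * Real.exp (ρ * s)) := by ring
  have hintval : ∫ s in Set.Ioc (0:ℝ) t, 2 * L' * M * ((t - s) ^ (α - 1) * Real.exp (ρ * s))
      ≤ 2 * L' * M * (Real.exp (ρ * t) * ((1 / ρ) ^ α * Real.Gamma α)) := by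
    rw [MeasureTheory.integral_const_mul]
    exact mul_le_mul_of_nonneg_left (volterra_aux_kernel hα0 hρ0 ht0) (by positivity)
  -- combine
  have hfinal : Real.exp (-ρ * t) * ‖𝒯 x₁ t - 𝒯 x₂ t‖ ≤ κ * M := by
    rw [hdiff, norm_smul, Real.norm_eq_abs, abs_of_nonneg (le_of_lt (inv_pos.2 hΓ))]
    have h1 : ‖∫ s in Set.Ioc (0:ℝ) t, ((t - s) ^ (α - 1)) • (g₁ s - g₂ s)‖ ≤
        2 * L' * M * (Real.exp (ρ * t) * ((1 / ρ) ^ α * Real.Gamma α)) :=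
      le_trans hnorm hintval
    have h2 : Real.exp (-ρ * t) * ((Real.Gamma α)⁻¹ *
        ‖∫ s in Set.Ioc (0:ℝ) t, ((t - s) ^ (α - 1)) • (g₁ s - g₂ s)‖)
        ≤ Real.exp (-ρ * t) * ((Real.Gamma α)⁻¹ *
          (2 * L' * M * (Real.exp (ρ * t) * ((1 / ρ) ^ α * Real.Gamma α)))) := by
      apply mul_le_mul_of_nonneg_left _ (le_of_lt (Real.exp_pos _))
      exact mul_le_mul_of_nonneg_left h1 (le_of_lt (inv_pos.2 hΓ))
    refine le_trans h2 ?_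
    have hexp : Real.exp (-ρ * t) * Real.exp (ρ * t) = 1 := by
      rw [← Real.exp_add]; norm_num
    have hΓc : (Real.Gamma α)⁻¹ * Real.Gamma α = 1 := inv_mul_cancel₀ (ne_of_gt hΓ)
    have heq : Real.exp (-ρ * t) * ((Real.Gamma α)⁻¹ *
        (2 * L' * M * (Real.exp (ρ * t) * ((1 / ρ) ^ α * Real.Gamma α))))
        = (2 * L' * (1 / ρ) ^ α) * M := by
      calc Real.exp (-ρ * t) * ((Real.Gamma α)⁻¹ *
          (2 * L' * M * (Real.exp (ρ * t) * ((1 / ρ) ^ α * Real.Gamma α))))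
          = (Real.exp (-ρ * t) * Real.exp (ρ * t)) * (((Real.Gamma α)⁻¹ * Real.Gamma α) *
            (2 * L' * (1 / ρ) ^ α * M)) := by ring
        _ = (2 * L' * (1 / ρ) ^ α) * M := by rw [hexp, hΓc]; ring
    rw [heq]
    exact mul_le_mul_of_nonneg_right hkey hMnn
  exact hfinal
end

section
/- Let n ≥ 1, T > 0, τ > 0, α ∈ (0,1], and let φ : [-τ, 0] → ℝⁿ be continuous. Let G : [0,T] × ℝⁿ × ℝⁿ → ℝⁿ be continuous and satisfy ‖G(t, u₁, v₁) - G(t, u₂, v₂)‖ ≤ L (‖u₁ - u₂‖ + ‖v₁ - v₂‖) for all arguments. Then there exists a unique continuous function x : [-τ, T] → ℝⁿ such that x(t) = φ(t) for t ∈ [-τ, 0] and x(t) = φ(0) + (1/Γ(α)) ∫₀ᵗ (t-s)^{α-1} G(s, x(s), x(s-τ)) ds for all t ∈ [0, T]. -/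
open MeasureTheory Set Real intervalIntegral

section VolterraAux

variable {α : ℝ} {F : Type*} [NormedAddCommGroup F] [NormedSpace ℝ F]

private lemma ker_intble (hα : 0 < α) {a b c : ℝ} (hab : a ≤ b) :
    IntegrableOn (fun s => (c - s) ^ (α - 1)) (Set.Ioc a b) volume := by
  have h1 : IntervalIntegrable (fun x : ℝ => x ^ (α - 1)) volume (c - b) (c - a) :=
    intervalIntegral.intervalIntegrable_rpow' (by linarith)
  have h2 : IntervalIntegrable (fun s : ℝ => (c - s) ^ (α - 1)) volume a b := by
    have := h1.comp_sub_left c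
    simpa using this.symm
  simpa [intervalIntegrable_iff_integrableOn_Ioc_of_le hab] using h2

private lemma ker_integral (hα : 0 < α) {a b c : ℝ} (hab : a ≤ b) (hbc : b ≤ c) :
    ∫ s in Set.Ioc a b, (c - s) ^ (α - 1) = ((c - a) ^ α - (c - b) ^ α) / α := by
  rw [← intervalIntegral.integral_of_le hab]
  have h1 := intervalIntegral.integral_comp_sub_left (a := a) (b := b)
    (fun x : ℝ => x ^ (α - 1)) c
  rw [h1, integral_rpow (Or.inl (by linarith))]
  ring_nf

private lemma smul_intble (hα : 0 < α) {a b c : ℝ} (hab : a ≤ b) (hbc : b ≤ c)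
    {u : ℝ → F} (hu : AEStronglyMeasurable u (volume.restrict (Set.Ioc a b)))
    {w : ℝ → ℝ} (hw : IntegrableOn (fun s => (c - s) ^ (α - 1) * w s) (Set.Ioc a b) volume)
    (hbd : ∀ s ∈ Set.Ioc a b, ‖u s‖ ≤ w s) :
    IntegrableOn (fun s => ((c - s) ^ (α - 1)) • u s) (Set.Ioc a b) volume := by
  have hker : AEStronglyMeasurable (fun s => (c - s) ^ (α - 1))
      (volume.restrict (Set.Ioc a b)) :=
    (ker_intble hα hab (c := c)).aestronglyMeasurable
  refine Integrable.mono' hw (hker.smul hu) ?_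
  refine (ae_restrict_iff' measurableSet_Ioc).mpr (ae_of_all _ fun s hs => ?_)
  rw [norm_smul]
  have h0 : (0:ℝ) ≤ (c - s) ^ (α - 1) := Real.rpow_nonneg (by linarith [hs.2]) _
  rw [Real.norm_eq_abs, abs_of_nonneg h0]
  exact mul_le_mul_of_nonneg_left (hbd s hs) h0

private lemma norm_setIntegral_le {s : Set ℝ} (hs : MeasurableSet s) {f : ℝ → F} {g : ℝ → ℝ}
    (hf : IntegrableOn f s volume) (hg : IntegrableOn g s volume)
    (h : ∀ x ∈ s, ‖f x‖ ≤ g x) : ‖∫ x in s, f x‖ ≤ ∫ x in s, g x :=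
  (MeasureTheory.norm_integral_le_integral_norm _).trans
    (setIntegral_mono_on hf.norm hg hs h)

private lemma ker_exp_bound (hα : 0 < α) {l t : ℝ} (hl : 0 < l) (ht : 0 ≤ t) :
    ∫ s in Set.Ioc (0:ℝ) t, (t - s) ^ (α - 1) * Real.exp (l * s)
      ≤ Real.exp (l * t) * ((1 / l) ^ α * Real.Gamma α) := by
  have h1 : (∫ s in Set.Ioc (0:ℝ) t, (t - s) ^ (α - 1) * Real.exp (l * s))
      = ∫ u in Set.Ioc (0:ℝ) t, Real.exp (l * t) * (u ^ (α - 1) * Real.exp (-(l * u))) := by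
    rw [← intervalIntegral.integral_of_le ht, ← intervalIntegral.integral_of_le ht]
    have h2 := intervalIntegral.integral_comp_sub_left (a := (0:ℝ)) (b := t)
      (fun u : ℝ => u ^ (α - 1) * Real.exp (l * (t - u))) t
    simp only [sub_self, sub_zero] at h2
    have e1 : (∫ x in (0:ℝ)..t, (t - x) ^ (α - 1) * rexp (l * x))
        = ∫ x in (0:ℝ)..t, (t - x) ^ (α - 1) * rexp (l * (t - (t - x))) := by
      congr 1; funext x; congr 2; ring
    have e2 : (∫ x in (0:ℝ)..t, x ^ (α - 1) * rexp (l * (t - x)))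
        = ∫ x in (0:ℝ)..t, rexp (l * t) * (x ^ (α - 1) * rexp (-(l * x))) := by
      congr 1; funext x
      rw [mul_comm (rexp (l*t)), mul_assoc, ← Real.exp_add]
      congr 2; ring
    rw [e1, h2, e2]
  rw [h1, MeasureTheory.integral_const_mul]
  have hint : IntegrableOn (fun u : ℝ => u ^ (α - 1) * Real.exp (-(l * u))) (Set.Ioi 0) volume := by
    have := integrableOn_rpow_mul_exp_neg_mul_rpow (s := α - 1) (p := 1) (b := l)
      (by linarith) one_pos hl
    simpa using this
  have h3 : (∫ u in Set.Ioc (0:ℝ) t, u ^ (α - 1) * Real.exp (-(l * u)))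
      ≤ ∫ u in Set.Ioi (0:ℝ), u ^ (α - 1) * Real.exp (-(l * u)) := by
    refine setIntegral_mono_set hint ?_ (HasSubset.Subset.eventuallyLE Set.Ioc_subset_Ioi_self)
    refine (ae_restrict_iff' measurableSet_Ioi).mpr (ae_of_all _ fun u hu => ?_)
    have : (0:ℝ) < u := hu
    positivity
  have h4 : (∫ u in Set.Ioi (0:ℝ), u ^ (α - 1) * Real.exp (-(l * u)))
      = (1 / l) ^ α * Real.Gamma α := integral_rpow_mul_exp_neg_mul_Ioi hα hl
  rw [← h4]
  exact mul_le_mul_of_nonneg_left h3 (Real.exp_pos _).le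

/-- The fractional (Riemann–Liouville type) integral operator. -/
private noncomputable def Fint (α : ℝ) (u : ℝ → F) (t : ℝ) : F :=
  ∫ s in Set.Ioc (0:ℝ) t, ((t - s) ^ (α - 1)) • u s

private lemma Fint_nonpos {u : ℝ → F} {t : ℝ} (ht : t ≤ 0) : Fint α u t = 0 := by
  simp [Fint, Set.Ioc_eq_empty (not_lt.2 ht)]

variable [CompleteSpace F]

private lemma Fint_holder (hα : 0 < α) (hα1 : α ≤ 1) {T M : ℝ} {u : ℝ → F}
    (hu : AEStronglyMeasurable u (volume.restrict (Set.Ioc 0 T)))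
    (hM0 : 0 ≤ M) (hM : ∀ s ∈ Set.Ioc (0:ℝ) T, ‖u s‖ ≤ M)
    {t₁ t₂ : ℝ} (h0 : 0 ≤ t₁) (h12 : t₁ ≤ t₂) (h2T : t₂ ≤ T) :
    ‖Fint α u t₂ - Fint α u t₁‖ ≤ 2 * M / α * (t₂ - t₁) ^ α := by
  have hsub1 : Set.Ioc (0:ℝ) t₁ ⊆ Set.Ioc 0 T := Set.Ioc_subset_Ioc le_rfl (by linarith)
  have hsub2 : Set.Ioc t₁ t₂ ⊆ Set.Ioc 0 T := Set.Ioc_subset_Ioc h0 h2T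
  have hu1 : AEStronglyMeasurable u (volume.restrict (Set.Ioc 0 t₁)) :=
    hu.mono_measure (Measure.restrict_mono hsub1 le_rfl)
  have hu2 : AEStronglyMeasurable u (volume.restrict (Set.Ioc t₁ t₂)) :=
    hu.mono_measure (Measure.restrict_mono hsub2 le_rfl)
  have hM1 : ∀ s ∈ Set.Ioc (0:ℝ) t₁, ‖u s‖ ≤ M := fun s hs => hM s (hsub1 hs)
  have hM2 : ∀ s ∈ Set.Ioc t₁ t₂, ‖u s‖ ≤ M := fun s hs => hM s (hsub2 hs)
  have I1 : IntegrableOn (fun s => ((t₂ - s) ^ (α - 1)) • u s) (Set.Ioc 0 t₁) volume :=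
    smul_intble hα h0 h12 hu1 ((ker_intble hα h0).mul_const M) hM1
  have I2 : IntegrableOn (fun s => ((t₂ - s) ^ (α - 1)) • u s) (Set.Ioc t₁ t₂) volume :=
    smul_intble hα h12 le_rfl hu2 ((ker_intble hα h12).mul_const M) hM2
  have I3 : IntegrableOn (fun s => ((t₁ - s) ^ (α - 1)) • u s) (Set.Ioc 0 t₁) volume :=
    smul_intble hα h0 le_rfl hu1 ((ker_intble hα h0).mul_const M) hM1
  have hsplit : Fint α u t₂
      = (∫ s in Set.Ioc (0:ℝ) t₁, ((t₂ - s) ^ (α - 1)) • u s)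
        + ∫ s in Set.Ioc t₁ t₂, ((t₂ - s) ^ (α - 1)) • u s := by
    rw [Fint, ← Set.Ioc_union_Ioc_eq_Ioc h0 h12]
    exact setIntegral_union (Set.Ioc_disjoint_Ioc_of_le le_rfl) measurableSet_Ioc I1 I2
  have hdiff : Fint α u t₂ - Fint α u t₁
      = (∫ s in Set.Ioc (0:ℝ) t₁, ((t₂ - s) ^ (α - 1) - (t₁ - s) ^ (α - 1)) • u s)
        + ∫ s in Set.Ioc t₁ t₂, ((t₂ - s) ^ (α - 1)) • u s := by
    rw [hsplit, Fint]
    rw [show (∫ s in Set.Ioc (0:ℝ) t₁, ((t₂ - s) ^ (α - 1) - (t₁ - s) ^ (α - 1)) • u s)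
        = (∫ s in Set.Ioc (0:ℝ) t₁, (((t₂ - s) ^ (α - 1)) • u s - ((t₁ - s) ^ (α - 1)) • u s))
        from by congr 1; funext s; rw [sub_smul]]
    rw [integral_sub I1 I3]
    abel
  have key1 : ‖∫ s in Set.Ioc (0:ℝ) t₁, ((t₂ - s) ^ (α - 1) - (t₁ - s) ^ (α - 1)) • u s‖
      ≤ ∫ s in Set.Ioc (0:ℝ) t₁, ((t₁ - s) ^ (α - 1) - (t₂ - s) ^ (α - 1)) * M := by
    rw [show (∫ s in Set.Ioc (0:ℝ) t₁, ((t₂ - s) ^ (α - 1) - (t₁ - s) ^ (α - 1)) • u s)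
        = ∫ s in Set.Ioo (0:ℝ) t₁, ((t₂ - s) ^ (α - 1) - (t₁ - s) ^ (α - 1)) • u s from
      integral_Ioc_eq_integral_Ioo]
    rw [show (∫ s in Set.Ioc (0:ℝ) t₁, ((t₁ - s) ^ (α - 1) - (t₂ - s) ^ (α - 1)) * M)
        = ∫ s in Set.Ioo (0:ℝ) t₁, ((t₁ - s) ^ (α - 1) - (t₂ - s) ^ (α - 1)) * M from
      integral_Ioc_eq_integral_Ioo]
    refine norm_setIntegral_le measurableSet_Ioo ?_ ?_ ?_
    · have hI : IntegrableOn
          (fun s => ((t₂ - s) ^ (α - 1)) • u s - ((t₁ - s) ^ (α - 1)) • u s)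
          (Set.Ioc 0 t₁) volume := I1.sub I3
      refine (hI.mono_set Set.Ioo_subset_Ioc_self).congr_fun ?_ measurableSet_Ioo
      intro s _; simp [sub_smul]
    · have hI : IntegrableOn
          (fun s => ((t₁ - s) ^ (α - 1) - (t₂ - s) ^ (α - 1)) * M)
          (Set.Ioc 0 t₁) volume :=
        ((ker_intble hα h0 (c := t₁)).sub (ker_intble hα h0 (c := t₂))).mul_const M
      exact hI.mono_set Set.Ioo_subset_Ioc_self
    · intro s hs
      have hs1 : 0 < t₁ - s := by linarith [hs.2]
      have hk : (t₂ - s) ^ (α - 1) ≤ (t₁ - s) ^ (α - 1) :=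
        Real.rpow_le_rpow_of_nonpos hs1 (by linarith) (by linarith)
      rw [norm_smul, Real.norm_eq_abs, abs_of_nonpos (by linarith), neg_sub]
      exact mul_le_mul (le_refl _) (hM1 s (Set.Ioo_subset_Ioc_self hs)) (norm_nonneg _)
        (by linarith)
  have val1 : (∫ s in Set.Ioc (0:ℝ) t₁, ((t₁ - s) ^ (α - 1) - (t₂ - s) ^ (α - 1)) * M)
      = (t₁ ^ α - t₂ ^ α + (t₂ - t₁) ^ α) / α * M := by
    rw [MeasureTheory.integral_mul_const,
      integral_sub (ker_intble hα h0 (c := t₁)) (ker_intble hα h0 (c := t₂)),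
      ker_integral hα h0 le_rfl, ker_integral hα h0 h12]
    rw [sub_self, sub_zero, Real.zero_rpow hα.ne']
    ring_nf
  have key2 : ‖∫ s in Set.Ioc t₁ t₂, ((t₂ - s) ^ (α - 1)) • u s‖
      ≤ (t₂ - t₁) ^ α / α * M := by
    have h := norm_setIntegral_le (f := fun s => ((t₂ - s) ^ (α - 1)) • u s)
      (g := fun s => (t₂ - s) ^ (α - 1) * M) measurableSet_Ioc I2
      ((ker_intble hα h12).mul_const M) ?_
    · refine h.trans (le_of_eq ?_)
      rw [MeasureTheory.integral_mul_const, ker_integral hα h12 le_rfl, sub_self,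
        Real.zero_rpow hα.ne', sub_zero]
    · intro s hs
      have h0' : (0:ℝ) ≤ (t₂ - s) ^ (α - 1) := Real.rpow_nonneg (by linarith [hs.2]) _
      rw [norm_smul, Real.norm_eq_abs, abs_of_nonneg h0']
      exact mul_le_mul_of_nonneg_left (hM2 s hs) h0'
  have hAB : t₁ ^ α ≤ t₂ ^ α := Real.rpow_le_rpow h0 h12 hα.le
  calc ‖Fint α u t₂ - Fint α u t₁‖
      ≤ (t₁ ^ α - t₂ ^ α + (t₂ - t₁) ^ α) / α * M + (t₂ - t₁) ^ α / α * M := by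
        rw [hdiff]
        exact (norm_add_le _ _).trans (add_le_add (key1.trans_eq val1) key2)
    _ ≤ 2 * M / α * (t₂ - t₁) ^ α := by
        rw [div_mul_eq_mul_div, div_mul_eq_mul_div, ← add_div,
          div_mul_eq_mul_div, div_le_div_iff_of_pos_right hα]
        nlinarith [mul_nonneg hM0 (sub_nonneg.2 hAB)]

/-- Continuity of the fractional integral (composed with `max · 0`). -/
private lemma Fint_contOn (hα : 0 < α) (hα1 : α ≤ 1) {T M : ℝ} (hT : 0 ≤ T) {u : ℝ → F}
    (hu : AEStronglyMeasurable u (volume.restrict (Set.Ioc 0 T)))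
    (hM0 : 0 ≤ M) (hM : ∀ s ∈ Set.Ioc (0:ℝ) T, ‖u s‖ ≤ M) :
    ContinuousOn (fun t => Fint α u (max t 0)) (Set.Iic T) := by
  intro t₀ ht₀
  rw [Metric.continuousWithinAt_iff]
  intro ε hε
  set C : ℝ := 2 * M / α with hC
  have hC0 : 0 ≤ C := by positivity
  refine ⟨(ε / (C + 1)) ^ α⁻¹, Real.rpow_pos_of_pos (by positivity) _, fun y hy hdy => ?_⟩
  have key : ∀ a b : ℝ, 0 ≤ a → a ≤ b → b ≤ T →
      dist (Fint α u b) (Fint α u a) ≤ C * (b - a) ^ α := by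
    intro a b ha hab hbT
    rw [dist_eq_norm]
    exact Fint_holder hα hα1 hu hM0 hM ha hab hbT
  set a := max y 0
  set b := max t₀ 0
  have ha0 : 0 ≤ a := le_max_right _ _
  have hb0 : 0 ≤ b := le_max_right _ _
  have haT : a ≤ T := max_le (mem_Iic.mp hy) hT
  have hbT : b ≤ T := max_le (mem_Iic.mp ht₀) hT
  have habs : |a - b| ≤ |y - t₀| := abs_max_sub_max_le_abs _ _ _
  have hd : dist (Fint α u a) (Fint α u b) ≤ C * |a - b| ^ α := by
    rcases le_total a b with h | h
    · rw [dist_comm, abs_of_nonpos (sub_nonpos.2 h), neg_sub]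
      exact key a b ha0 h hbT
    · rw [abs_of_nonneg (sub_nonneg.2 h)]
      exact key b a hb0 h haT
  have hlt : |a - b| ^ α < ((ε / (C + 1)) ^ α⁻¹) ^ α := by
    refine Real.rpow_lt_rpow (abs_nonneg _) ?_ hα
    calc |a - b| ≤ |y - t₀| := habs
      _ < _ := hdy
  rw [Real.rpow_inv_rpow (by positivity) hα.ne'] at hlt
  calc dist (Fint α u a) (Fint α u b) ≤ C * |a - b| ^ α := hd
    _ ≤ C * (ε / (C + 1)) := by
        rcases eq_or_lt_of_le hC0 with h | h
        · rw [← h]; simp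
        · exact mul_le_mul_of_nonneg_left hlt.le hC0
    _ < ε := by
        rw [mul_div_assoc']
        rw [div_lt_iff₀ (by positivity)]
        nlinarith

/-- Bound for the fractional integral against exponentially weighted data. -/
private lemma Fint_exp_bound (hα : 0 < α) {t l CW : ℝ} (hl : 0 < l) (ht : 0 ≤ t)
    (hCW : 0 ≤ CW) {d : ℝ → F}
    (hd : AEStronglyMeasurable d (volume.restrict (Set.Ioc 0 t)))
    (hbd : ∀ s ∈ Set.Ioc (0:ℝ) t, ‖d s‖ ≤ CW * Real.exp (l * s)) :
    ‖∫ s in Set.Ioc (0:ℝ) t, ((t - s) ^ (α - 1)) • d s‖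
      ≤ CW * (Real.exp (l * t) * ((1 / l) ^ α * Real.Gamma α)) := by
  have hexp : ∀ s ∈ Set.Ioc (0:ℝ) t, CW * Real.exp (l * s) ≤ CW * Real.exp (l * t) :=
    fun s hs => mul_le_mul_of_nonneg_left
      (Real.exp_le_exp.mpr (mul_le_mul_of_nonneg_left hs.2 hl.le)) hCW
  have hwI : IntegrableOn (fun s => (t - s) ^ (α - 1) * (CW * Real.exp (l * s)))
      (Set.Ioc 0 t) volume := by
    have h1 : IntegrableOn
        (fun s => ((t - s) ^ (α - 1)) • (CW * Real.exp (l * s))) (Set.Ioc 0 t) volume := by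
      refine smul_intble (F := ℝ) hα ht le_rfl ?_
        ((ker_intble hα ht).mul_const (CW * Real.exp (l * t))) ?_
      · exact (continuous_const.mul
          (Real.continuous_exp.comp (continuous_const.mul continuous_id)
            : Continuous fun s : ℝ => Real.exp (l * s))).aestronglyMeasurable.restrict
      · intro s hs
        rw [Real.norm_eq_abs, abs_of_nonneg (by positivity)]
        exact hexp s hs
    simpa [smul_eq_mul] using h1
  have hI : IntegrableOn (fun s => ((t - s) ^ (α - 1)) • d s) (Set.Ioc 0 t) volume :=
    smul_intble hα ht le_rfl hd hwI hbd
  have step := norm_setIntegral_le measurableSet_Ioc hI hwI ?_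
  · refine step.trans ?_
    have e1 : (∫ s in Set.Ioc (0:ℝ) t, (t - s) ^ (α - 1) * (CW * Real.exp (l * s)))
        = CW * ∫ s in Set.Ioc (0:ℝ) t, (t - s) ^ (α - 1) * Real.exp (l * s) := by
      rw [← MeasureTheory.integral_const_mul]
      congr 1; funext s; ring
    rw [e1]
    exact mul_le_mul_of_nonneg_left (ker_exp_bound hα hl ht) hCW
  · intro s hs
    have h0 : (0:ℝ) ≤ (t - s) ^ (α - 1) := Real.rpow_nonneg (by linarith [hs.2]) _
    rw [norm_smul, Real.norm_eq_abs, abs_of_nonneg h0]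
    exact mul_le_mul_of_nonneg_left (hbd s hs) h0

end VolterraAux
section VolterraMain

variable {n : ℕ}

private noncomputable def vExt (τ T : ℝ) (hτT : -τ ≤ T)
    (f : C(↥(Set.Icc (-τ) T), EuclideanSpace ℝ (Fin n))) : ℝ → EuclideanSpace ℝ (Fin n) :=
  fun t => f (Set.projIcc (-τ) T hτT t)

private lemma vExt_cont (τ T : ℝ) (hτT : -τ ≤ T)
    (f : C(↥(Set.Icc (-τ) T), EuclideanSpace ℝ (Fin n))) : Continuous (vExt τ T hτT f) :=
  f.continuous.comp continuous_projIcc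

private lemma vExt_eq (τ T : ℝ) (hτT : -τ ≤ T)
    (f : C(↥(Set.Icc (-τ) T), EuclideanSpace ℝ (Fin n))) {t : ℝ} (ht : t ∈ Set.Icc (-τ) T) :
    vExt τ T hτT f t = f ⟨t, ht⟩ := by rw [vExt, Set.projIcc_of_mem]

private noncomputable def vG (τ T : ℝ) (hτT : -τ ≤ T)
    (G : ℝ → EuclideanSpace ℝ (Fin n) → EuclideanSpace ℝ (Fin n) → EuclideanSpace ℝ (Fin n))
    (f : C(↥(Set.Icc (-τ) T), EuclideanSpace ℝ (Fin n))) : ℝ → EuclideanSpace ℝ (Fin n) :=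
  fun s => G s (vExt τ T hτT f s) (vExt τ T hτT f (s - τ))

private lemma vG_contOn (τ T : ℝ) (hτT : -τ ≤ T)
    (G : ℝ → EuclideanSpace ℝ (Fin n) → EuclideanSpace ℝ (Fin n) → EuclideanSpace ℝ (Fin n))
    (hGc : ContinuousOn
      (fun p : ℝ × EuclideanSpace ℝ (Fin n) × EuclideanSpace ℝ (Fin n) => G p.1 p.2.1 p.2.2)
      (Set.Icc (0:ℝ) T ×ˢ (Set.univ ×ˢ Set.univ)))
    (f : C(↥(Set.Icc (-τ) T), EuclideanSpace ℝ (Fin n))) :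
    ContinuousOn (vG τ T hτT G f) (Set.Icc 0 T) := by
  have hmap : Continuous (fun s : ℝ => (s, vExt τ T hτT f s, vExt τ T hτT f (s - τ))) :=
    continuous_id.prodMk ((vExt_cont τ T hτT f).prodMk
      ((vExt_cont τ T hτT f).comp (continuous_id.sub continuous_const)))
  exact hGc.comp hmap.continuousOn (fun s hs => ⟨hs, trivial, trivial⟩)

private noncomputable def vPhiraw (τ T α : ℝ) (hτ0 : -τ ≤ 0) (hτT : -τ ≤ T)
    (φ : ℝ → EuclideanSpace ℝ (Fin n))
    (G : ℝ → EuclideanSpace ℝ (Fin n) → EuclideanSpace ℝ (Fin n) → EuclideanSpace ℝ (Fin n))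
    (f : C(↥(Set.Icc (-τ) T), EuclideanSpace ℝ (Fin n))) : ℝ → EuclideanSpace ℝ (Fin n) :=
  fun t => φ ((Set.projIcc (-τ) 0 hτ0 t : ↥(Set.Icc (-τ) (0:ℝ))) : ℝ)
    + (Real.Gamma α)⁻¹ • Fint α (vG τ T hτT G f) (max t 0)

private noncomputable def vTheta (τ T m : ℝ)
    (f : C(↥(Set.Icc (-τ) T), EuclideanSpace ℝ (Fin n))) :
    C(↥(Set.Icc (-τ) T), EuclideanSpace ℝ (Fin n)) :=
  ⟨fun p => Real.exp (-(m * (p : ℝ))) • f p,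
   (Real.continuous_exp.comp (continuous_const.mul continuous_subtype_val).neg).smul f.continuous⟩

private lemma vTheta_inv (τ T m : ℝ)
    (f : C(↥(Set.Icc (-τ) T), EuclideanSpace ℝ (Fin n))) :
    vTheta τ T (-m) (vTheta τ T m f) = f := by
  refine ContinuousMap.ext fun p => ?_
  show Real.exp (-(-m * (p:ℝ))) • (Real.exp (-(m * (p:ℝ))) • f p) = f p
  rw [smul_smul, ← Real.exp_add]
  norm_num

private lemma vTheta_dist (τ T m : ℝ)
    (f g : C(↥(Set.Icc (-τ) T), EuclideanSpace ℝ (Fin n))) (p : ↥(Set.Icc (-τ) T)) :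
    dist (vTheta τ T m f p) (vTheta τ T m g p)
      = Real.exp (-(m * (p : ℝ))) * dist (f p) (g p) := by
  show dist (Real.exp (-(m * (p:ℝ))) • f p) (Real.exp (-(m * (p:ℝ))) • g p) = _
  rw [dist_eq_norm, dist_eq_norm, ← smul_sub, norm_smul, Real.norm_eq_abs, Real.abs_exp]

end VolterraMain
/-- `x` solves the Volterra integral-equation formulation of the Caputo
initial value problem `ᶜD^α x(t) = G(t, x(t), x(t-τ))` on `[0,T]` with initial
history `φ` on `[-τ,0]`. -/
def IsVolterraSolution {n : ℕ} (T τ α : ℝ)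
    (φ : ℝ → EuclideanSpace ℝ (Fin n))
    (G : ℝ → EuclideanSpace ℝ (Fin n) → EuclideanSpace ℝ (Fin n) →
      EuclideanSpace ℝ (Fin n))
    (x : ℝ → EuclideanSpace ℝ (Fin n)) : Prop :=
  ContinuousOn x (Set.Icc (-τ) T) ∧
  (∀ t ∈ Set.Icc (-τ) (0:ℝ), x t = φ t) ∧
  (∀ t ∈ Set.Icc (0:ℝ) T, x t =
    φ 0 + (Real.Gamma α)⁻¹ •
      ∫ s in Set.Ioc (0:ℝ) t, ((t - s) ^ (α - 1)) • G s (x s) (x (s - τ)))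

/-- **Existence and uniqueness for the delayed fractional Volterra equation.**
With `G` continuous and globally Lipschitz in its last two arguments, there is
a continuous solution of
`x(t) = φ(0) + (1/Γ(α)) ∫₀ᵗ (t-s)^(α-1) G(s, x(s), x(s-τ)) ds`, `x = φ` on
`[-τ,0]`, and any two solutions agree on `[-τ,T]`. -/
theorem exists_unique_volterra_solution
    (n : ℕ) (hn : 1 ≤ n) (T τ α L : ℝ) (hT : 0 < T) (hτ : 0 < τ)
    (hα : α ∈ Set.Ioc (0:ℝ) 1)
    (φ : ℝ → EuclideanSpace ℝ (Fin n))
    (hφ : ContinuousOn φ (Set.Icc (-τ) (0:ℝ)))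
    (G : ℝ → EuclideanSpace ℝ (Fin n) → EuclideanSpace ℝ (Fin n) →
      EuclideanSpace ℝ (Fin n))
    (hGc : ContinuousOn
      (fun p : ℝ × EuclideanSpace ℝ (Fin n) × EuclideanSpace ℝ (Fin n) =>
        G p.1 p.2.1 p.2.2)
      (Set.Icc (0:ℝ) T ×ˢ (Set.univ ×ˢ Set.univ)))
    (hGL : ∀ t ∈ Set.Icc (0:ℝ) T, ∀ u₁ v₁ u₂ v₂,
      ‖G t u₁ v₁ - G t u₂ v₂‖ ≤ L * (‖u₁ - u₂‖ + ‖v₁ - v₂‖)) :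
    (∃ x : ℝ → EuclideanSpace ℝ (Fin n), IsVolterraSolution T τ α φ G x) ∧
    (∀ x₁ x₂ : ℝ → EuclideanSpace ℝ (Fin n),
      IsVolterraSolution T τ α φ G x₁ → IsVolterraSolution T τ α φ G x₂ →
      Set.EqOn x₁ x₂ (Set.Icc (-τ) T)) := by
  classical
  obtain ⟨hα0, hα1⟩ := hα
  have hτ0 : -τ ≤ (0:ℝ) := by linarith
  have hτT : -τ ≤ T := by linarith
  have hΓpos : 0 < Real.Gamma α := Real.Gamma_pos_of_pos hα0
  set Lb : ℝ := max L 0 with hLbdef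
  have hLb0 : 0 ≤ Lb := le_max_right _ _
  have hLL : L ≤ Lb := le_max_left _ _
  set lam : ℝ := (4 * Lb + 1) ^ (α⁻¹) with hlamdef
  have hlam0 : 0 < lam := Real.rpow_pos_of_pos (by linarith) _
  have hlamα : lam ^ α = 4 * Lb + 1 := Real.rpow_inv_rpow (by linarith) hα0.ne'
  have hc : 2 * Lb * (1 / lam) ^ α ≤ 1 / 2 := by
    rw [one_div, Real.inv_rpow hlam0.le, hlamα, ← div_eq_mul_inv,
      div_le_div_iff₀ (by linarith) (by norm_num)]
    linarith
  have hcnn : 0 ≤ 2 * Lb * (1 / lam) ^ α := by positivity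
  -- continuity and boundedness data
  have hGmeasOn : ∀ f : C(↥(Set.Icc (-τ) T), EuclideanSpace ℝ (Fin n)),
      ContinuousOn (vG τ T hτT G f) (Set.Icc 0 T) := fun f => vG_contOn τ T hτT G hGc f
  have hmeas : ∀ f : C(↥(Set.Icc (-τ) T), EuclideanSpace ℝ (Fin n)),
      AEStronglyMeasurable (vG τ T hτT G f) (volume.restrict (Set.Ioc 0 T)) := fun f =>
    ((hGmeasOn f).aestronglyMeasurable measurableSet_Icc).mono_measure
      (Measure.restrict_mono Set.Ioc_subset_Icc_self le_rfl)
  have hbdd : ∀ f : C(↥(Set.Icc (-τ) T), EuclideanSpace ℝ (Fin n)),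
      ∃ M, 0 ≤ M ∧ ∀ s ∈ Set.Ioc (0:ℝ) T, ‖vG τ T hτT G f s‖ ≤ M := by
    intro f
    obtain ⟨C, hC⟩ := isCompact_Icc.exists_bound_of_continuousOn (hGmeasOn f)
    exact ⟨max C 0, le_max_right _ _,
      fun s hs => (hC s ⟨hs.1.le, hs.2⟩).trans (le_max_left _ _)⟩
  have hcont : ∀ f : C(↥(Set.Icc (-τ) T), EuclideanSpace ℝ (Fin n)),
      ContinuousOn (vPhiraw τ T α hτ0 hτT φ G f) (Set.Icc (-τ) T) := by
    intro f
    obtain ⟨M, hM0, hM⟩ := hbdd f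
    have h1 : Continuous (fun t : ℝ =>
        φ ((Set.projIcc (-τ) 0 hτ0 t : ↥(Set.Icc (-τ) (0:ℝ))) : ℝ)) := by
      refine hφ.comp_continuous (continuous_subtype_val.comp continuous_projIcc)
        (fun x => Subtype.coe_prop _)
    have h2 : ContinuousOn (fun t => Fint α (vG τ T hτT G f) (max t 0)) (Set.Icc (-τ) T) :=
      (Fint_contOn hα0 hα1 hT.le (hmeas f) hM0 hM).mono Set.Icc_subset_Iic_self
    exact h1.continuousOn.add (h2.const_smul ((Real.Gamma α)⁻¹))
  -- the Picard operator
  set Φ : C(↥(Set.Icc (-τ) T), EuclideanSpace ℝ (Fin n)) →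
      C(↥(Set.Icc (-τ) T), EuclideanSpace ℝ (Fin n)) :=
    fun f => ⟨(Set.Icc (-τ) T).restrict (vPhiraw τ T α hτ0 hτT φ G f),
      (hcont f).restrict⟩ with hΦdef
  have hΦapp : ∀ f p, Φ f p = vPhiraw τ T α hτ0 hτT φ G f (p : ℝ) := fun f p => rfl
  -- weighted pointwise bound between images
  have hdptw : ∀ f g : C(↥(Set.Icc (-τ) T), EuclideanSpace ℝ (Fin n)),
      ∀ r : ℝ, ∀ hr : r ∈ Set.Icc (-τ) T,
      ‖vExt τ T hτT f r - vExt τ T hτT g r‖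
        ≤ Real.exp (lam * r) * dist (vTheta τ T lam f) (vTheta τ T lam g) := by
    intro f g r hr
    rw [vExt_eq τ T hτT f hr, vExt_eq τ T hτT g hr]
    have h1 := ContinuousMap.dist_apply_le_dist
      (f := vTheta τ T lam f) (g := vTheta τ T lam g) ⟨r, hr⟩
    rw [vTheta_dist] at h1
    have h2 := mul_le_mul_of_nonneg_left h1 (Real.exp_pos (lam * r)).le
    rw [← mul_assoc, ← Real.exp_add] at h2
    simp only [add_neg_cancel, Real.exp_zero, one_mul] at h2
    rw [← dist_eq_norm]
    exact h2
  have claimA : ∀ f g : C(↥(Set.Icc (-τ) T), EuclideanSpace ℝ (Fin n)),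
      ∀ p : ↥(Set.Icc (-τ) T),
      ‖vPhiraw τ T α hτ0 hτT φ G f (p:ℝ) - vPhiraw τ T α hτ0 hτT φ G g (p:ℝ)‖
        ≤ (2 * Lb * (1 / lam) ^ α) *
          (Real.exp (lam * (p:ℝ)) * dist (vTheta τ T lam f) (vTheta τ T lam g)) := by
    intro f g p
    set W := dist (vTheta τ T lam f) (vTheta τ T lam g) with hWdef
    have hW0 : (0:ℝ) ≤ W := dist_nonneg
    have hsub : vPhiraw τ T α hτ0 hτT φ G f (p:ℝ) - vPhiraw τ T α hτ0 hτT φ G g (p:ℝ)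
        = (Real.Gamma α)⁻¹ • (Fint α (vG τ T hτT G f) (max (p:ℝ) 0)
            - Fint α (vG τ T hτT G g) (max (p:ℝ) 0)) := by
      simp only [vPhiraw, smul_sub]
      abel
    rcases le_or_gt ((p:ℝ)) 0 with hp | hp
    · rw [hsub, max_eq_right hp, Fint_nonpos le_rfl, Fint_nonpos le_rfl, sub_self, smul_zero, norm_zero]
      positivity
    · have hp0 : (0:ℝ) ≤ (p:ℝ) := hp.le
      have hpT : ((p:ℝ)) ≤ T := p.2.2
      rw [hsub, max_eq_left hp0]
      obtain ⟨Mf, hMf0, hMf⟩ := hbdd f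
      obtain ⟨Mg, hMg0, hMg⟩ := hbdd g
      have hmf : AEStronglyMeasurable (vG τ T hτT G f)
          (volume.restrict (Set.Ioc 0 ((p:ℝ)))) :=
        (hmeas f).mono_measure (Measure.restrict_mono (Set.Ioc_subset_Ioc le_rfl hpT) le_rfl)
      have hmg : AEStronglyMeasurable (vG τ T hτT G g)
          (volume.restrict (Set.Ioc 0 ((p:ℝ)))) :=
        (hmeas g).mono_measure (Measure.restrict_mono (Set.Ioc_subset_Ioc le_rfl hpT) le_rfl)
      have hIf : IntegrableOn (fun s => (((p:ℝ) - s) ^ (α - 1)) • vG τ T hτT G f s)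
          (Set.Ioc 0 ((p:ℝ))) volume :=
        smul_intble hα0 hp0 le_rfl hmf ((ker_intble hα0 hp0).mul_const Mf)
          (fun s hs => hMf s (Set.Ioc_subset_Ioc le_rfl hpT hs))
      have hIg : IntegrableOn (fun s => (((p:ℝ) - s) ^ (α - 1)) • vG τ T hτT G g s)
          (Set.Ioc 0 ((p:ℝ))) volume :=
        smul_intble hα0 hp0 le_rfl hmg ((ker_intble hα0 hp0).mul_const Mg)
          (fun s hs => hMg s (Set.Ioc_subset_Ioc le_rfl hpT hs))
      have hFsub : Fint α (vG τ T hτT G f) ((p:ℝ)) - Fint α (vG τ T hτT G g) ((p:ℝ))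
          = ∫ s in Set.Ioc (0:ℝ) ((p:ℝ)),
              (((p:ℝ) - s) ^ (α - 1)) • (vG τ T hτT G f s - vG τ T hτT G g s) := by
        rw [Fint, Fint, ← integral_sub hIf hIg]
        refine setIntegral_congr_fun measurableSet_Ioc fun s _ => ?_
        show (((p:ℝ) - s) ^ (α - 1)) • _ - (((p:ℝ) - s) ^ (α - 1)) • _ = _
        rw [smul_sub]
      rw [hFsub]
      have hbound : ∀ s ∈ Set.Ioc (0:ℝ) ((p:ℝ)),
          ‖vG τ T hτT G f s - vG τ T hτT G g s‖ ≤ (2 * Lb * W) * Real.exp (lam * s) := by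
        intro s hs
        have hsT : s ∈ Set.Icc (0:ℝ) T := ⟨hs.1.le, hs.2.trans hpT⟩
        have hm1 : s ∈ Set.Icc (-τ) T := ⟨by linarith [hs.1, hτ.le], hsT.2⟩
        have hm2 : s - τ ∈ Set.Icc (-τ) T :=
          ⟨by linarith [hs.1], by linarith [hsT.2, hτ.le]⟩
        have h3 := hGL s hsT (vExt τ T hτT f s) (vExt τ T hτT f (s - τ))
          (vExt τ T hτT g s) (vExt τ T hτT g (s - τ))
        have h4 := hdptw f g s hm1
        have h5 := hdptw f g (s - τ) hm2
        have h6 : Real.exp (lam * (s - τ)) ≤ Real.exp (lam * s) := by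
          apply Real.exp_le_exp.2
          nlinarith [hlam0, hτ]
        have hsum : ‖vExt τ T hτT f s - vExt τ T hτT g s‖
              + ‖vExt τ T hτT f (s - τ) - vExt τ T hτT g (s - τ)‖
            ≤ Real.exp (lam * s) * W + Real.exp (lam * s) * W :=
          add_le_add h4 (h5.trans (mul_le_mul_of_nonneg_right h6 hW0))
        have hsum0 : 0 ≤ ‖vExt τ T hτT f s - vExt τ T hτT g s‖
              + ‖vExt τ T hτT f (s - τ) - vExt τ T hτT g (s - τ)‖ := by positivity
        calc ‖vG τ T hτT G f s - vG τ T hτT G g s‖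
            ≤ L * (‖vExt τ T hτT f s - vExt τ T hτT g s‖
                + ‖vExt τ T hτT f (s - τ) - vExt τ T hτT g (s - τ)‖) := h3
          _ ≤ Lb * (‖vExt τ T hτT f s - vExt τ T hτT g s‖
                + ‖vExt τ T hτT f (s - τ) - vExt τ T hτT g (s - τ)‖) :=
              mul_le_mul_of_nonneg_right hLL hsum0
          _ ≤ Lb * (Real.exp (lam * s) * W + Real.exp (lam * s) * W) :=
              mul_le_mul_of_nonneg_left hsum hLb0
          _ = (2 * Lb * W) * Real.exp (lam * s) := by ring
      have hd : AEStronglyMeasurable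
          (fun s => vG τ T hτT G f s - vG τ T hτT G g s)
          (volume.restrict (Set.Ioc 0 ((p:ℝ)))) := hmf.sub hmg
      have h7 := Fint_exp_bound hα0 hlam0 hp0 (by positivity) hd hbound
      rw [norm_smul, Real.norm_eq_abs, abs_of_nonneg (inv_nonneg.2 hΓpos.le)]
      calc (Real.Gamma α)⁻¹ * ‖∫ s in Set.Ioc (0:ℝ) ((p:ℝ)),
              (((p:ℝ) - s) ^ (α - 1)) • (vG τ T hτT G f s - vG τ T hτT G g s)‖
          ≤ (Real.Gamma α)⁻¹ * ((2 * Lb * W)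
              * (Real.exp (lam * (p:ℝ)) * ((1 / lam) ^ α * Real.Gamma α))) :=
            mul_le_mul_of_nonneg_left h7 (inv_nonneg.2 hΓpos.le)
        _ = (2 * Lb * (1 / lam) ^ α) * (Real.exp (lam * (p:ℝ)) * W) := by
            field_simp
  -- contraction
  have hhalf : ((1/2 : NNReal) : ℝ) = 1/2 := by norm_num
  have hK : ContractingWith (1/2 : NNReal)
      (fun u => vTheta τ T lam (Φ (vTheta τ T (-lam) u))) := by
    constructor
    · rw [← NNReal.coe_lt_coe, hhalf]; norm_num
    · refine LipschitzWith.of_dist_le_mul (fun u v => ?_)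
      rw [hhalf]
      refine (ContinuousMap.dist_le (by positivity)).2 fun p => ?_
      have hWu : vTheta τ T lam (vTheta τ T (-lam) u) = u := by
        have := vTheta_inv τ T (-lam) u; rwa [neg_neg] at this
      have hWv : vTheta τ T lam (vTheta τ T (-lam) v) = v := by
        have := vTheta_inv τ T (-lam) v; rwa [neg_neg] at this
      have h1 := claimA (vTheta τ T (-lam) u) (vTheta τ T (-lam) v) p
      rw [hWu, hWv] at h1
      rw [vTheta_dist]
      have h2 : dist (Φ (vTheta τ T (-lam) u) p) (Φ (vTheta τ T (-lam) v) p)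
          = ‖vPhiraw τ T α hτ0 hτT φ G (vTheta τ T (-lam) u) (p:ℝ)
              - vPhiraw τ T α hτ0 hτT φ G (vTheta τ T (-lam) v) (p:ℝ)‖ := by
        rw [dist_eq_norm]; rfl
      calc Real.exp (-(lam * (p:ℝ))) *
            dist (Φ (vTheta τ T (-lam) u) p) (Φ (vTheta τ T (-lam) v) p)
          ≤ Real.exp (-(lam * (p:ℝ))) *
            ((2 * Lb * (1 / lam) ^ α) * (Real.exp (lam * (p:ℝ)) * dist u v)) := by
            rw [h2]
            exact mul_le_mul_of_nonneg_left h1 (Real.exp_pos _).le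
        _ = (2 * Lb * (1 / lam) ^ α) * dist u v
              * (Real.exp (-(lam * (p:ℝ))) * Real.exp (lam * (p:ℝ))) := by ring
        _ = (2 * Lb * (1 / lam) ^ α) * dist u v := by
              rw [← Real.exp_add, neg_add_cancel, Real.exp_zero, mul_one]
        _ ≤ 1/2 * dist u v := mul_le_mul_of_nonneg_right hc dist_nonneg
  have hne : Nonempty C(↥(Set.Icc (-τ) T), EuclideanSpace ℝ (Fin n)) :=
    ⟨ContinuousMap.const _ 0⟩
  set f₀ : C(↥(Set.Icc (-τ) T), EuclideanSpace ℝ (Fin n)) :=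
    vTheta τ T (-lam) (ContractingWith.fixedPoint _ hK) with hf₀def
  have hfix : Φ f₀ = f₀ := by
    have h1 : vTheta τ T lam (Φ (vTheta τ T (-lam) (ContractingWith.fixedPoint _ hK)))
        = ContractingWith.fixedPoint _ hK := hK.fixedPoint_isFixedPt
    have h2 := congrArg (vTheta τ T (-lam)) h1
    rw [vTheta_inv] at h2
    rw [hf₀def]
    exact h2
  have huniq : ∀ h : C(↥(Set.Icc (-τ) T), EuclideanSpace ℝ (Fin n)), Φ h = h → h = f₀ := by
    intro h hh
    have h1 : (fun u => vTheta τ T lam (Φ (vTheta τ T (-lam) u))) (vTheta τ T lam h)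
        = vTheta τ T lam h := by
      show vTheta τ T lam (Φ (vTheta τ T (-lam) (vTheta τ T lam h))) = vTheta τ T lam h
      rw [vTheta_inv, hh]
    have h2 := hK.fixedPoint_unique h1
    have h3 := congrArg (vTheta τ T (-lam)) h2
    rw [vTheta_inv] at h3
    rw [hf₀def, ← h3]
  -- fixed points give solutions
  have hsol_of_fix : ∀ f : C(↥(Set.Icc (-τ) T), EuclideanSpace ℝ (Fin n)), Φ f = f →
      IsVolterraSolution T τ α φ G (vExt τ T hτT f) := by
    intro f hf
    refine ⟨(vExt_cont τ T hτT f).continuousOn, ?_, ?_⟩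
    · intro t ht
      have htI : t ∈ Set.Icc (-τ) T := ⟨ht.1, ht.2.trans hT.le⟩
      have h1 : vExt τ T hτT f t = Φ f ⟨t, htI⟩ := by
        rw [vExt_eq τ T hτT f htI, hf]
      rw [h1, hΦapp]
      show vPhiraw τ T α hτ0 hτT φ G f t = φ t
      simp only [vPhiraw, max_eq_right ht.2, Fint_nonpos le_rfl, smul_zero, add_zero,
        Set.projIcc_of_mem hτ0 ht]
    · intro t ht
      have htI : t ∈ Set.Icc (-τ) T := ⟨hτ0.trans ht.1, ht.2⟩
      have h1 : vExt τ T hτT f t = Φ f ⟨t, htI⟩ := by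
        rw [vExt_eq τ T hτT f htI, hf]
      rw [h1, hΦapp]
      show vPhiraw τ T α hτ0 hτT φ G f t = _
      simp only [vPhiraw, max_eq_left ht.1, Set.projIcc_of_right_le hτ0 ht.1]
      rfl
  -- solutions give fixed points
  have hfix_of_sol : ∀ (x : ℝ → EuclideanSpace ℝ (Fin n))
      (hx : IsVolterraSolution T τ α φ G x),
      Φ ⟨(Set.Icc (-τ) T).restrict x, hx.1.restrict⟩
        = ⟨(Set.Icc (-τ) T).restrict x, hx.1.restrict⟩ := by
    intro x hx
    have hvext : ∀ r (hr : r ∈ Set.Icc (-τ) T),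
        vExt τ T hτT ⟨(Set.Icc (-τ) T).restrict x, hx.1.restrict⟩ r = x r := by
      intro r hr
      rw [vExt_eq _ _ _ _ hr]
      rfl
    refine ContinuousMap.ext fun p => ?_
    rw [hΦapp]
    rcases le_total ((p : ℝ)) 0 with hp | hp
    · show vPhiraw τ T α hτ0 hτT φ G _ (p:ℝ) = x (p:ℝ)
      simp only [vPhiraw, max_eq_right hp, Fint_nonpos le_rfl, smul_zero, add_zero,
        Set.projIcc_of_mem hτ0 ⟨p.2.1, hp⟩]
      exact (hx.2.1 (p:ℝ) ⟨p.2.1, hp⟩).symm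
    · show vPhiraw τ T α hτ0 hτT φ G _ (p:ℝ) = x (p:ℝ)
      simp only [vPhiraw, max_eq_left hp, Set.projIcc_of_right_le hτ0 hp]
      have hcongr : Fint α (vG τ T hτT G ⟨(Set.Icc (-τ) T).restrict x, hx.1.restrict⟩) (p:ℝ)
          = ∫ s in Set.Ioc (0:ℝ) (p:ℝ), (((p:ℝ) - s) ^ (α - 1)) • G s (x s) (x (s - τ)) := by
        rw [Fint]
        refine setIntegral_congr_fun measurableSet_Ioc fun s hs => ?_
        have hs1 : s ∈ Set.Icc (-τ) T := ⟨by linarith [hs.1, hτ.le], hs.2.trans p.2.2⟩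
        have hs2 : s - τ ∈ Set.Icc (-τ) T :=
          ⟨by linarith [hs.1], by linarith [hs.2.trans p.2.2, hτ.le]⟩
        show (((p:ℝ) - s) ^ (α - 1)) • vG τ T hτT G _ s = _
        rw [vG, hvext s hs1, hvext (s - τ) hs2]
      rw [hcongr]
      exact (hx.2.2 (p:ℝ) ⟨hp, p.2.2⟩).symm
  constructor
  · exact ⟨vExt τ T hτT f₀, hsol_of_fix f₀ hfix⟩
  · intro x₁ x₂ h1 h2 t ht
    have e1 : (⟨(Set.Icc (-τ) T).restrict x₁, h1.1.restrict⟩ :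
        C(↥(Set.Icc (-τ) T), EuclideanSpace ℝ (Fin n))) = f₀ :=
      huniq _ (hfix_of_sol x₁ h1)
    have e2 : (⟨(Set.Icc (-τ) T).restrict x₂, h2.1.restrict⟩ :
        C(↥(Set.Icc (-τ) T), EuclideanSpace ℝ (Fin n))) = f₀ :=
      huniq _ (hfix_of_sol x₂ h2)
    have e3 := congrArg (fun f : C(↥(Set.Icc (-τ) T), EuclideanSpace ℝ (Fin n)) =>
      f ⟨t, ht⟩) (e1.trans e2.symm)
    exact e3
end

section
/- Let n ≥ 1, τ > 0, α ∈ (0,1], L ∈ [0,1), and let F : [0,∞) × ℝⁿ × ℝⁿ × ℝⁿ → ℝⁿ be continuous and satisfy ‖F(t, u₁, y₁, v₁) - F(t, u₂, y₂, v₂)‖ ≤ L (‖u₁ - u₂‖ + ‖y₁ - y₂‖ + ‖v₁ - v₂‖) for all arguments. Let φ : [-τ, 0] → ℝⁿ be continuous. Then there exists T > 0 and a unique pair of continuous functions x : [-τ, T] → ℝⁿ and h : [0, T] → ℝⁿ such that x = φ on [-τ, 0], h(t) = F(t, x(t), h(t), x(t-τ)) for all t ∈ [0, T], and x(t) = φ(0)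 + (1/Γ(α)) ∫₀ᵗ (t-s)^{α-1} h(s) ds for all t ∈ [0, T]. -/
open MeasureTheory Set Real

lemma continuousOn_union_of_isClosed {X Y : Type*} [TopologicalSpace X] [TopologicalSpace Y]
    {s t : Set X} {f : X → Y} (hs : IsClosed s) (ht : IsClosed t)
    (hfs : ContinuousOn f s) (hft : ContinuousOn f t) : ContinuousOn f (s ∪ t) := by
  intro x hx
  rw [continuousWithinAt_union]
  constructor
  · by_cases h : x ∈ s
    · exact hfs x h
    · exact continuousWithinAt_of_notMem_closure (by rwa [hs.closure_eq])
  · by_cases h : x ∈ t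
    · exact hft x h
    · exact continuousWithinAt_of_notMem_closure (by rwa [ht.closure_eq])

section Kernel
variable {α : ℝ}

lemma kernel_intervalIntegrable (hα : 0 < α) (c a b : ℝ) :
    IntervalIntegrable (fun s => (c - s) ^ (α - 1)) volume a b := by
  have := (intervalIntegral.intervalIntegrable_rpow' (a := c - a) (b := c - b) (r := α - 1)
    (by linarith)).comp_sub_left c
  simpa using this

lemma kernel_integrableOn (hα : 0 < α) (c a b : ℝ) (hab : a ≤ b) :
    IntegrableOn (fun s => (c - s) ^ (α - 1)) (Ioc a b) :=
  (intervalIntegrable_iff_integrableOn_Ioc_of_le hab).mp (kernel_intervalIntegrable hα c a b)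

lemma kernel_integral (hα : 0 < α) {a t c : ℝ} (ht : a ≤ t) :
    ∫ s in Ioc a t, (c - s) ^ (α - 1) = ((c - a) ^ α - (c - t) ^ α) / α := by
  rw [← intervalIntegral.integral_of_le ht]
  rw [intervalIntegral.integral_comp_sub_left (fun u => u ^ (α - 1)) c]
  rw [integral_rpow (Or.inl (by linarith))]
  ring_nf

variable {E : Type*} [NormedAddCommGroup E] [NormedSpace ℝ E]

lemma kernel_smul_integrableOn (hα : 0 < α) {a t c M : ℝ} (ht : a ≤ t) (htc : t ≤ c)
    {f : ℝ → E} (hf : AEStronglyMeasurable f (volume.restrict (Ioc a t)))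
    (hM : ∀ s ∈ Ioc a t, ‖f s‖ ≤ M) :
    IntegrableOn (fun s => ((c - s) ^ (α - 1)) • f s) (Ioc a t) := by
  have hker := kernel_integrableOn hα c a t ht
  refine Integrable.mono' (hker.const_mul M) ?_ ?_
  · exact (hker.1.aemeasurable.aestronglyMeasurable).smul hf
  · filter_upwards [ae_restrict_mem measurableSet_Ioc] with s hs
    rw [norm_smul]
    have h1 : 0 ≤ c - s := by have := hs.2; linarith
    have h2 : 0 ≤ (c - s) ^ (α - 1) := Real.rpow_nonneg h1 _
    calc ‖(c - s) ^ (α - 1)‖ * ‖f s‖ = (c - s) ^ (α - 1) * ‖f s‖ := by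
          rw [Real.norm_of_nonneg h2]
      _ ≤ (c - s) ^ (α - 1) * M := by
          have := hM s hs
          have h3 : (0:ℝ) ≤ ‖f s‖ := norm_nonneg _
          nlinarith
      _ = M * (c - s) ^ (α - 1) := by ring

lemma kernel_smul_norm_integral_le (hα : 0 < α) {a t c M : ℝ} (ht : a ≤ t) (htc : t ≤ c)
    {f : ℝ → E} (hf : AEStronglyMeasurable f (volume.restrict (Ioc a t)))
    (hM : ∀ s ∈ Ioc a t, ‖f s‖ ≤ M) :
    ‖∫ s in Ioc a t, ((c - s) ^ (α - 1)) • f s‖ ≤ M * (((c - a) ^ α - (c - t) ^ α) / α) := by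
  have hker := kernel_integrableOn hα c a t ht
  calc ‖∫ s in Ioc a t, ((c - s) ^ (α - 1)) • f s‖
      ≤ ∫ s in Ioc a t, ‖((c - s) ^ (α - 1)) • f s‖ := norm_integral_le_integral_norm _
    _ ≤ ∫ s in Ioc a t, M * (c - s) ^ (α - 1) := by
        refine setIntegral_mono_on
          ((kernel_smul_integrableOn hα ht htc hf hM).norm) (hker.const_mul M)
          measurableSet_Ioc ?_
        intro s hs
        have h1 : 0 ≤ c - s := by have := hs.2; linarith
        have h2 : 0 ≤ (c - s) ^ (α - 1) := Real.rpow_nonneg h1 _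
        rw [norm_smul, Real.norm_of_nonneg h2]
        have := hM s hs
        have h3 : (0:ℝ) ≤ ‖f s‖ := norm_nonneg _
        nlinarith
    _ = M * (((c - a) ^ α - (c - t) ^ α) / α) := by
        rw [integral_const_mul, kernel_integral hα ht]

lemma kernel_holder (hα : α ∈ Ioc (0:ℝ) 1) {t t' M : ℝ} (ht : 0 ≤ t) (htt' : t ≤ t')
    {f : ℝ → E} (hf : AEStronglyMeasurable f (volume.restrict (Ioc 0 t')))
    (hM : ∀ s ∈ Ioc (0:ℝ) t', ‖f s‖ ≤ M) :
    ‖(∫ s in Ioc (0:ℝ) t', ((t' - s) ^ (α - 1)) • f s) -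
      ∫ s in Ioc (0:ℝ) t, ((t - s) ^ (α - 1)) • f s‖ ≤ 2 * M / α * (t' - t) ^ α := by
  have hα0 : 0 < α := hα.1
  rcases eq_or_lt_of_le (ht.trans htt') with h0 | ht'0
  · have ht0 : t = 0 := le_antisymm (htt'.trans h0.symm.le) ht
    simp [← h0, ht0, Real.zero_rpow (ne_of_gt hα0)]
  have hM0 : 0 ≤ M := (norm_nonneg _).trans (hM t' ⟨ht'0, le_rfl⟩)
  have hf1 : AEStronglyMeasurable f (volume.restrict (Ioc 0 t)) :=
    hf.mono_measure (Measure.restrict_mono (Ioc_subset_Ioc_right htt') le_rfl)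
  have hf2 : AEStronglyMeasurable f (volume.restrict (Ioc t t')) :=
    hf.mono_measure (Measure.restrict_mono (Ioc_subset_Ioc_left ht) le_rfl)
  have hM1 : ∀ s ∈ Ioc (0:ℝ) t, ‖f s‖ ≤ M := fun s hs =>
    hM s (Ioc_subset_Ioc_right htt' hs)
  have hM2 : ∀ s ∈ Ioc t t', ‖f s‖ ≤ M := fun s hs => hM s (Ioc_subset_Ioc_left ht hs)
  have intA : IntegrableOn (fun s => ((t' - s) ^ (α - 1)) • f s) (Ioc 0 t) :=
    kernel_smul_integrableOn hα0 ht htt' hf1 hM1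
  have intB : IntegrableOn (fun s => ((t' - s) ^ (α - 1)) • f s) (Ioc t t') :=
    kernel_smul_integrableOn hα0 htt' le_rfl hf2 hM2
  have intC : IntegrableOn (fun s => ((t - s) ^ (α - 1)) • f s) (Ioc 0 t) :=
    kernel_smul_integrableOn hα0 ht le_rfl hf1 hM1
  have hsplit : (∫ s in Ioc (0:ℝ) t', ((t' - s) ^ (α - 1)) • f s) =
      (∫ s in Ioc (0:ℝ) t, ((t' - s) ^ (α - 1)) • f s) +
      ∫ s in Ioc t t', ((t' - s) ^ (α - 1)) • f s := by
    rw [← Ioc_union_Ioc_eq_Ioc ht htt',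
      setIntegral_union (Ioc_disjoint_Ioc_of_le le_rfl) measurableSet_Ioc intA intB]
  rw [hsplit]
  have hBound : ‖∫ s in Ioc t t', ((t' - s) ^ (α - 1)) • f s‖ ≤ M * (t' - t) ^ α / α := by
    have := kernel_smul_norm_integral_le hα0 htt' le_rfl hf2 hM2
    simpa [Real.zero_rpow (ne_of_gt hα0), mul_div_assoc] using this
  have hAC : (∫ s in Ioc (0:ℝ) t, ((t' - s) ^ (α - 1)) • f s) -
      (∫ s in Ioc (0:ℝ) t, ((t - s) ^ (α - 1)) • f s) =
      ∫ s in Ioc (0:ℝ) t, ((t' - s) ^ (α - 1) - (t - s) ^ (α - 1)) • f s := by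
    rw [← integral_sub intA intC]
    congr 1
    funext s
    rw [sub_smul]
  have hkt : IntegrableOn (fun s => (t - s) ^ (α - 1)) (Ioc 0 t) :=
    kernel_integrableOn hα0 t 0 t ht
  have hkt' : IntegrableOn (fun s => (t' - s) ^ (α - 1)) (Ioc 0 t) :=
    (intervalIntegrable_iff_integrableOn_Ioc_of_le ht).mp (kernel_intervalIntegrable hα0 t' 0 t)
  have hACbound : ‖∫ s in Ioc (0:ℝ) t, ((t' - s) ^ (α - 1) - (t - s) ^ (α - 1)) • f s‖ ≤
      M * (t ^ α - t' ^ α + (t' - t) ^ α) / α := by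
    have hae : ∀ᵐ s : ℝ, s ≠ t := by
      refine ae_iff.mpr ?_
      have : {s : ℝ | ¬ s ≠ t} = {t} := by ext s; simp
      rw [this]
      exact measure_singleton t
    calc ‖∫ s in Ioc (0:ℝ) t, ((t' - s) ^ (α - 1) - (t - s) ^ (α - 1)) • f s‖
        ≤ ∫ s in Ioc (0:ℝ) t, ‖((t' - s) ^ (α - 1) - (t - s) ^ (α - 1)) • f s‖ :=
          norm_integral_le_integral_norm _
      _ ≤ ∫ s in Ioc (0:ℝ) t, M * ((t - s) ^ (α - 1) - (t' - s) ^ (α - 1)) := by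
          refine setIntegral_mono_on_ae ?_ ?_ measurableSet_Ioc ?_
          · simpa [sub_smul, IntegrableOn] using (intA.sub intC).norm
          · exact ((hkt.sub hkt').const_mul M)
          · filter_upwards [hae] with s hst hs
            have h1 : 0 < t - s := lt_of_le_of_ne (by linarith [hs.2]) (by
              intro h; apply hst; linarith)
            have hkey : (t' - s) ^ (α - 1) ≤ (t - s) ^ (α - 1) :=
              Real.rpow_le_rpow_of_nonpos h1 (by linarith) (by linarith [hα.2])
            have h2 : 0 ≤ (t' - s) ^ (α - 1) := Real.rpow_nonneg (by linarith) _
            rw [norm_smul, Real.norm_of_nonpos (by linarith)]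
            have := hM1 s hs
            have h3 : (0:ℝ) ≤ ‖f s‖ := norm_nonneg _
            nlinarith
      _ = M * (t ^ α - t' ^ α + (t' - t) ^ α) / α := by
          rw [integral_const_mul, integral_sub hkt hkt', kernel_integral hα0 ht,
            kernel_integral hα0 ht]
          rw [sub_zero, sub_zero, sub_self, Real.zero_rpow (ne_of_gt hα0)]
          ring
  have hmono : t ^ α ≤ t' ^ α := Real.rpow_le_rpow ht htt' hα0.le
  have hP : 0 ≤ (t' - t) ^ α := Real.rpow_nonneg (by linarith) _
  calc ‖(∫ s in Ioc (0:ℝ) t, ((t' - s) ^ (α - 1)) • f s) +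
        (∫ s in Ioc t t', ((t' - s) ^ (α - 1)) • f s) -
        ∫ s in Ioc (0:ℝ) t, ((t - s) ^ (α - 1)) • f s‖
      ≤ ‖(∫ s in Ioc (0:ℝ) t, ((t' - s) ^ (α - 1)) • f s) -
          ∫ s in Ioc (0:ℝ) t, ((t - s) ^ (α - 1)) • f s‖ +
        ‖∫ s in Ioc t t', ((t' - s) ^ (α - 1)) • f s‖ := by
        rw [add_sub_right_comm]
        exact norm_add_le _ _
    _ ≤ M * (t ^ α - t' ^ α + (t' - t) ^ α) / α + M * (t' - t) ^ α / α := by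
        rw [hAC]
        exact add_le_add hACbound hBound
    _ ≤ 2 * M / α * (t' - t) ^ α := by
        rw [← add_div, div_mul_eq_mul_div]
        refine (div_le_div_iff_of_pos_right hα0).mpr ?_
        nlinarith

lemma I_dist_le (hα : α ∈ Ioc (0:ℝ) 1) {T M : ℝ} {f : ℝ → E}
    (hf : ContinuousOn f (Icc 0 T))
    (hM : ∀ s ∈ Icc (0:ℝ) T, ‖f s‖ ≤ M)
    {t₁ t₂ : ℝ} (h₁ : t₁ ∈ Icc (0:ℝ) T) (h₂ : t₂ ∈ Icc (0:ℝ) T) :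
    dist (∫ s in Ioc (0:ℝ) t₁, ((t₁ - s) ^ (α - 1)) • f s)
      (∫ s in Ioc (0:ℝ) t₂, ((t₂ - s) ^ (α - 1)) • f s) ≤ 2 * M / α * |t₁ - t₂| ^ α := by
  have key : ∀ u v : ℝ, u ∈ Icc (0:ℝ) T → v ∈ Icc (0:ℝ) T → u ≤ v →
      dist (∫ s in Ioc (0:ℝ) u, ((u - s) ^ (α - 1)) • f s)
        (∫ s in Ioc (0:ℝ) v, ((v - s) ^ (α - 1)) • f s) ≤ 2 * M / α * |u - v| ^ α := by
    intro u v hu hv huv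
    rw [dist_eq_norm, ← norm_neg, neg_sub, abs_sub_comm, abs_of_nonneg (by linarith)]
    exact kernel_holder hα hu.1 huv
      ((hf.mono (Ioc_subset_Icc_self.trans (Icc_subset_Icc_right hv.2))).aestronglyMeasurable
        measurableSet_Ioc)
      (fun s hs => hM s ⟨hs.1.le, hs.2.trans hv.2⟩)
  rcases le_total t₁ t₂ with h | h
  · exact key t₁ t₂ h₁ h₂ h
  · rw [dist_comm, abs_sub_comm]
    exact key t₂ t₁ h₂ h₁ h

lemma I_continuousOn (hα : α ∈ Ioc (0:ℝ) 1) {T : ℝ} (hT : 0 ≤ T) {f : ℝ → E}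
    (hf : ContinuousOn f (Icc 0 T)) :
    ContinuousOn (fun t => ∫ s in Ioc (0:ℝ) t, ((t - s) ^ (α - 1)) • f s) (Icc 0 T) := by
  obtain ⟨M, hM⟩ := (isCompact_Icc).exists_bound_of_continuousOn hf
  intro t₀ ht₀
  rw [ContinuousWithinAt, tendsto_iff_dist_tendsto_zero]
  have hbound : ∀ᶠ t in nhdsWithin t₀ (Icc (0:ℝ) T),
      dist (∫ s in Ioc (0:ℝ) t, ((t - s) ^ (α - 1)) • f s)
        (∫ s in Ioc (0:ℝ) t₀, ((t₀ - s) ^ (α - 1)) • f s) ≤ 2 * M / α * |t - t₀| ^ α :=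
    eventually_mem_nhdsWithin.mono (fun t ht => I_dist_le hα hf hM ht ht₀)
  have htend : Filter.Tendsto (fun t => 2 * M / α * |t - t₀| ^ α)
      (nhdsWithin t₀ (Icc (0:ℝ) T)) (nhds 0) := by
    have h1 : Filter.Tendsto (fun t : ℝ => |t - t₀|) (nhdsWithin t₀ (Icc (0:ℝ) T)) (nhds 0) := by
      have : Continuous (fun t : ℝ => |t - t₀|) := continuous_abs.comp (continuous_id.sub continuous_const)
      have := this.tendsto t₀
      simp only [sub_self, abs_zero] at this
      exact this.mono_left nhdsWithin_le_nhds
    have h2 : Filter.Tendsto (fun x : ℝ => x ^ α) (nhds 0) (nhds 0) := by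
      have := Real.continuousAt_rpow_const 0 α (Or.inr hα.1.le)
      simpa [ContinuousAt, Real.zero_rpow (ne_of_gt hα.1)] using this
    simpa using (h2.comp h1).const_mul (2 * M / α)
  exact squeeze_zero' (Filter.Eventually.of_forall (fun t => dist_nonneg)) hbound htend

lemma exists_param_fixedPoint {P : Type*} [TopologicalSpace P]
    {E' : Type*} [NormedAddCommGroup E'] [NormedSpace ℝ E'] [CompleteSpace E'] [Nonempty E']
    {L : ℝ} (hL0 : 0 ≤ L) (hL1 : L < 1)
    {f : P → E' → E'} (hfc : Continuous (fun q : P × E' => f q.1 q.2))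
    (hfL : ∀ p y₁ y₂, dist (f p y₁) (f p y₂) ≤ L * dist y₁ y₂) :
    ∃ G : P → E', Continuous G ∧ ∀ p, f p (G p) = G p := by
  have hcontr : ∀ p : P, ContractingWith L.toNNReal (f p) := by
    intro p
    refine ⟨?_, LipschitzWith.of_dist_le_mul (fun y₁ y₂ => ?_)⟩
    · rwa [← NNReal.coe_lt_coe, Real.coe_toNNReal L hL0]
    · rw [Real.coe_toNNReal L hL0]; exact hfL p y₁ y₂
  refine ⟨fun p => (hcontr p).fixedPoint (f p), ?_, fun p => (hcontr p).fixedPoint_isFixedPt⟩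
  set G : P → E' := fun p => (hcontr p).fixedPoint (f p) with hG
  have hfix : ∀ p, f p (G p) = G p := fun p => (hcontr p).fixedPoint_isFixedPt
  rw [continuous_iff_continuousAt]
  intro p
  rw [ContinuousAt, tendsto_iff_dist_tendsto_zero]
  have hbound : ∀ q, dist (G q) (G p) ≤ (1 - L)⁻¹ * dist (f q (G p)) (f p (G p)) := by
    intro q
    have h1 : dist (G q) (G p) ≤ dist (G q) (f q (G p)) + dist (f q (G p)) (G p) :=
      dist_triangle _ _ _
    have h2 : dist (G q) (f q (G p)) ≤ L * dist (G q) (G p) := by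
      calc dist (G q) (f q (G p)) = dist (f q (G q)) (f q (G p)) := by rw [hfix q]
        _ ≤ L * dist (G q) (G p) := hfL q _ _
    have h3 : dist (f q (G p)) (G p) = dist (f q (G p)) (f p (G p)) := by rw [hfix p]
    have h4 : (1 - L) * dist (G q) (G p) ≤ dist (f q (G p)) (f p (G p)) := by
      rw [← h3]; nlinarith [dist_nonneg (x := G q) (y := G p)]
    rw [inv_mul_eq_div, le_div_iff₀ (by linarith)]
    linarith [h4]
  have htend : Filter.Tendsto (fun q => (1 - L)⁻¹ * dist (f q (G p)) (f p (G p)))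
      (nhds p) (nhds 0) := by
    have hc : Continuous (fun q => f q (G p)) :=
      hfc.comp (continuous_id.prodMk continuous_const)
    have h5 : Filter.Tendsto (fun q => dist (f q (G p)) (f p (G p))) (nhds p) (nhds 0) := by
      have := (hc.tendsto p).dist (tendsto_const_nhds (x := f p (G p)) (f := nhds p))
      simpa using this
    have := h5.const_mul (1 - L)⁻¹
    simpa using this
  exact squeeze_zero (fun q => dist_nonneg) hbound htend
def IsImplicitSolutionPair {n : ℕ} (T τ α : ℝ)
    (φ : ℝ → EuclideanSpace ℝ (Fin n))
    (F : ℝ → EuclideanSpace ℝ (Fin n) → EuclideanSpace ℝ (Fin n) →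
      EuclideanSpace ℝ (Fin n) → EuclideanSpace ℝ (Fin n))
    (x h : ℝ → EuclideanSpace ℝ (Fin n)) : Prop :=
  ContinuousOn x (Set.Icc (-τ) T) ∧
  ContinuousOn h (Set.Icc (0:ℝ) T) ∧
  (∀ t ∈ Set.Icc (-τ) (0:ℝ), x t = φ t) ∧
  (∀ t ∈ Set.Icc (0:ℝ) T, h t = F t (x t) (h t) (x (t - τ))) ∧
  (∀ t ∈ Set.Icc (0:ℝ) T, x t =
    φ 0 + (Real.Gamma α)⁻¹ •
      ∫ s in Set.Ioc (0:ℝ) t, ((t - s) ^ (α - 1)) • h s)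

set_option maxHeartbeats 1000000 in
/-- **Local existence and uniqueness for the implicit delayed fractional
initial value problem.** There is a horizon `T > 0` on which the implicit
problem has a solution pair `(x, h)`, unique in the sense that any two such
pairs coincide on `[-τ,T]` resp. `[0,T]`. -/
theorem exists_unique_implicit_solution_pair
    (n : ℕ) (hn : 1 ≤ n) (τ α L : ℝ) (hτ : 0 < τ)
    (hα : α ∈ Set.Ioc (0:ℝ) 1) (hL : L ∈ Set.Ico (0:ℝ) 1)
    (F : ℝ → EuclideanSpace ℝ (Fin n) → EuclideanSpace ℝ (Fin n) →
      EuclideanSpace ℝ (Fin n) → EuclideanSpace ℝ (Fin n))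
    (hFc : ContinuousOn
      (fun p : ℝ × EuclideanSpace ℝ (Fin n) × EuclideanSpace ℝ (Fin n) ×
          EuclideanSpace ℝ (Fin n) => F p.1 p.2.1 p.2.2.1 p.2.2.2)
      (Set.Ici (0:ℝ) ×ˢ (Set.univ ×ˢ (Set.univ ×ˢ Set.univ))))
    (hFL : ∀ t ∈ Set.Ici (0:ℝ), ∀ u₁ y₁ v₁ u₂ y₂ v₂,
      ‖F t u₁ y₁ v₁ - F t u₂ y₂ v₂‖ ≤
        L * (‖u₁ - u₂‖ + ‖y₁ - y₂‖ + ‖v₁ - v₂‖))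
    (φ : ℝ → EuclideanSpace ℝ (Fin n))
    (hφ : ContinuousOn φ (Set.Icc (-τ) (0:ℝ))) :
    ∃ T > 0,
      (∃ x h : ℝ → EuclideanSpace ℝ (Fin n),
        IsImplicitSolutionPair T τ α φ F x h) ∧
      (∀ x₁ h₁ x₂ h₂ : ℝ → EuclideanSpace ℝ (Fin n),
        IsImplicitSolutionPair T τ α φ F x₁ h₁ →
        IsImplicitSolutionPair T τ α φ F x₂ h₂ →
        Set.EqOn x₁ x₂ (Set.Icc (-τ) T) ∧
        Set.EqOn h₁ h₂ (Set.Icc (0:ℝ) T)) := by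

  classical
  obtain ⟨hα0, hα1⟩ := hα
  obtain ⟨hL0, hL1⟩ := hL
  have hΓ : 0 < Real.Gamma α := Real.Gamma_pos_of_pos hα0
  -- clamped history
  set v : ℝ → EuclideanSpace ℝ (Fin n) := fun t => φ (max (-τ) (min 0 (t - τ))) with hv
  have hvc : Continuous v := by
    refine hφ.comp_continuous ?_ ?_
    · exact continuous_const.max ((continuous_const.min (continuous_id.sub continuous_const)))
    · intro t
      exact ⟨le_max_left _ _, max_le (by linarith) (min_le_left _ _)⟩
  have hv_eq : ∀ t ∈ Icc (0:ℝ) τ, v t = φ (t - τ) := by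
    intro t ht
    have h1 : min 0 (t - τ) = t - τ := min_eq_right (by linarith [ht.2])
    rw [hv]
    simp only
    rw [h1, max_eq_right (by linarith [ht.1])]
  -- truncated F
  set Ft : ℝ → EuclideanSpace ℝ (Fin n) → EuclideanSpace ℝ (Fin n) →
      EuclideanSpace ℝ (Fin n) → EuclideanSpace ℝ (Fin n) :=
    fun t u y w => F (max t 0) u y w with hFtdef
  have hFtc : Continuous (fun p : ℝ × EuclideanSpace ℝ (Fin n) × EuclideanSpace ℝ (Fin n) ×
      EuclideanSpace ℝ (Fin n) => Ft p.1 p.2.1 p.2.2.1 p.2.2.2) := by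
    refine hFc.comp_continuous ((continuous_fst.max continuous_const).prodMk continuous_snd) ?_
    intro p
    exact ⟨Set.mem_Ici.mpr (le_max_right _ _), by simp⟩
  have hFtL : ∀ t u₁ y₁ w₁ u₂ y₂ w₂, ‖Ft t u₁ y₁ w₁ - Ft t u₂ y₂ w₂‖ ≤
      L * (‖u₁ - u₂‖ + ‖y₁ - y₂‖ + ‖w₁ - w₂‖) :=
    fun t u₁ y₁ w₁ u₂ y₂ w₂ => hFL (max t 0) (Set.mem_Ici.mpr (le_max_right _ _)) _ _ _ _ _ _
  -- parametrized contraction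
  set f : (ℝ × EuclideanSpace ℝ (Fin n)) → EuclideanSpace ℝ (Fin n) → EuclideanSpace ℝ (Fin n) :=
    fun p y => Ft p.1 p.2 y (v p.1) with hfdef
  have hfc : Continuous (fun q : (ℝ × EuclideanSpace ℝ (Fin n)) × EuclideanSpace ℝ (Fin n) =>
      f q.1 q.2) := by
    have hm : Continuous (fun q : (ℝ × EuclideanSpace ℝ (Fin n)) × EuclideanSpace ℝ (Fin n) =>
        ((q.1.1, q.1.2, q.2, v q.1.1) : ℝ × EuclideanSpace ℝ (Fin n) × EuclideanSpace ℝ (Fin n) ×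
          EuclideanSpace ℝ (Fin n))) := by
      refine (continuous_fst.fst).prodMk ((continuous_fst.snd).prodMk
        (continuous_snd.prodMk (hvc.comp continuous_fst.fst)))
    exact hFtc.comp hm
  have hfL : ∀ p y₁ y₂, dist (f p y₁) (f p y₂) ≤ L * dist y₁ y₂ := by
    intro p y₁ y₂
    rw [dist_eq_norm, dist_eq_norm]
    have := hFtL p.1 p.2 y₁ (v p.1) p.2 y₂ (v p.1)
    simpa using this
  obtain ⟨G, hGc, hGfix⟩ := exists_param_fixedPoint hL0 hL1 hfc hfL
  -- Lipschitz constant of G in the state variable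
  set K := L / (1 - L) with hKdef
  have hK0 : 0 ≤ K := div_nonneg hL0 (by linarith)
  have hglip : ∀ t u₁ u₂, ‖G (t, u₁) - G (t, u₂)‖ ≤ K * ‖u₁ - u₂‖ := by
    intro t u₁ u₂
    have h1 := hGfix (t, u₁)
    have h2 := hGfix (t, u₂)
    simp only [hfdef] at h1 h2
    have h3 := hFtL t u₁ (G (t, u₁)) (v t) u₂ (G (t, u₂)) (v t)
    rw [h1, h2] at h3
    simp only [sub_self, norm_zero, add_zero] at h3
    rw [hKdef, div_mul_eq_mul_div, le_div_iff₀ (by linarith)]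
    nlinarith [norm_nonneg (u₁ - u₂), norm_nonneg (G (t, u₁) - G (t, u₂))]
  -- choice of the horizon T
  set B := (Real.Gamma α)⁻¹ * K / α with hBdef
  have hB0 : 0 ≤ B := div_nonneg (mul_nonneg (inv_nonneg.mpr hΓ.le) hK0) hα0.le
  have h2B : (0:ℝ) < 2 * (B + 1) := by linarith
  set T := min τ ((2 * (B + 1))⁻¹ ^ α⁻¹) with hTdef
  have hT0 : 0 < T := lt_min hτ (Real.rpow_pos_of_pos (inv_pos.mpr h2B) _)
  have hT06 : (0:ℝ) ≤ T := hT0.le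
  have hTτ : T ≤ τ := min_le_left _ _
  have hTα : T ^ α ≤ (2 * (B + 1))⁻¹ := by
    calc T ^ α ≤ ((2 * (B + 1))⁻¹ ^ α⁻¹) ^ α :=
          Real.rpow_le_rpow hT06 (min_le_right _ _) hα0.le
      _ = (2 * (B + 1))⁻¹ := Real.rpow_inv_rpow (inv_pos.mpr h2B).le (ne_of_gt hα0)
  have hsmall : (Real.Gamma α)⁻¹ * (T ^ α / α) * K ≤ 1 / 2 := by
    have he : (Real.Gamma α)⁻¹ * (T ^ α / α) * K = T ^ α * B := by rw [hBdef]; ring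
    rw [he]
    have h1 : T ^ α * B ≤ (2 * (B + 1))⁻¹ * B := mul_le_mul_of_nonneg_right hTα hB0
    have h2 : (2 * (B + 1))⁻¹ * B ≤ 1 / 2 := by
      rw [inv_mul_le_iff₀ h2B]
      linarith
    linarith
  -- setting for the Banach fixed point argument
  set proj : ℝ → Icc (0:ℝ) T := Set.projIcc 0 T hT06 with hproj
  have hprojmem : ∀ t ∈ Icc (0:ℝ) T, ((proj t : Icc (0:ℝ) T) : ℝ) = t := by
    intro t ht
    rw [hproj, Set.projIcc_of_mem hT06 ht]
  have hwcont : ∀ x : C(Icc (0:ℝ) T, EuclideanSpace ℝ (Fin n)),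
      Continuous (fun s : ℝ => G (s, x (proj s))) := by
    intro x
    exact hGc.comp (continuous_id.prodMk (x.continuous.comp continuous_projIcc))
  set Φ : C(Icc (0:ℝ) T, EuclideanSpace ℝ (Fin n)) → C(Icc (0:ℝ) T, EuclideanSpace ℝ (Fin n)) :=
    fun x => ⟨fun tt => φ 0 + (Real.Gamma α)⁻¹ •
        ∫ s in Ioc (0:ℝ) (tt:ℝ), (((tt:ℝ) - s) ^ (α - 1)) • G (s, x (proj s)), by
      refine continuous_const.add ?_
      exact Continuous.const_smul ((I_continuousOn ⟨hα0, hα1⟩ hT06 ((hwcont x).continuousOn)).comp_continuous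
        continuous_subtype_val (fun tt => tt.2)) (Real.Gamma α)⁻¹⟩ with hΦdef
  have hΦlip : ∀ x₁ x₂, dist (Φ x₁) (Φ x₂) ≤ (1/2) * dist x₁ x₂ := by
    intro x₁ x₂
    rw [ContinuousMap.dist_le (mul_nonneg (by norm_num) dist_nonneg)]
    intro tt
    have ht0 : 0 ≤ (tt:ℝ) := tt.2.1
    have htT : (tt:ℝ) ≤ T := tt.2.2
    have hb : ∀ s ∈ Ioc (0:ℝ) (tt:ℝ),
        ‖G (s, x₁ (proj s)) - G (s, x₂ (proj s))‖ ≤ K * dist x₁ x₂ := by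
      intro s _
      calc ‖G (s, x₁ (proj s)) - G (s, x₂ (proj s))‖
          ≤ K * ‖x₁ (proj s) - x₂ (proj s)‖ := hglip s _ _
        _ ≤ K * dist x₁ x₂ := by
            have hd := ContinuousMap.dist_apply_le_dist (f := x₁) (g := x₂) (proj s)
            rw [dist_eq_norm] at hd
            exact mul_le_mul_of_nonneg_left hd hK0
    have key : dist (Φ x₁ tt) (Φ x₂ tt) = (Real.Gamma α)⁻¹ *
        ‖(∫ s in Ioc (0:ℝ) (tt:ℝ), (((tt:ℝ) - s) ^ (α - 1)) • G (s, x₁ (proj s))) -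
          ∫ s in Ioc (0:ℝ) (tt:ℝ), (((tt:ℝ) - s) ^ (α - 1)) • G (s, x₂ (proj s))‖ := by
      simp only [hΦdef, ContinuousMap.coe_mk]
      rw [dist_eq_norm, add_sub_add_left_eq_sub, ← smul_sub, norm_smul,
        Real.norm_of_nonneg (inv_nonneg.mpr hΓ.le)]
    obtain ⟨M₁, hM₁⟩ := (isCompact_Icc (a := (0:ℝ)) (b := T)).exists_bound_of_continuousOn
      (hwcont x₁).continuousOn
    obtain ⟨M₂, hM₂⟩ := (isCompact_Icc (a := (0:ℝ)) (b := T)).exists_bound_of_continuousOn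
      (hwcont x₂).continuousOn
    have hmemIcc : ∀ s ∈ Ioc (0:ℝ) (tt:ℝ), s ∈ Icc (0:ℝ) T :=
      fun s hs => ⟨hs.1.le, hs.2.trans htT⟩
    have int1 : IntegrableOn
        (fun s => (((tt:ℝ) - s) ^ (α - 1)) • G (s, x₁ (proj s))) (Ioc 0 (tt:ℝ)) :=
      kernel_smul_integrableOn hα0 ht0 le_rfl
        ((hwcont x₁).aestronglyMeasurable.restrict)
        (fun s hs => hM₁ s (hmemIcc s hs))
    have int2 : IntegrableOn
        (fun s => (((tt:ℝ) - s) ^ (α - 1)) • G (s, x₂ (proj s))) (Ioc 0 (tt:ℝ)) :=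
      kernel_smul_integrableOn hα0 ht0 le_rfl
        ((hwcont x₂).aestronglyMeasurable.restrict)
        (fun s hs => hM₂ s (hmemIcc s hs))
    have hdiff : (∫ s in Ioc (0:ℝ) (tt:ℝ), (((tt:ℝ) - s) ^ (α - 1)) • G (s, x₁ (proj s))) -
        (∫ s in Ioc (0:ℝ) (tt:ℝ), (((tt:ℝ) - s) ^ (α - 1)) • G (s, x₂ (proj s))) =
        ∫ s in Ioc (0:ℝ) (tt:ℝ), (((tt:ℝ) - s) ^ (α - 1)) •
          (G (s, x₁ (proj s)) - G (s, x₂ (proj s))) := by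
      rw [← integral_sub int1 int2]
      congr 1
      funext s
      rw [smul_sub]
    have hn := kernel_smul_norm_integral_le hα0 ht0 le_rfl
      (((hwcont x₁).sub (hwcont x₂)).aestronglyMeasurable.restrict) hb
    simp only [sub_zero, sub_self, Real.zero_rpow (ne_of_gt hα0)] at hn
    rw [key, hdiff]
    have htTα : (tt:ℝ) ^ α ≤ T ^ α := Real.rpow_le_rpow ht0 htT hα0.le
    have hd0 : 0 ≤ dist x₁ x₂ := dist_nonneg
    calc (Real.Gamma α)⁻¹ * ‖∫ s in Ioc (0:ℝ) (tt:ℝ), (((tt:ℝ) - s) ^ (α - 1)) •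
          (G (s, x₁ (proj s)) - G (s, x₂ (proj s)))‖
        ≤ (Real.Gamma α)⁻¹ * (K * dist x₁ x₂ * ((tt:ℝ) ^ α / α)) :=
          mul_le_mul_of_nonneg_left hn (inv_nonneg.mpr hΓ.le)
      _ ≤ (Real.Gamma α)⁻¹ * (K * dist x₁ x₂ * (T ^ α / α)) := by
          have h1 : (tt:ℝ) ^ α / α ≤ T ^ α / α := by
            gcongr
          exact mul_le_mul_of_nonneg_left (mul_le_mul_of_nonneg_left h1
            (mul_nonneg hK0 hd0)) (inv_nonneg.mpr hΓ.le)
      _ = ((Real.Gamma α)⁻¹ * (T ^ α / α) * K) * dist x₁ x₂ := by ring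
      _ ≤ (1/2) * dist x₁ x₂ := mul_le_mul_of_nonneg_right hsmall hd0
  have hΦcontr : ContractingWith (1/2 : NNReal) Φ := by
    constructor
    · rw [← NNReal.coe_lt_coe]
      norm_num
    · refine LipschitzWith.of_dist_le_mul (fun x₁ x₂ => ?_)
      have h := hΦlip x₁ x₂
      have hc : ((1/2 : NNReal) : ℝ) = 1/2 := by norm_num
      rw [hc]
      exact h
  haveI : Nonempty C(Icc (0:ℝ) T, EuclideanSpace ℝ (Fin n)) := ⟨ContinuousMap.const _ 0⟩
  set x₀ := hΦcontr.fixedPoint Φ with hx₀def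
  have hx₀fix : Φ x₀ = x₀ := hΦcontr.fixedPoint_isFixedPt
  -- the solution pair
  set x : ℝ → EuclideanSpace ℝ (Fin n) :=
    fun t => if 0 ≤ t then x₀ (proj t) else φ t with hxdef
  set h : ℝ → EuclideanSpace ℝ (Fin n) := fun t => G (t, x t) with hhdef
  have hx_pos : ∀ t : ℝ, 0 ≤ t → x t = x₀ (proj t) := by
    intro t ht
    rw [hxdef]
    simp only [if_pos ht]
  have hx_neg : ∀ t : ℝ, ¬ (0 ≤ t) → x t = φ t := by
    intro t ht
    rw [hxdef]
    simp only [if_neg ht]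
  have hΦapply : ∀ (y : C(Icc (0:ℝ) T, EuclideanSpace ℝ (Fin n))) (tt : Icc (0:ℝ) T),
      Φ y tt = φ 0 + (Real.Gamma α)⁻¹ •
        ∫ s in Ioc (0:ℝ) (tt:ℝ), (((tt:ℝ) - s) ^ (α - 1)) • G (s, y (proj s)) := by
    intro y tt
    simp only [hΦdef, ContinuousMap.coe_mk]
  have hx₀0 : x₀ (proj 0) = φ 0 := by
    have h0mem : (0:ℝ) ∈ Icc (0:ℝ) T := ⟨le_rfl, hT06⟩
    have h1 : Φ x₀ (proj 0) = φ 0 := by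
      rw [hΦapply, hprojmem 0 h0mem]
      simp [Set.Ioc_self]
    rw [← h1, hx₀fix]
  have hhist : ∀ t ∈ Icc (-τ) (0:ℝ), x t = φ t := by
    intro t ht
    rcases lt_or_eq_of_le ht.2 with h1 | h1
    · exact hx_neg t (not_le.mpr h1)
    · rw [h1, hx_pos 0 le_rfl, hx₀0]
  -- continuity of x
  have hxcont : ContinuousOn x (Icc (-τ) T) := by
    have hu : Icc (-τ) T = Icc (-τ) 0 ∪ Icc 0 T := (Icc_union_Icc_eq_Icc (by linarith) hT06).symm
    rw [hu]
    refine continuousOn_union_of_isClosed isClosed_Icc isClosed_Icc ?_ ?_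
    · exact hφ.congr hhist
    · exact ((x₀.continuous.comp continuous_projIcc).continuousOn).congr
        (fun t ht => hx_pos t ht.1)
  have hhcont : ContinuousOn h (Icc (0:ℝ) T) := by
    refine ((hwcont x₀).continuousOn).congr (fun t ht => ?_)
    rw [hhdef]
    simp only
    rw [hx_pos t ht.1]
  -- the implicit equation
  have heqF : ∀ t ∈ Icc (0:ℝ) T, h t = F t (x t) (h t) (x (t - τ)) := by
    intro t ht
    have hst : t - τ ∈ Icc (-τ) (0:ℝ) := ⟨by linarith [ht.1], by linarith [ht.2, hTτ]⟩
    have hxt : x (t - τ) = φ (t - τ) := hhist _ hst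
    have hvt : v t = φ (t - τ) := hv_eq t ⟨ht.1, ht.2.trans hTτ⟩
    have hfixG := hGfix (t, x t)
    simp only [hfdef, hFtdef] at hfixG
    rw [max_eq_left ht.1, hvt, ← hxt] at hfixG
    rw [hhdef]
    simp only
    exact hfixG.symm
  -- the integral equation
  have hxeq : ∀ t ∈ Icc (0:ℝ) T, x t = φ 0 + (Real.Gamma α)⁻¹ •
      ∫ s in Ioc (0:ℝ) t, ((t - s) ^ (α - 1)) • h s := by
    intro t ht
    have h1 : x t = Φ x₀ (proj t) := by rw [hx_pos t ht.1, hx₀fix]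
    rw [h1, hΦapply, hprojmem t ht]
    congr 1
    congr 1
    refine setIntegral_congr_fun measurableSet_Ioc (fun s hs => ?_)
    have hs0 : (0:ℝ) ≤ s := hs.1.le
    rw [hhdef]
    simp only
    rw [hx_pos s hs0]
  refine ⟨T, hT0, ⟨x, h, hxcont, hhcont, hhist, heqF, hxeq⟩, ?_⟩
  -- uniqueness
  intro x₁ h₁ x₂ h₂ hp₁ hp₂
  obtain ⟨hx₁c, hh₁c, hist₁, heq₁, xeq₁⟩ := hp₁
  obtain ⟨hx₂c, hh₂c, hist₂, heq₂, xeq₂⟩ := hp₂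
  -- any solution's h is the parametrized fixed point
  have hfixh : ∀ (x' h' : ℝ → EuclideanSpace ℝ (Fin n)),
      (∀ t ∈ Icc (-τ) (0:ℝ), x' t = φ t) →
      (∀ t ∈ Icc (0:ℝ) T, h' t = F t (x' t) (h' t) (x' (t - τ))) →
      ∀ t ∈ Icc (0:ℝ) T, h' t = G (t, x' t) := by
    intro x' h' hist' heq' t ht
    have hst : t - τ ∈ Icc (-τ) (0:ℝ) := ⟨by linarith [ht.1], by linarith [ht.2, hTτ]⟩
    have hxt : x' (t - τ) = φ (t - τ) := hist' _ hst
    have hvt : v t = φ (t - τ) := hv_eq t ⟨ht.1, ht.2.trans hTτ⟩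
    have h1 : f (t, x' t) (h' t) = h' t := by
      simp only [hfdef, hFtdef]
      rw [max_eq_left ht.1, hvt, ← hxt]
      exact (heq' t ht).symm
    have h2 : f (t, x' t) (G (t, x' t)) = G (t, x' t) := hGfix (t, x' t)
    have hd := hfL (t, x' t) (h' t) (G (t, x' t))
    rw [h1, h2] at hd
    have hge : (0:ℝ) ≤ dist (h' t) (G (t, x' t)) := dist_nonneg
    have hd0 : dist (h' t) (G (t, x' t)) = 0 := by
      by_contra hne
      have hpos : 0 < dist (h' t) (G (t, x' t)) := lt_of_le_of_ne hge (Ne.symm hne)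
      have hlt : L * dist (h' t) (G (t, x' t)) < 1 * dist (h' t) (G (t, x' t)) :=
        mul_lt_mul_of_pos_right hL1 hpos
      linarith
    rw [← dist_eq_zero]
    exact hd0
  -- restrictions are fixed points of Φ
  have hfixX : ∀ (x' h' : ℝ → EuclideanSpace ℝ (Fin n)),
      ContinuousOn x' (Icc (-τ) T) →
      (∀ t ∈ Icc (-τ) (0:ℝ), x' t = φ t) →
      (∀ t ∈ Icc (0:ℝ) T, h' t = F t (x' t) (h' t) (x' (t - τ))) →
      (∀ t ∈ Icc (0:ℝ) T, x' t = φ 0 + (Real.Gamma α)⁻¹ •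
        ∫ s in Ioc (0:ℝ) t, ((t - s) ^ (α - 1)) • h' s) →
      ∀ t ∈ Icc (0:ℝ) T,
        x' t = (hΦcontr.fixedPoint Φ) (proj t) := by
    intro x' h' hx'c hist' heq' xeq'
    have hX'cont : Continuous (fun tt : Icc (0:ℝ) T => x' tt) :=
      (hx'c.mono (Icc_subset_Icc (by linarith) le_rfl)).comp_continuous
        continuous_subtype_val (fun tt => tt.2)
    set X' : C(Icc (0:ℝ) T, EuclideanSpace ℝ (Fin n)) := ⟨fun tt => x' tt, hX'cont⟩ with hX'def
    have hfix' : Function.IsFixedPt Φ X' := by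
      refine ContinuousMap.ext (fun tt => ?_)
      rw [hΦapply]
      have hint : (∫ s in Ioc (0:ℝ) (tt:ℝ), (((tt:ℝ) - s) ^ (α - 1)) • G (s, X' (proj s))) =
          ∫ s in Ioc (0:ℝ) (tt:ℝ), (((tt:ℝ) - s) ^ (α - 1)) • h' s := by
        refine setIntegral_congr_fun measurableSet_Ioc (fun s hs => ?_)
        have hsmem : s ∈ Icc (0:ℝ) T := ⟨hs.1.le, hs.2.trans tt.2.2⟩
        have hXs : X' (proj s) = x' s := by
          rw [hX'def]
          simp only [ContinuousMap.coe_mk]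
          rw [hprojmem s hsmem]
        rw [hXs, ← hfixh x' h' hist' heq' s hsmem]
      rw [hint, ← xeq' (tt:ℝ) tt.2]
      rfl
    have hXeq : X' = hΦcontr.fixedPoint Φ := hΦcontr.fixedPoint_unique hfix'
    intro t ht
    calc x' t = X' ⟨t, ht⟩ := rfl
      _ = (hΦcontr.fixedPoint Φ) ⟨t, ht⟩ := by rw [hXeq]
      _ = (hΦcontr.fixedPoint Φ) (proj t) := by
          congr 1
          refine Subtype.ext ?_
          rw [hprojmem t ht]
  have hxeqOn : Set.EqOn x₁ x₂ (Icc (0:ℝ) T) := by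
    intro t ht
    rw [hfixX x₁ h₁ hx₁c hist₁ heq₁ xeq₁ t ht, hfixX x₂ h₂ hx₂c hist₂ heq₂ xeq₂ t ht]
  constructor
  · intro t ht
    rcases le_or_gt t 0 with h1 | h1
    · have ht' : t ∈ Icc (-τ) (0:ℝ) := ⟨ht.1, h1⟩
      rw [hist₁ t ht', hist₂ t ht']
    · exact hxeqOn ⟨h1.le, ht.2⟩
  · intro t ht
    rw [hfixh x₁ h₁ hist₁ heq₁ t ht, hfixh x₂ h₂ hist₂ heq₂ t ht, hxeqOn ht]
end Kernel
end

section
/- Let T > 0, α ∈ (0,1], L ≥ 0 and ε ≥ 0. Let e : [0, T] → ℝ be continuous and nonnegative and suppose that for all t ∈ [0, T], e(t) ≤ (L/Γ(α)) ∫₀ᵗ (t-s)^{α-1} e(s) ds + ε T^α / Γ(α+1). Then there exists a constant C > 0, depending only on L, α and T (and not on ε or e), such that e(t) ≤ C ε for all t ∈ [0, T]. -/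
open MeasureTheory Set Real

/-- **Scalar fractional Grönwall estimate for Ulam–Hyers stability.**
If a nonnegative continuous `e` satisfies
`e(t) ≤ (L/Γ(α)) ∫₀ᵗ (t-s)^(α-1) e(s) ds + ε T^α / Γ(α+1)` on `[0,T]`,
then `e(t) ≤ C ε` with `C` depending only on `L`, `α` and `T`. -/
theorem fractional_gronwall_ulam_hyers
    (T α L : ℝ) (hT : 0 < T) (hα : α ∈ Set.Ioc (0:ℝ) 1) (hL : 0 ≤ L) :
    ∃ C > 0, ∀ ε : ℝ, 0 ≤ ε → ∀ e : ℝ → ℝ,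
      ContinuousOn e (Set.Icc (0:ℝ) T) →
      (∀ t ∈ Set.Icc (0:ℝ) T, 0 ≤ e t) →
      (∀ t ∈ Set.Icc (0:ℝ) T, e t ≤
        (L / Real.Gamma α) * (∫ s in Set.Ioc (0:ℝ) t, (t - s) ^ (α - 1) * e s)
          + ε * T ^ α / Real.Gamma (α + 1)) →
      ∀ t ∈ Set.Icc (0:ℝ) T, e t ≤ C * ε := by
  obtain ⟨hα0, hα1⟩ := hα
  have hΓ : 0 < Real.Gamma α := Real.Gamma_pos_of_pos hα0
  have hΓ1 : 0 < Real.Gamma (α + 1) := Real.Gamma_pos_of_pos (by linarith)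
  set K := L / Real.Gamma α with hKdef
  have hK0 : 0 ≤ K := div_nonneg hL hΓ.le
  have hr : (-1 : ℝ) < α - 1 := by linarith
  -- choose δ small
  have hbase : 0 < α / (4 * (K + 1)) := by positivity
  set δ : ℝ := min 1 ((α / (4 * (K + 1))) ^ (1/α)) with hδdef
  have hδpos : 0 < δ := lt_min one_pos (Real.rpow_pos_of_pos hbase _)
  have hδα : δ ^ α ≤ α / (4 * (K + 1)) := by
    calc δ ^ α ≤ ((α / (4 * (K + 1))) ^ (1/α)) ^ α :=
          Real.rpow_le_rpow hδpos.le (min_le_right _ _) hα0.le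
      _ = α / (4 * (K + 1)) := by
          rw [← Real.rpow_mul hbase.le, one_div_mul_cancel hα0.ne', Real.rpow_one]
  have hδbound : K * (δ ^ α / α) ≤ 1/4 := by
    have h1 : K * δ ^ α ≤ K * (α / (4 * (K + 1))) :=
      mul_le_mul_of_nonneg_left hδα hK0
    have h2 : K * (α / (4 * (K + 1))) ≤ α / 4 := by
      rw [mul_div_assoc', div_le_div_iff₀ (by positivity) (by norm_num : (0:ℝ) < 4)]
      nlinarith [hα0.le, hK0]
    rw [mul_div_assoc', div_le_div_iff₀ hα0 (by norm_num : (0:ℝ) < 4)]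
    nlinarith [hα0.le]
  -- choose lam large
  set A : ℝ := 4 * K * T ^ α / α with hAdef
  have hA0 : 0 ≤ A := by positivity
  set lam : ℝ := Real.log (A + 1) / δ with hlamdef
  have hlam0 : 0 ≤ lam := div_nonneg (Real.log_nonneg (by linarith)) hδpos.le
  have hexpδ : Real.exp (-(lam * δ)) = (A + 1)⁻¹ := by
    have : lam * δ = Real.log (A + 1) := by
      rw [hlamdef, div_mul_cancel₀ _ hδpos.ne']
    rw [this, Real.exp_neg, Real.exp_log (by linarith)]
  have hexpbound : K * (Real.exp (-(lam * δ)) * (T ^ α / α)) ≤ 1/4 := by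
    rw [hexpδ]
    have h1 : K * ((A + 1)⁻¹ * (T ^ α / α)) = (A / 4) * (A + 1)⁻¹ := by
      rw [hAdef]; field_simp
    rw [h1]
    have h2 : A / (A + 1) ≤ 1 := by
      rw [div_le_one (by linarith)]; linarith
    calc (A / 4) * (A + 1)⁻¹ = (A / (A + 1)) / 4 := by ring
      _ ≤ 1 / 4 := by linarith
  set η : ℝ := δ ^ α / α + Real.exp (-(lam * δ)) * (T ^ α / α) with hηdef
  have hη0 : 0 ≤ η := by positivity
  have hKη : K * η ≤ 1/2 := by
    rw [hηdef, mul_add]; linarith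
  -- the kernel bound
  have hIntF : ∀ a b : ℝ, IntervalIntegrable
      (fun u => u ^ (α - 1) * Real.exp (-(lam * u))) volume a b := by
    intro a b
    exact (intervalIntegral.intervalIntegrable_rpow' hr).mul_continuousOn
      (Continuous.continuousOn (by fun_prop))
  have hIntR : ∀ a b : ℝ, IntervalIntegrable (fun u : ℝ => u ^ (α - 1)) volume a b :=
    fun a b => intervalIntegral.intervalIntegrable_rpow' hr
  have hrpow_int : ∀ a b : ℝ, 0 ≤ a → a ≤ b →
      (∫ u in a..b, u ^ (α - 1)) = (b ^ α - a ^ α) / α := by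
    intro a b ha hab
    rw [integral_rpow (Or.inl hr)]
    norm_num
  have kernel : ∀ t ∈ Set.Icc (0:ℝ) T,
      (∫ u in (0:ℝ)..t, u ^ (α - 1) * Real.exp (-(lam * u))) ≤ η := by
    intro t ht
    obtain ⟨ht0, htT⟩ := ht
    have hmono : ∀ a b : ℝ, 0 ≤ a → a ≤ b →
        (∫ u in a..b, u ^ (α - 1) * Real.exp (-(lam * u))) ≤ (b ^ α - a ^ α) / α := by
      intro a b ha hab
      rw [← hrpow_int a b ha hab]
      refine intervalIntegral.integral_mono_on hab (hIntF a b) (hIntR a b) ?_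
      intro x hx
      have hx0 : 0 ≤ x := le_trans ha hx.1
      have h1 : Real.exp (-(lam * x)) ≤ 1 := by
        rw [Real.exp_le_one_iff]
        have : 0 ≤ lam * x := mul_nonneg hlam0 hx0
        linarith
      calc x ^ (α - 1) * Real.exp (-(lam * x)) ≤ x ^ (α - 1) * 1 :=
            mul_le_mul_of_nonneg_left h1 (Real.rpow_nonneg hx0 _)
        _ = x ^ (α - 1) := mul_one _
    have hexp_nonneg : 0 ≤ Real.exp (-(lam * δ)) * (T ^ α / α) := by positivity
    rcases le_or_gt t δ with h | h
    · have h1 := hmono 0 t le_rfl ht0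
      have h2 : (t ^ α - (0:ℝ) ^ α) / α ≤ δ ^ α / α := by
        rw [Real.zero_rpow hα0.ne', sub_zero]
        exact div_le_div_of_nonneg_right (Real.rpow_le_rpow ht0 h hα0.le) hα0.le
      rw [hηdef]; linarith
    · have hsplit : (∫ u in (0:ℝ)..t, u ^ (α - 1) * Real.exp (-(lam * u)))
          = (∫ u in (0:ℝ)..δ, u ^ (α - 1) * Real.exp (-(lam * u)))
            + ∫ u in δ..t, u ^ (α - 1) * Real.exp (-(lam * u)) :=
        (intervalIntegral.integral_add_adjacent_intervals (hIntF 0 δ) (hIntF δ t)).symm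
      have h1 := hmono 0 δ le_rfl hδpos.le
      have h1' : (∫ u in (0:ℝ)..δ, u ^ (α - 1) * Real.exp (-(lam * u))) ≤ δ ^ α / α := by
        rw [Real.zero_rpow hα0.ne', sub_zero] at h1; exact h1
      have h2 : (∫ u in δ..t, u ^ (α - 1) * Real.exp (-(lam * u)))
          ≤ Real.exp (-(lam * δ)) * (T ^ α / α) := by
        have hptwise : ∀ x ∈ Set.Icc δ t,
            x ^ (α - 1) * Real.exp (-(lam * x))
              ≤ Real.exp (-(lam * δ)) * x ^ (α - 1) := by
          intro x hx
          have hx0 : 0 ≤ x := le_trans hδpos.le hx.1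
          have hE : Real.exp (-(lam * x)) ≤ Real.exp (-(lam * δ)) := by
            apply Real.exp_le_exp.mpr
            have : lam * δ ≤ lam * x := mul_le_mul_of_nonneg_left hx.1 hlam0
            linarith
          calc x ^ (α - 1) * Real.exp (-(lam * x))
              ≤ x ^ (α - 1) * Real.exp (-(lam * δ)) :=
                mul_le_mul_of_nonneg_left hE (Real.rpow_nonneg hx0 _)
            _ = Real.exp (-(lam * δ)) * x ^ (α - 1) := mul_comm _ _
        have hmono2 : (∫ u in δ..t, u ^ (α - 1) * Real.exp (-(lam * u)))
            ≤ ∫ u in δ..t, Real.exp (-(lam * δ)) * u ^ (α - 1) :=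
          intervalIntegral.integral_mono_on h.le (hIntF δ t)
            ((hIntR δ t).const_mul _) hptwise
        have hcalc : (∫ u in δ..t, Real.exp (-(lam * δ)) * u ^ (α - 1))
            = Real.exp (-(lam * δ)) * ((t ^ α - δ ^ α) / α) := by
          rw [intervalIntegral.integral_const_mul, hrpow_int δ t hδpos.le h.le]
        have hTα : (t ^ α - δ ^ α) / α ≤ T ^ α / α := by
          have h3 : t ^ α ≤ T ^ α := Real.rpow_le_rpow ht0 htT hα0.le
          have h4 : 0 ≤ δ ^ α := Real.rpow_nonneg hδpos.le _
          apply div_le_div_of_nonneg_right _ hα0.le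
          linarith
        calc (∫ u in δ..t, u ^ (α - 1) * Real.exp (-(lam * u)))
            ≤ Real.exp (-(lam * δ)) * ((t ^ α - δ ^ α) / α) := by
              rw [← hcalc]; exact hmono2
          _ ≤ Real.exp (-(lam * δ)) * (T ^ α / α) :=
              mul_le_mul_of_nonneg_left hTα (Real.exp_pos _).le
      rw [hsplit, hηdef]; linarith
  -- the constant
  refine ⟨2 * (T ^ α / Real.Gamma (α + 1)) * Real.exp (lam * T), ?_, ?_⟩
  · have := Real.rpow_pos_of_pos hT α
    positivity
  intro ε hε e he hpos hineq
  set C0 : ℝ := T ^ α / Real.Gamma (α + 1) with hC0def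
  have hC0pos : 0 < C0 := div_pos (Real.rpow_pos_of_pos hT α) hΓ1
  set g : ℝ → ℝ := fun t => e t * Real.exp (-(lam * t)) with hgdef
  have hgcont : ContinuousOn g (Set.Icc 0 T) :=
    he.mul (Continuous.continuousOn (by fun_prop))
  obtain ⟨t₀, ht₀, hmax⟩ :=
    isCompact_Icc.exists_isMaxOn (Set.nonempty_Icc.mpr hT.le) hgcont
  set M : ℝ := g t₀ with hMdef
  have hM0 : 0 ≤ M := mul_nonneg (hpos t₀ ht₀) (Real.exp_pos _).le
  have hgM : ∀ s ∈ Set.Icc (0:ℝ) T, g s ≤ M := fun s hs => hmax hs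
  have hle : ∀ s ∈ Set.Icc (0:ℝ) T, e s ≤ M * Real.exp (lam * s) := by
    intro s hs
    have h1 : g s ≤ M := hgM s hs
    have h2 : e s = g s * Real.exp (lam * s) := by
      rw [hgdef]
      simp only [mul_assoc, ← Real.exp_add]
      norm_num
    rw [h2]
    exact mul_le_mul_of_nonneg_right h1 (Real.exp_pos _).le
  -- main integral estimate
  have hmain : ∀ t ∈ Set.Icc (0:ℝ) T, e t ≤ K * (M * Real.exp (lam * t) * η) + ε * C0 := by
    intro t ht
    obtain ⟨ht0, htT⟩ := ht
    have hI1 : IntervalIntegrable (fun s => (t - s) ^ (α - 1)) volume 0 t := by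
      have := (intervalIntegral.intervalIntegrable_rpow' (a := 0) (b := t) hr).comp_sub_left t
      simpa using this.symm
    have hI2 : IntervalIntegrable (fun s => (t - s) ^ (α - 1) * e s) volume 0 t := by
      apply hI1.mul_continuousOn
      apply he.mono
      rw [Set.uIcc_of_le ht0]
      exact Set.Icc_subset_Icc le_rfl htT
    have hI3 : IntervalIntegrable
        (fun s => (t - s) ^ (α - 1) * (M * Real.exp (lam * s))) volume 0 t :=
      hI1.mul_continuousOn (Continuous.continuousOn (by fun_prop))
    have hptwise : ∀ s ∈ Set.Icc (0:ℝ) t,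
        (t - s) ^ (α - 1) * e s ≤ (t - s) ^ (α - 1) * (M * Real.exp (lam * s)) := by
      intro s hs
      exact mul_le_mul_of_nonneg_left
        (hle s ⟨hs.1, le_trans hs.2 htT⟩)
        (Real.rpow_nonneg (sub_nonneg.mpr hs.2) _)
    have hstep1 : (∫ s in Set.Ioc (0:ℝ) t, (t - s) ^ (α - 1) * e s)
        ≤ ∫ s in (0:ℝ)..t, (t - s) ^ (α - 1) * (M * Real.exp (lam * s)) := by
      rw [← intervalIntegral.integral_of_le ht0]
      exact intervalIntegral.integral_mono_on ht0 hI2 hI3 hptwise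
    have hstep2 : (∫ s in (0:ℝ)..t, (t - s) ^ (α - 1) * (M * Real.exp (lam * s)))
        = M * Real.exp (lam * t)
          * ∫ u in (0:ℝ)..t, u ^ (α - 1) * Real.exp (-(lam * u)) := by
      have heq : ∀ s : ℝ, (t - s) ^ (α - 1) * (M * Real.exp (lam * s))
          = M * Real.exp (lam * t)
            * ((fun u => u ^ (α - 1) * Real.exp (-(lam * u))) (t - s)) := by
        intro s
        simp only []
        rw [show Real.exp (lam * s)
            = Real.exp (lam * t) * Real.exp (-(lam * (t - s))) by
          rw [← Real.exp_add]; congr 1; ring]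
        ring
      simp_rw [heq]
      rw [intervalIntegral.integral_const_mul,
        intervalIntegral.integral_comp_sub_left
          (fun u => u ^ (α - 1) * Real.exp (-(lam * u))) t]
      simp
    have hstep3 : (∫ s in Set.Ioc (0:ℝ) t, (t - s) ^ (α - 1) * e s)
        ≤ M * Real.exp (lam * t) * η := by
      refine le_trans hstep1 ?_
      rw [hstep2]
      exact mul_le_mul_of_nonneg_left (kernel t ⟨ht0, htT⟩)
        (by positivity)
    have h4 := hineq t ⟨ht0, htT⟩
    have h5 : K * (∫ s in Set.Ioc (0:ℝ) t, (t - s) ^ (α - 1) * e s)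
        ≤ K * (M * Real.exp (lam * t) * η) :=
      mul_le_mul_of_nonneg_left hstep3 hK0
    have h6 : ε * T ^ α / Real.Gamma (α + 1) = ε * C0 := by
      rw [hC0def]; ring
    rw [hKdef] at h5 ⊢
    linarith [h4, h6 ▸ h4]
  -- bound M
  have hgbound : ∀ t ∈ Set.Icc (0:ℝ) T, g t ≤ M / 2 + ε * C0 := by
    intro t ht
    have h1 := hmain t ht
    have hEpos : (0:ℝ) < Real.exp (lam * t) := Real.exp_pos _
    have h2 : g t = e t * Real.exp (-(lam * t)) := rfl
    have hE1 : Real.exp (-(lam * t)) ≤ 1 := by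
      rw [Real.exp_le_one_iff]
      have : 0 ≤ lam * t := mul_nonneg hlam0 ht.1
      linarith
    have hEinv : Real.exp (lam * t) * Real.exp (-(lam * t)) = 1 := by
      rw [← Real.exp_add]; norm_num
    have h3 : e t * Real.exp (-(lam * t))
        ≤ (K * (M * Real.exp (lam * t) * η) + ε * C0) * Real.exp (-(lam * t)) :=
      mul_le_mul_of_nonneg_right h1 (Real.exp_pos _).le
    have h4 : (K * (M * Real.exp (lam * t) * η) + ε * C0) * Real.exp (-(lam * t))
        = K * η * M * (Real.exp (lam * t) * Real.exp (-(lam * t)))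
          + ε * C0 * Real.exp (-(lam * t)) := by ring
    rw [h2]
    rw [h4, hEinv] at h3
    have h5 : K * η * M ≤ M / 2 := by
      have := mul_le_mul_of_nonneg_right hKη hM0
      linarith
    have h6 : ε * C0 * Real.exp (-(lam * t)) ≤ ε * C0 := by
      have h0 : 0 ≤ ε * C0 := mul_nonneg hε hC0pos.le
      exact mul_le_of_le_one_right h0 hE1
    rw [mul_one] at h3
    exact le_trans h3 (add_le_add h5 h6)
  have hMbound : M ≤ 2 * ε * C0 := by
    have := hgbound t₀ ht₀
    rw [← hMdef] at this
    linarith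
  -- conclude
  intro t ht
  have h1 := hle t ht
  have h2 : Real.exp (lam * t) ≤ Real.exp (lam * T) :=
    Real.exp_le_exp.mpr (mul_le_mul_of_nonneg_left ht.2 hlam0)
  calc e t ≤ M * Real.exp (lam * t) := h1
    _ ≤ (2 * ε * C0) * Real.exp (lam * T) := by
        have hE : (0:ℝ) ≤ Real.exp (lam * t) := (Real.exp_pos _).le
        have h20 : 0 ≤ 2 * ε * C0 := by positivity
        exact mul_le_mul hMbound h2 hE h20
    _ = 2 * C0 * Real.exp (lam * T) * ε := by ring
end

section
/- Let n ≥ 1, T > 0, τ > 0, α ∈ (0,1], ε ≥ 0, and let φ : [-τ, 0] → ℝⁿ be continuous. Let G : [0,T] × ℝⁿ × ℝⁿ → ℝⁿ be continuous with ‖G(t, u₁, v₁) - G(t, u₂, v₂)‖ ≤ L (‖u₁ - u₂‖ + ‖v₁ - v₂‖) for all arguments. Suppose y : [-τ, T] → ℝⁿ is continuous with y = φ on [-τ, 0], and there is a continuous η : [0, T] → ℝⁿ with ‖η(s)‖ ≤ ε for all s such that y(t) = φ(0) + (1/Γ(α)) ∫₀ᵗ (t-s)^{α-1} [ G(s, y(s),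 y(s-τ)) + η(s) ] ds for all t ∈ [0, T]. Let x : [-τ, T] → ℝⁿ be continuous with x = φ on [-τ, 0] and x(t) = φ(0) + (1/Γ(α)) ∫₀ᵗ (t-s)^{α-1} G(s, x(s), x(s-τ)) ds for all t ∈ [0, T]. Then there exists a constant C > 0, depending only on L, α, τ and T (and not on ε, y, x, η), such that ‖y(t) - x(t)‖ ≤ C ε for all t ∈ [0, T]. -/
open MeasureTheory Set Real

lemma uhs_kerInt {α t : ℝ} (hα : 0 < α) (ht : 0 ≤ t) :
    MeasureTheory.IntegrableOn (fun s => (t - s) ^ (α - 1)) (Set.Ioc 0 t) := by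
  have h := (intervalIntegral.intervalIntegrable_rpow' (r := α - 1) (by linarith)
      (a := 0) (b := t)).comp_sub_left t
  simp only [sub_zero, sub_self] at h
  rw [← intervalIntegrable_iff_integrableOn_Ioc_of_le ht]
  exact h.symm

lemma uhs_kerSmulInt {n : ℕ} {α t T : ℝ} (hα : 0 < α) (ht : 0 ≤ t) (htT : t ≤ T)
    {h : ℝ → EuclideanSpace ℝ (Fin n)} (hh : ContinuousOn h (Set.Icc 0 T)) :
    MeasureTheory.IntegrableOn (fun s => ((t - s) ^ (α - 1)) • h s) (Set.Ioc 0 t) := by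
  obtain ⟨B, hB⟩ := isCompact_Icc.exists_bound_of_continuousOn hh
  refine MeasureTheory.Integrable.mono' ((uhs_kerInt hα ht).mul_const B)
    ((by fun_prop : Measurable fun s : ℝ => (t - s) ^ (α - 1)).aestronglyMeasurable.smul
      ((hh.mono (Set.Ioc_subset_Icc_self.trans (Set.Icc_subset_Icc_right htT))).aestronglyMeasurable
        measurableSet_Ioc)) ?_
  refine Filter.eventually_of_mem (self_mem_ae_restrict measurableSet_Ioc) fun s hs => ?_
  have h1 : (0:ℝ) ≤ (t - s) ^ (α - 1) := Real.rpow_nonneg (by linarith [hs.2]) _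
  have h2 : ‖h s‖ ≤ B := hB s ⟨hs.1.le, hs.2.trans htT⟩
  rw [norm_smul, Real.norm_eq_abs, abs_of_nonneg h1]
  exact mul_le_mul_of_nonneg_left h2 h1

lemma uhs_kerMulInt {α t : ℝ} (lam : ℝ) (hα : 0 < α) (ht : 0 ≤ t) :
    MeasureTheory.IntegrableOn (fun s => (t - s) ^ (α - 1) * Real.exp (lam * s))
      (Set.Ioc 0 t) := by
  refine MeasureTheory.Integrable.mono'
    ((uhs_kerInt hα ht).mul_const (Real.exp (|lam| * t)))
    ((by fun_prop : Measurable fun s : ℝ => (t - s) ^ (α - 1)).aestronglyMeasurable.mul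
      ((Real.continuous_exp.comp (continuous_const.mul continuous_id)).aestronglyMeasurable)) ?_
  refine Filter.eventually_of_mem (self_mem_ae_restrict measurableSet_Ioc) fun s hs => ?_
  have h1 : (0:ℝ) ≤ (t - s) ^ (α - 1) := Real.rpow_nonneg (by linarith [hs.2]) _
  have h2 : Real.exp (lam * s) ≤ Real.exp (|lam| * t) := by
    apply Real.exp_le_exp.2
    calc lam * s ≤ |lam * s| := le_abs_self _
    _ = |lam| * |s| := abs_mul _ _
    _ ≤ |lam| * t := by
        apply mul_le_mul_of_nonneg_left _ (abs_nonneg _)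
        rw [abs_of_pos hs.1]; exact hs.2
  rw [Real.norm_eq_abs, abs_mul, abs_of_nonneg h1, abs_of_pos (Real.exp_pos _)]
  exact mul_le_mul_of_nonneg_left h2 h1

lemma uhs_kerExp {α lam t : ℝ} (hα : 0 < α) (hlam : 0 < lam) (ht : 0 ≤ t) :
    ∫ s in Set.Ioc 0 t, (t - s) ^ (α - 1) * Real.exp (lam * s) ≤
      Real.exp (lam * t) * ((1 / lam) ^ α * Real.Gamma α) := by
  have key : ∫ s in Set.Ioc 0 t, (t - s) ^ (α - 1) * Real.exp (lam * s) =
      Real.exp (lam * t) * ∫ u in Set.Ioc 0 t, u ^ (α - 1) * Real.exp (-(lam * u)) := by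
    rw [← intervalIntegral.integral_of_le ht, ← intervalIntegral.integral_of_le ht]
    have := intervalIntegral.integral_comp_sub_left
      (fun u => u ^ (α - 1) * (Real.exp (lam * t) * Real.exp (-(lam * u)))) t
      (a := 0) (b := t)
    simp only [sub_zero, sub_self] at this
    calc ∫ s in (0:ℝ)..t, (t - s) ^ (α - 1) * Real.exp (lam * s)
        = ∫ s in (0:ℝ)..t, (t - s) ^ (α - 1) *
            (Real.exp (lam * t) * Real.exp (-(lam * (t - s)))) := by
          apply intervalIntegral.integral_congr
          intro s _
          simp only [← Real.exp_add]
          ring_nf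
      _ = ∫ u in (0:ℝ)..t, u ^ (α - 1) * (Real.exp (lam * t) * Real.exp (-(lam * u))) := this
      _ = Real.exp (lam * t) * ∫ u in (0:ℝ)..t, u ^ (α - 1) * Real.exp (-(lam * u)) := by
          rw [← intervalIntegral.integral_const_mul]
          apply intervalIntegral.integral_congr
          intro u _
          ring
  rw [key]
  apply mul_le_mul_of_nonneg_left _ (Real.exp_pos _).le
  have hInt : MeasureTheory.IntegrableOn (fun u : ℝ => u ^ (α - 1) * Real.exp (-(lam * u)))
      (Set.Ioi 0) := by
    have := integrableOn_rpow_mul_exp_neg_mul_rpow (p := 1) (s := α - 1) (b := lam)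
      (by linarith) one_pos hlam
    simpa [Real.rpow_one, neg_mul] using this
  calc ∫ u in Set.Ioc 0 t, u ^ (α - 1) * Real.exp (-(lam * u))
      ≤ ∫ u in Set.Ioi 0, u ^ (α - 1) * Real.exp (-(lam * u)) := by
        apply MeasureTheory.setIntegral_mono_set hInt
        · refine Filter.eventually_of_mem (self_mem_ae_restrict measurableSet_Ioi) fun u hu => ?_
          exact mul_nonneg (Real.rpow_nonneg (le_of_lt hu) _) (Real.exp_pos _).le
        · exact Filter.Eventually.of_forall fun u hu => hu.1
    _ = (1 / lam) ^ α * Real.Gamma α := Real.integral_rpow_mul_exp_neg_mul_Ioi hα hlam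

set_option maxHeartbeats 1000000 in
/-- **Ulam–Hyers stability of the delayed fractional Volterra equation.**
If `y` is an ε-approximate solution (with continuous defect `η`, `‖η‖ ≤ ε`)
of the Volterra form of `ᶜD^α x(t) = G(t, x(t), x(t-τ))` and `x` is an exact
solution with the same history `φ`, then `‖y(t) - x(t)‖ ≤ C ε` on `[0,T]`,
with `C` depending only on `L`, `α`, `τ` and `T`. -/
theorem ulam_hyers_stability_delayed_fractional
    (T τ α L : ℝ) (hT : 0 < T) (hτ : 0 < τ) (hα : α ∈ Set.Ioc (0:ℝ) 1) :
    ∃ C > 0, ∀ (n : ℕ), 1 ≤ n → ∀ ε : ℝ, 0 ≤ ε →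
      ∀ (φ y x η : ℝ → EuclideanSpace ℝ (Fin n))
        (G : ℝ → EuclideanSpace ℝ (Fin n) → EuclideanSpace ℝ (Fin n) →
          EuclideanSpace ℝ (Fin n)),
      ContinuousOn φ (Set.Icc (-τ) (0:ℝ)) →
      ContinuousOn
        (fun p : ℝ × EuclideanSpace ℝ (Fin n) × EuclideanSpace ℝ (Fin n) =>
          G p.1 p.2.1 p.2.2)
        (Set.Icc (0:ℝ) T ×ˢ (Set.univ ×ˢ Set.univ)) →
      (∀ t ∈ Set.Icc (0:ℝ) T, ∀ u₁ v₁ u₂ v₂,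
        ‖G t u₁ v₁ - G t u₂ v₂‖ ≤ L * (‖u₁ - u₂‖ + ‖v₁ - v₂‖)) →
      ContinuousOn y (Set.Icc (-τ) T) →
      (∀ t ∈ Set.Icc (-τ) (0:ℝ), y t = φ t) →
      ContinuousOn η (Set.Icc (0:ℝ) T) →
      (∀ s ∈ Set.Icc (0:ℝ) T, ‖η s‖ ≤ ε) →
      (∀ t ∈ Set.Icc (0:ℝ) T, y t =
        φ 0 + (Real.Gamma α)⁻¹ • ∫ s in Set.Ioc (0:ℝ) t,
          ((t - s) ^ (α - 1)) • (G s (y s) (y (s - τ)) + η s)) →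
      ContinuousOn x (Set.Icc (-τ) T) →
      (∀ t ∈ Set.Icc (-τ) (0:ℝ), x t = φ t) →
      (∀ t ∈ Set.Icc (0:ℝ) T, x t =
        φ 0 + (Real.Gamma α)⁻¹ • ∫ s in Set.Ioc (0:ℝ) t,
          ((t - s) ^ (α - 1)) • G s (x s) (x (s - τ))) →
      ∀ t ∈ Set.Icc (0:ℝ) T, ‖y t - x t‖ ≤ C * ε := by
  obtain ⟨hα0, hα1⟩ := hα
  set L' : ℝ := max L 1 with hL'def
  have hL'1 : (1:ℝ) ≤ L' := le_max_right _ _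
  have hLL' : L ≤ L' := le_max_left _ _
  have hL'0 : (0:ℝ) < L' := lt_of_lt_of_le one_pos hL'1
  set lam : ℝ := (4 * L') ^ (α⁻¹) with hlamdef
  have hlam : 0 < lam := Real.rpow_pos_of_pos (by linarith) _
  have hlamα : lam ^ α = 4 * L' := by
    rw [hlamdef, ← Real.rpow_mul (by linarith), inv_mul_cancel₀ hα0.ne', Real.rpow_one]
  have hlamnegα : lam ^ (-α) = (4 * L')⁻¹ := by
    rw [Real.rpow_neg hlam.le, hlamα]
  have hP : (0:ℝ) < (4 * L')⁻¹ := by positivity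
  refine ⟨2 * lam ^ (-α) * Real.exp (lam * T) + 1, ?_, ?_⟩
  · rw [hlamnegα]; positivity
  intro n hn ε hε φ y x η G hφc hGc hGlip hyc hyφ hηc hηε hyint hxc hxφ hxint
  have hΓ : 0 < Real.Gamma α := Real.Gamma_pos_of_pos hα0
  have hsub : Set.Icc (0:ℝ) T ⊆ Set.Icc (-τ) T := Set.Icc_subset_Icc (by linarith) le_rfl
  have hyc' : ContinuousOn y (Set.Icc (0:ℝ) T) := hyc.mono hsub
  have hxc' : ContinuousOn x (Set.Icc (0:ℝ) T) := hxc.mono hsub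
  -- the weighted sup
  have hδc : ContinuousOn (fun s => ‖y s - x s‖ * Real.exp (-(lam * s))) (Set.Icc (0:ℝ) T) :=
    (hyc'.sub hxc').norm.mul (Continuous.continuousOn (by fun_prop))
  set M : ℝ := sSup ((fun s => ‖y s - x s‖ * Real.exp (-(lam * s))) '' Set.Icc 0 T) with hMdef
  have h0T : (0:ℝ) ∈ Set.Icc (0:ℝ) T := ⟨le_rfl, hT.le⟩
  have hMbdd : BddAbove ((fun s => ‖y s - x s‖ * Real.exp (-(lam * s))) '' Set.Icc 0 T) :=
    (isCompact_Icc.image_of_continuousOn hδc).bddAbove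
  have hMne : ((fun s => ‖y s - x s‖ * Real.exp (-(lam * s))) '' Set.Icc 0 T).Nonempty :=
    ⟨_, ⟨0, h0T, rfl⟩⟩
  have hMle : ∀ s ∈ Set.Icc (0:ℝ) T, ‖y s - x s‖ * Real.exp (-(lam * s)) ≤ M :=
    fun s hs => le_csSup hMbdd ⟨s, hs, rfl⟩
  have hM0 : 0 ≤ M :=
    le_trans (mul_nonneg (norm_nonneg _) (Real.exp_pos _).le) (hMle 0 h0T)
  have hA : (0:ℝ) ≤ 2 * L' * M + ε := by positivity
  have hunwt : ∀ u a : ℝ, a * Real.exp (-(lam * u)) ≤ M → a ≤ M * Real.exp (lam * u) := by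
    intro u a h
    have e1 : Real.exp (-(lam * u)) * Real.exp (lam * u) = 1 := by
      rw [← Real.exp_add]; simp
    have h2 := mul_le_mul_of_nonneg_right h (Real.exp_pos (lam * u)).le
    rwa [mul_assoc, e1, mul_one] at h2
  have hhist : ∀ s ∈ Set.Ioc (0:ℝ) T, ‖y (s - τ) - x (s - τ)‖ ≤ M * Real.exp (lam * s) := by
    intro s hs
    by_cases hsτ : s ≤ τ
    · have hmem : s - τ ∈ Set.Icc (-τ) (0:ℝ) := ⟨by linarith [hs.1], by linarith⟩
      rw [hyφ _ hmem, hxφ _ hmem, sub_self, norm_zero]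
      exact mul_nonneg hM0 (Real.exp_pos _).le
    · push_neg at hsτ
      have hmem : s - τ ∈ Set.Icc (0:ℝ) T := ⟨by linarith, by linarith [hs.2]⟩
      have h1 : ‖y (s - τ) - x (s - τ)‖ ≤ M * Real.exp (lam * (s - τ)) :=
        hunwt _ _ (hMle _ hmem)
      refine h1.trans (mul_le_mul_of_nonneg_left (Real.exp_le_exp.2 ?_) hM0)
      nlinarith [hlam.le]
  -- continuity of the composed integrands
  have hyshift : ContinuousOn (fun s => y (s - τ)) (Set.Icc (0:ℝ) T) := by
    apply hyc.comp (Continuous.continuousOn (by fun_prop))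
    intro s hs
    exact ⟨by simp only; linarith [hs.1], by simp only; linarith [hs.2]⟩
  have hxshift : ContinuousOn (fun s => x (s - τ)) (Set.Icc (0:ℝ) T) := by
    apply hxc.comp (Continuous.continuousOn (by fun_prop))
    intro s hs
    exact ⟨by simp only; linarith [hs.1], by simp only; linarith [hs.2]⟩
  have hGy : ContinuousOn (fun s => G s (y s) (y (s - τ))) (Set.Icc (0:ℝ) T) := by
    apply hGc.comp (continuousOn_id.prodMk (hyc'.prodMk hyshift))
    intro s hs
    exact ⟨hs, ⟨trivial, trivial⟩⟩
  have hGx : ContinuousOn (fun s => G s (x s) (x (s - τ))) (Set.Icc (0:ℝ) T) := by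
    apply hGc.comp (continuousOn_id.prodMk (hxc'.prodMk hxshift))
    intro s hs
    exact ⟨hs, ⟨trivial, trivial⟩⟩
  -- key pointwise estimate
  have key : ∀ t ∈ Set.Icc (0:ℝ) T,
      ‖y t - x t‖ ≤ (2 * L' * M + ε) * (4 * L')⁻¹ * Real.exp (lam * t) := by
    intro t ht
    obtain ⟨ht0, htT⟩ := ht
    have hF₁ : MeasureTheory.IntegrableOn
        (fun s => ((t - s) ^ (α - 1)) • (G s (y s) (y (s - τ)) + η s)) (Set.Ioc 0 t) :=
      uhs_kerSmulInt hα0 ht0 htT (hGy.add hηc)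
    have hF₂ : MeasureTheory.IntegrableOn
        (fun s => ((t - s) ^ (α - 1)) • G s (x s) (x (s - τ))) (Set.Ioc 0 t) :=
      uhs_kerSmulInt hα0 ht0 htT hGx
    have hdiff : y t - x t = (Real.Gamma α)⁻¹ •
        ((∫ s in Set.Ioc (0:ℝ) t, ((t - s) ^ (α - 1)) • (G s (y s) (y (s - τ)) + η s)) -
         ∫ s in Set.Ioc (0:ℝ) t, ((t - s) ^ (α - 1)) • G s (x s) (x (s - τ))) := by
      rw [hyint t ⟨ht0, htT⟩, hxint t ⟨ht0, htT⟩, smul_sub]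
      abel
    have hnorm : ‖∫ s in Set.Ioc (0:ℝ) t,
        (((t - s) ^ (α - 1)) • (G s (y s) (y (s - τ)) + η s) -
         ((t - s) ^ (α - 1)) • G s (x s) (x (s - τ)))‖ ≤
        (2 * L' * M + ε) * ∫ s in Set.Ioc (0:ℝ) t, (t - s) ^ (α - 1) * Real.exp (lam * s) := by
      refine le_trans (MeasureTheory.norm_integral_le_integral_norm _) ?_
      rw [← MeasureTheory.integral_const_mul]
      apply MeasureTheory.setIntegral_mono_on ((hF₁.sub hF₂).norm)
        ((uhs_kerMulInt lam hα0 ht0).const_mul _) measurableSet_Ioc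
      intro s hs
      have hk : (0:ℝ) ≤ (t - s) ^ (α - 1) := Real.rpow_nonneg (by linarith [hs.2]) _
      have hsT : s ∈ Set.Icc (0:ℝ) T := ⟨hs.1.le, hs.2.trans htT⟩
      have hsTo : s ∈ Set.Ioc (0:ℝ) T := ⟨hs.1, hs.2.trans htT⟩
      simp only [Pi.sub_apply]
      rw [← smul_sub, norm_smul, Real.norm_eq_abs, abs_of_nonneg hk]
      have hGd : ‖(G s (y s) (y (s - τ)) + η s) - G s (x s) (x (s - τ))‖ ≤
          L' * (‖y s - x s‖ + ‖y (s - τ) - x (s - τ)‖) + ε := by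
        calc ‖(G s (y s) (y (s - τ)) + η s) - G s (x s) (x (s - τ))‖
            = ‖(G s (y s) (y (s - τ)) - G s (x s) (x (s - τ))) + η s‖ := by
              rw [add_sub_right_comm]
          _ ≤ ‖G s (y s) (y (s - τ)) - G s (x s) (x (s - τ))‖ + ‖η s‖ := norm_add_le _ _
          _ ≤ L * (‖y s - x s‖ + ‖y (s - τ) - x (s - τ)‖) + ε :=
              add_le_add (hGlip s hsT _ _ _ _) (hηε s hsT)
          _ ≤ L' * (‖y s - x s‖ + ‖y (s - τ) - x (s - τ)‖) + ε := by
              have : (0:ℝ) ≤ ‖y s - x s‖ + ‖y (s - τ) - x (s - τ)‖ := by positivity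
              nlinarith
      have hys : ‖y s - x s‖ ≤ M * Real.exp (lam * s) := hunwt _ _ (hMle s hsT)
      have hyτ : ‖y (s - τ) - x (s - τ)‖ ≤ M * Real.exp (lam * s) := hhist s hsTo
      have hexp1 : (1:ℝ) ≤ Real.exp (lam * s) :=
        Real.one_le_exp (mul_nonneg hlam.le hs.1.le)
      calc (t - s) ^ (α - 1) * ‖(G s (y s) (y (s - τ)) + η s) - G s (x s) (x (s - τ))‖
          ≤ (t - s) ^ (α - 1) *
              (L' * (M * Real.exp (lam * s) + M * Real.exp (lam * s)) + ε) := by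
            apply mul_le_mul_of_nonneg_left _ hk
            refine hGd.trans (add_le_add_left ?_ ε)
            exact mul_le_mul_of_nonneg_left (add_le_add hys hyτ) hL'0.le
        _ ≤ (2 * L' * M + ε) * ((t - s) ^ (α - 1) * Real.exp (lam * s)) := by
            nlinarith [mul_nonneg (mul_nonneg hε hk) (sub_nonneg.2 hexp1),
              mul_nonneg hk (Real.exp_pos (lam * s)).le]
    have hker := uhs_kerExp hα0 hlam ht0
    calc ‖y t - x t‖
        = (Real.Gamma α)⁻¹ * ‖∫ s in Set.Ioc (0:ℝ) t,
            (((t - s) ^ (α - 1)) • (G s (y s) (y (s - τ)) + η s) -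
             ((t - s) ^ (α - 1)) • G s (x s) (x (s - τ)))‖ := by
          rw [hdiff, norm_smul, Real.norm_eq_abs, abs_of_nonneg (inv_nonneg.2 hΓ.le),
            MeasureTheory.integral_sub hF₁ hF₂]
      _ ≤ (Real.Gamma α)⁻¹ * ((2 * L' * M + ε) *
            ∫ s in Set.Ioc (0:ℝ) t, (t - s) ^ (α - 1) * Real.exp (lam * s)) :=
          mul_le_mul_of_nonneg_left hnorm (inv_nonneg.2 hΓ.le)
      _ ≤ (Real.Gamma α)⁻¹ * ((2 * L' * M + ε) *
            (Real.exp (lam * t) * ((1 / lam) ^ α * Real.Gamma α))) := by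
          apply mul_le_mul_of_nonneg_left _ (inv_nonneg.2 hΓ.le)
          exact mul_le_mul_of_nonneg_left hker hA
      _ = (2 * L' * M + ε) * (4 * L')⁻¹ * Real.exp (lam * t) := by
          rw [one_div, Real.inv_rpow hlam.le, hlamα]
          field_simp
  -- conclude : M is small
  have hMfinal : M ≤ 2 * (4 * L')⁻¹ * ε := by
    have hsup : M ≤ (2 * L' * M + ε) * (4 * L')⁻¹ := by
      apply csSup_le hMne
      rintro _ ⟨s, hs, rfl⟩
      have h := mul_le_mul_of_nonneg_right (key s hs) (Real.exp_pos (-(lam * s))).le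
      have e1 : Real.exp (lam * s) * Real.exp (-(lam * s)) = 1 := by
        rw [← Real.exp_add]; simp
      calc ‖y s - x s‖ * Real.exp (-(lam * s))
          ≤ (2 * L' * M + ε) * (4 * L')⁻¹ * Real.exp (lam * s) * Real.exp (-(lam * s)) := h
        _ = (2 * L' * M + ε) * (4 * L')⁻¹ := by rw [mul_assoc, e1, mul_one]
    have h44 : (4 * L')⁻¹ * (4 * L') = 1 := inv_mul_cancel₀ (by positivity)
    nlinarith [hsup, h44, hP, hε, hL'0]
  -- final bound
  intro t ht
  rw [hlamnegα]
  have hexpT : Real.exp (lam * t) ≤ Real.exp (lam * T) :=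
    Real.exp_le_exp.2 (mul_le_mul_of_nonneg_left ht.2 hlam.le)
  have hAP : (2 * L' * M + ε) * (4 * L')⁻¹ ≤ 2 * (4 * L')⁻¹ * ε := by
    have h44 : (4 * L')⁻¹ * (4 * L') = 1 := inv_mul_cancel₀ (by positivity)
    nlinarith [hMfinal, hP, hε, hL'0]
  calc ‖y t - x t‖
      ≤ (2 * L' * M + ε) * (4 * L')⁻¹ * Real.exp (lam * t) := key t ht
    _ ≤ (2 * L' * M + ε) * (4 * L')⁻¹ * Real.exp (lam * T) := by
        apply mul_le_mul_of_nonneg_left hexpT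
        positivity
    _ ≤ 2 * (4 * L')⁻¹ * ε * Real.exp (lam * T) :=
        mul_le_mul_of_nonneg_right hAP (Real.exp_pos _).le
    _ ≤ (2 * (4 * L')⁻¹ * Real.exp (lam * T) + 1) * ε := by nlinarith [Real.exp_pos (lam * T)]
end

section
/- Let n ≥ 1, T > 0, τ > 0, α ∈ (0,1], and let G : [0,T] × ℝⁿ × ℝⁿ → ℝⁿ be continuous with ‖G(t, u₁, v₁) - G(t, u₂, v₂)‖ ≤ L (‖u₁ - u₂‖ + ‖v₁ - v₂‖) for all arguments. For i = 1, 2, let φᵢ : [-τ, 0] → ℝⁿ be continuous and let xᵢ : [-τ, T] → ℝⁿ be continuous with xᵢ = φᵢ on [-τ, 0] and xᵢ(t) = φᵢ(0) + (1/Γ(α)) ∫₀ᵗ (t-s)^{α-1} G(s, xᵢ(s), xᵢ(s-τ)) ds for all t ∈ [0, T]. Then there exists a constant M > 0, depending only on L, α, τ and T, such that sup_{t ∈ [0,T]} ‖x₁(t) - x₂(t)‖ ≤ M · sup_{θ ∈ [-τ,0]} ‖φ₁(θ) - φ₂(θ)‖. -/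
open MeasureTheory Set Real

lemma aux_rpow_int {a t : ℝ} (ha : 0 < a) (h0 : 0 ≤ t) :
    IntegrableOn (fun s : ℝ => (t - s) ^ (a - 1)) (Set.Ioc 0 t) := by
  have h1 : IntervalIntegrable (fun u : ℝ => u ^ (a - 1)) volume 0 t :=
    intervalIntegral.intervalIntegrable_rpow' (by linarith)
  have h2 := h1.comp_sub_left t
  simp only [sub_zero, sub_self] at h2
  exact (intervalIntegrable_iff_integrableOn_Ioc_of_le h0).mp h2.symm

lemma aux_integrable {E : Type*} [NormedAddCommGroup E] [NormedSpace ℝ E]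
    {a t T : ℝ} (ha : 0 < a) (h0 : 0 ≤ t) (hT : t ≤ T) {g : ℝ → E}
    (hg : ContinuousOn g (Set.Icc 0 T)) :
    IntegrableOn (fun s => ((t - s) ^ (a - 1) : ℝ) • g s) (Set.Ioc 0 t) := by
  obtain ⟨B, hB⟩ := IsCompact.exists_bound_of_continuousOn isCompact_Icc hg
  have hsub : Set.Ioc (0:ℝ) t ⊆ Set.Icc 0 T := fun s hs => ⟨hs.1.le, hs.2.trans hT⟩
  have hmeas : AEStronglyMeasurable (fun s => ((t - s) ^ (a - 1) : ℝ) • g s)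
      (volume.restrict (Set.Ioc 0 t)) := by
    apply AEStronglyMeasurable.smul
    · apply Measurable.aestronglyMeasurable; fun_prop
    · exact (hg.mono hsub).aestronglyMeasurable measurableSet_Ioc
  apply Integrable.mono' ((aux_rpow_int ha h0).norm.const_mul B) hmeas
  filter_upwards [ae_restrict_mem measurableSet_Ioc] with s hs
  rw [norm_smul]
  calc ‖((t - s) ^ (a - 1) : ℝ)‖ * ‖g s‖ ≤ ‖((t - s) ^ (a - 1) : ℝ)‖ * B :=
        mul_le_mul_of_nonneg_left (hB s (hsub hs)) (norm_nonneg _)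
    _ = B * ‖((t - s) ^ (a - 1) : ℝ)‖ := mul_comm _ _

lemma aux_J1 {a t : ℝ} (ha : 0 < a) (h0 : 0 ≤ t) :
    ∫ s in Set.Ioc (0:ℝ) t, (t - s) ^ (a - 1) = t ^ a / a := by
  rw [← intervalIntegral.integral_of_le h0,
    intervalIntegral.integral_comp_sub_left (fun u : ℝ => u ^ (a - 1)) t]
  simp only [sub_zero, sub_self]
  rw [integral_rpow (Or.inl (by linarith))]
  rw [sub_add_cancel, Real.zero_rpow ha.ne']
  ring

lemma aux_J2 {a t lam : ℝ} (ha : 0 < a) (h0 : 0 ≤ t) (hlam : 0 < lam) :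
    ∫ s in Set.Ioc (0:ℝ) t, (t - s) ^ (a - 1) * Real.exp (lam * s) ≤
      Real.exp (lam * t) * ((1 / lam) ^ a * Real.Gamma a) := by
  have hint : IntegrableOn (fun u : ℝ => u ^ (a - 1) * Real.exp (-(lam * u))) (Set.Ioi 0) := by
    have := integrableOn_rpow_mul_exp_neg_mul_rpow (p := 1) (s := a - 1) (b := lam)
      (by linarith) one_pos hlam
    refine this.congr_fun (fun x hx => ?_) measurableSet_Ioi
    beta_reduce
    rw [Real.rpow_one, neg_mul]
  have key : ∫ s in Set.Ioc (0:ℝ) t, (t - s) ^ (a - 1) * Real.exp (lam * s)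
      = Real.exp (lam * t) * ∫ u in Set.Ioc (0:ℝ) t, u ^ (a - 1) * Real.exp (-(lam * u)) := by
    rw [← intervalIntegral.integral_of_le h0,
      intervalIntegral.integral_congr
        (g := fun x => (fun u : ℝ => u ^ (a - 1) * Real.exp (lam * (t - u))) (t - x))
        (fun x _ => by simp [sub_sub_cancel]),
      intervalIntegral.integral_comp_sub_left
        (fun u : ℝ => u ^ (a - 1) * Real.exp (lam * (t - u))) t]
    simp only [sub_zero, sub_self]
    rw [intervalIntegral.integral_of_le h0, ← MeasureTheory.integral_const_mul]
    refine setIntegral_congr_fun measurableSet_Ioc (fun u _ => ?_)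
    rw [show lam * (t - u) = lam * t + -(lam * u) by ring, Real.exp_add]
    ring
  rw [key, ← Real.integral_rpow_mul_exp_neg_mul_Ioi ha hlam]
  apply mul_le_mul_of_nonneg_left _ (Real.exp_nonneg _)
  apply setIntegral_mono_set hint
  · filter_upwards [ae_restrict_mem measurableSet_Ioi] with u hu
    exact mul_nonneg (Real.rpow_nonneg (le_of_lt hu) _) (Real.exp_nonneg _)
  · exact HasSubset.Subset.eventuallyLE Ioc_subset_Ioi_self

/-- **Continuous (Lipschitz) dependence on the initial history.**
If `x₁, x₂` solve the delayed fractional Volterra equation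
`xᵢ(t) = φᵢ(0) + (1/Γ(α)) ∫₀ᵗ (t-s)^(α-1) G(s, xᵢ(s), xᵢ(s-τ)) ds` with
histories `φ₁, φ₂`, then
`sup_{[0,T]} ‖x₁ - x₂‖ ≤ M · sup_{[-τ,0]} ‖φ₁ - φ₂‖` with `M` depending only
on `L`, `α`, `τ` and `T`. -/
theorem continuous_dependence_on_history
    (T τ α L : ℝ) (hT : 0 < T) (hτ : 0 < τ) (hα : α ∈ Set.Ioc (0:ℝ) 1) :
    ∃ M > 0, ∀ (n : ℕ), 1 ≤ n →
      ∀ (G : ℝ → EuclideanSpace ℝ (Fin n) → EuclideanSpace ℝ (Fin n) →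
          EuclideanSpace ℝ (Fin n)),
      ContinuousOn
        (fun p : ℝ × EuclideanSpace ℝ (Fin n) × EuclideanSpace ℝ (Fin n) =>
          G p.1 p.2.1 p.2.2)
        (Set.Icc (0:ℝ) T ×ˢ (Set.univ ×ˢ Set.univ)) →
      (∀ t ∈ Set.Icc (0:ℝ) T, ∀ u₁ v₁ u₂ v₂,
        ‖G t u₁ v₁ - G t u₂ v₂‖ ≤ L * (‖u₁ - u₂‖ + ‖v₁ - v₂‖)) →
      ∀ (φ₁ φ₂ x₁ x₂ : ℝ → EuclideanSpace ℝ (Fin n)),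
      ContinuousOn φ₁ (Set.Icc (-τ) (0:ℝ)) →
      ContinuousOn φ₂ (Set.Icc (-τ) (0:ℝ)) →
      ContinuousOn x₁ (Set.Icc (-τ) T) → ContinuousOn x₂ (Set.Icc (-τ) T) →
      (∀ t ∈ Set.Icc (-τ) (0:ℝ), x₁ t = φ₁ t) →
      (∀ t ∈ Set.Icc (-τ) (0:ℝ), x₂ t = φ₂ t) →
      (∀ t ∈ Set.Icc (0:ℝ) T, x₁ t =
        φ₁ 0 + (Real.Gamma α)⁻¹ • ∫ s in Set.Ioc (0:ℝ) t,
          ((t - s) ^ (α - 1)) • G s (x₁ s) (x₁ (s - τ))) →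
      (∀ t ∈ Set.Icc (0:ℝ) T, x₂ t =
        φ₂ 0 + (Real.Gamma α)⁻¹ • ∫ s in Set.Ioc (0:ℝ) t,
          ((t - s) ^ (α - 1)) • G s (x₂ s) (x₂ (s - τ))) →
      (⨆ t : Set.Icc (0:ℝ) T, ‖x₁ t - x₂ t‖) ≤
        M * ⨆ θ : Set.Icc (-τ) (0:ℝ), ‖φ₁ θ - φ₂ θ‖ := by
  obtain ⟨hα0, hα1⟩ := hα
  set L' : ℝ := max L 0 with hL'def
  have hL' : 0 ≤ L' := le_max_right L 0
  have hΓ : 0 < Real.Gamma α := Real.Gamma_pos_of_pos hα0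
  set lam : ℝ := (8 * (L' + 1)) ^ (α⁻¹) with hlamdef
  have hlam : 0 < lam := Real.rpow_pos_of_pos (by linarith) _
  have hlampow : lam ^ α = 8 * (L' + 1) := by
    rw [hlamdef, ← Real.rpow_mul (by linarith), inv_mul_cancel₀ hα0.ne', Real.rpow_one]
  set Q : ℝ := 2 * L' * (1 / lam) ^ α with hQdef
  have hQ0 : 0 ≤ Q := by positivity
  have hQ : Q ≤ 1 / 4 := by
    rw [hQdef, div_rpow zero_le_one hlam.le, Real.one_rpow, hlampow, mul_one_div,
      div_le_div_iff₀ (by linarith) (by norm_num)]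
    linarith
  set C : ℝ := (Real.Gamma α)⁻¹ * (L' * (T ^ α / α)) with hCdef
  have hC : 0 ≤ C := by positivity
  have hM : 0 < 4 / 3 * (1 + C) * Real.exp (lam * T) :=
    mul_pos (by linarith) (Real.exp_pos _)
  refine ⟨4 / 3 * (1 + C) * Real.exp (lam * T), hM, ?_⟩
  intro n hn G hGc hGL φ₁ φ₂ x₁ x₂ hφ₁ hφ₂ hx₁ hx₂ hist₁ hist₂ heq₁ heq₂
  have hτ0 : (-τ : ℝ) ≤ 0 := by linarith
  -- δ : sup of history difference
  set δ : ℝ := sSup ((fun θ => ‖φ₁ θ - φ₂ θ‖) '' Set.Icc (-τ) 0) with hδdef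
  have hδeq : sSup ((fun θ => ‖φ₁ θ - φ₂ θ‖) '' Set.Icc (-τ) 0)
      = ⨆ θ : Set.Icc (-τ) (0:ℝ), ‖φ₁ θ - φ₂ θ‖ := by
    rw [Set.image_eq_range, sSup_range]
  have hbddδ : BddAbove ((fun θ => ‖φ₁ θ - φ₂ θ‖) '' Set.Icc (-τ) 0) :=
    (isCompact_Icc.image_of_continuousOn (hφ₁.sub hφ₂).norm).bddAbove
  have hδ : ∀ θ ∈ Set.Icc (-τ) (0:ℝ), ‖φ₁ θ - φ₂ θ‖ ≤ δ :=
    fun θ hθ => le_csSup hbddδ ⟨θ, hθ, rfl⟩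
  have hδ0 : 0 ≤ δ := le_trans (norm_nonneg _) (hδ 0 ⟨hτ0, le_refl 0⟩)
  have hIccsub : Set.Icc (0:ℝ) T ⊆ Set.Icc (-τ) T := Set.Icc_subset_Icc_left (by linarith)
  have hf0 : ∀ s ∈ Set.Icc (-τ) (0:ℝ), ‖x₁ s - x₂ s‖ ≤ δ := by
    intro s hs; rw [hist₁ s hs, hist₂ s hs]; exact hδ s hs
  -- K : weighted sup on [0, T]
  set K : ℝ := sSup ((fun t => Real.exp (-(lam * t)) * ‖x₁ t - x₂ t‖) '' Set.Icc 0 T)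
    with hKdef
  have h0T : (0:ℝ) ∈ Set.Icc (0:ℝ) T := ⟨le_refl 0, hT.le⟩
  have hKbdd : BddAbove ((fun t => Real.exp (-(lam * t)) * ‖x₁ t - x₂ t‖) '' Set.Icc 0 T) := by
    refine (isCompact_Icc.image_of_continuousOn ?_).bddAbove
    exact (Real.continuous_exp.comp ((continuous_const.mul continuous_id).neg)).continuousOn.mul
      ((hx₁.sub hx₂).norm.mono hIccsub)
  have hKub : ∀ t ∈ Set.Icc (0:ℝ) T, Real.exp (-(lam * t)) * ‖x₁ t - x₂ t‖ ≤ K :=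
    fun t ht => le_csSup hKbdd ⟨t, ht, rfl⟩
  have hK0 : 0 ≤ K :=
    le_trans (by positivity) (hKub 0 h0T)
  have hfK : ∀ t ∈ Set.Icc (0:ℝ) T, ‖x₁ t - x₂ t‖ ≤ Real.exp (lam * t) * K := by
    intro t ht
    have h1 := hKub t ht
    have hee : Real.exp (lam * t) * Real.exp (-(lam * t)) = 1 := by
      rw [← Real.exp_add]; simp
    calc ‖x₁ t - x₂ t‖ = Real.exp (lam * t) * (Real.exp (-(lam * t)) * ‖x₁ t - x₂ t‖) := by
          rw [← mul_assoc, hee, one_mul]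
      _ ≤ Real.exp (lam * t) * K := mul_le_mul_of_nonneg_left h1 (Real.exp_nonneg _)
  -- continuity of the composed right-hand sides
  have hc : ∀ (x : ℝ → EuclideanSpace ℝ (Fin n)), ContinuousOn x (Set.Icc (-τ) T) →
      ContinuousOn (fun s => G s (x s) (x (s - τ))) (Set.Icc 0 T) := by
    intro x hx
    have hmem : Set.MapsTo (fun s : ℝ => s - τ) (Set.Icc 0 T) (Set.Icc (-τ) T) :=
      fun s hs => ⟨by show -τ ≤ s - τ; linarith [hs.1], by show s - τ ≤ T; linarith [hs.2]⟩
    exact hGc.comp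
      (continuousOn_id.prodMk ((hx.mono hIccsub).prodMk
        (hx.comp (continuousOn_id.sub continuousOn_const) hmem)))
      (fun s hs => ⟨hs, Set.mem_univ _, Set.mem_univ _⟩)
  have hc₁ := hc x₁ hx₁
  have hc₂ := hc x₂ hx₂
  -- main estimate
  have main : ∀ t ∈ Set.Icc (0:ℝ) T,
      Real.exp (-(lam * t)) * ‖x₁ t - x₂ t‖ ≤ (1 + C) * δ + 1 / 4 * K := by
    intro t ht
    obtain ⟨h0t, htT⟩ := ht
    have hI₁ : IntegrableOn
        (fun s => ((t - s) ^ (α - 1) : ℝ) • G s (x₁ s) (x₁ (s - τ))) (Set.Ioc 0 t) :=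
      aux_integrable hα0 h0t htT hc₁
    have hI₂ : IntegrableOn
        (fun s => ((t - s) ^ (α - 1) : ℝ) • G s (x₂ s) (x₂ (s - τ))) (Set.Ioc 0 t) :=
      aux_integrable hα0 h0t htT hc₂
    have hsplit : (∫ s in Set.Ioc (0:ℝ) t, ((t - s) ^ (α - 1) : ℝ) •
          (G s (x₁ s) (x₁ (s - τ)) - G s (x₂ s) (x₂ (s - τ))))
        = (∫ s in Set.Ioc (0:ℝ) t, ((t - s) ^ (α - 1) : ℝ) • G s (x₁ s) (x₁ (s - τ)))
          - ∫ s in Set.Ioc (0:ℝ) t, ((t - s) ^ (α - 1) : ℝ) • G s (x₂ s) (x₂ (s - τ)) := by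
      simp only [smul_sub]
      exact integral_sub hI₁ hI₂
    have hsub : x₁ t - x₂ t = (φ₁ 0 - φ₂ 0) + (Real.Gamma α)⁻¹ •
        ∫ s in Set.Ioc (0:ℝ) t, ((t - s) ^ (α - 1) : ℝ) •
          (G s (x₁ s) (x₁ (s - τ)) - G s (x₂ s) (x₂ (s - τ))) := by
      rw [heq₁ t ⟨h0t, htT⟩, heq₂ t ⟨h0t, htT⟩, hsplit, smul_sub]
      abel
    -- integrability of the scalar bound
    have hIe : IntegrableOn (fun s => (t - s) ^ (α - 1) * Real.exp (lam * s))
        (Set.Ioc 0 t) := by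
      have := aux_integrable (E := ℝ) hα0 h0t htT
        (g := fun s => Real.exp (lam * s))
        ((Real.continuous_exp.comp (continuous_const.mul continuous_id)).continuousOn)
      simpa [smul_eq_mul] using this
    have hIb : IntegrableOn
        (fun s => (t - s) ^ (α - 1) * (L' * (δ + 2 * (Real.exp (lam * s) * K))))
        (Set.Ioc 0 t) := by
      have := aux_integrable (E := ℝ) hα0 h0t htT
        (g := fun s => L' * (δ + 2 * (Real.exp (lam * s) * K)))
        (by fun_prop)
      simpa [smul_eq_mul] using this
    -- pointwise bound and integral norm bound
    have hnorm : ‖∫ s in Set.Ioc (0:ℝ) t, ((t - s) ^ (α - 1) : ℝ) •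
          (G s (x₁ s) (x₁ (s - τ)) - G s (x₂ s) (x₂ (s - τ)))‖
        ≤ ∫ s in Set.Ioc (0:ℝ) t,
            (t - s) ^ (α - 1) * (L' * (δ + 2 * (Real.exp (lam * s) * K))) := by
      apply norm_integral_le_of_norm_le hIb
      filter_upwards [ae_restrict_mem measurableSet_Ioc] with s hs
      have hsIcc : s ∈ Set.Icc (0:ℝ) T := ⟨hs.1.le, hs.2.trans htT⟩
      have hrp : (0:ℝ) ≤ (t - s) ^ (α - 1) := Real.rpow_nonneg (by linarith [hs.2]) _
      have h1 : ‖G s (x₁ s) (x₁ (s - τ)) - G s (x₂ s) (x₂ (s - τ))‖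
          ≤ L' * (δ + 2 * (Real.exp (lam * s) * K)) := by
        have hLip := hGL s hsIcc (x₁ s) (x₁ (s - τ)) (x₂ s) (x₂ (s - τ))
        have hfs : ‖x₁ s - x₂ s‖ ≤ Real.exp (lam * s) * K := hfK s hsIcc
        have hfsτ : ‖x₁ (s - τ) - x₂ (s - τ)‖ ≤ δ + Real.exp (lam * s) * K := by
          rcases le_or_gt (s - τ) 0 with h | h
          · have h2 := hf0 (s - τ) ⟨by linarith [hs.1], h⟩
            have h3 : 0 ≤ Real.exp (lam * s) * K :=
              mul_nonneg (Real.exp_nonneg _) hK0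
            linarith
          · have h2 := hfK (s - τ) ⟨h.le, by linarith [hsIcc.2]⟩
            have h3 : Real.exp (lam * (s - τ)) ≤ Real.exp (lam * s) :=
              Real.exp_le_exp.mpr (by nlinarith)
            have h4 : Real.exp (lam * (s - τ)) * K ≤ Real.exp (lam * s) * K :=
              mul_le_mul_of_nonneg_right h3 hK0
            linarith
        have hsum0 : 0 ≤ ‖x₁ s - x₂ s‖ + ‖x₁ (s - τ) - x₂ (s - τ)‖ := by positivity
        calc ‖G s (x₁ s) (x₁ (s - τ)) - G s (x₂ s) (x₂ (s - τ))‖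
            ≤ L * (‖x₁ s - x₂ s‖ + ‖x₁ (s - τ) - x₂ (s - τ)‖) := hLip
          _ ≤ L' * (‖x₁ s - x₂ s‖ + ‖x₁ (s - τ) - x₂ (s - τ)‖) :=
              mul_le_mul_of_nonneg_right (le_max_left L 0) hsum0
          _ ≤ L' * (δ + 2 * (Real.exp (lam * s) * K)) := by
              apply mul_le_mul_of_nonneg_left _ hL'
              linarith
      rw [norm_smul, Real.norm_eq_abs, abs_of_nonneg hrp]
      exact mul_le_mul_of_nonneg_left h1 hrp
    -- evaluate/bound the scalar integral
    have hintval : (∫ s in Set.Ioc (0:ℝ) t,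
          (t - s) ^ (α - 1) * (L' * (δ + 2 * (Real.exp (lam * s) * K))))
        ≤ L' * δ * (T ^ α / α)
          + 2 * L' * K * (Real.exp (lam * t) * ((1 / lam) ^ α * Real.Gamma α)) := by
      have hsplit2 : (fun s => (t - s) ^ (α - 1) * (L' * (δ + 2 * (Real.exp (lam * s) * K))))
          = fun s => (L' * δ) * ((t - s) ^ (α - 1))
            + (2 * L' * K) * ((t - s) ^ (α - 1) * Real.exp (lam * s)) := by
        funext s; ring
      rw [hsplit2, integral_add ((aux_rpow_int hα0 h0t).const_mul _) (hIe.const_mul _),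
        MeasureTheory.integral_const_mul, MeasureTheory.integral_const_mul,
        aux_J1 hα0 h0t]
      have ht1 : t ^ α ≤ T ^ α := Real.rpow_le_rpow h0t htT hα0.le
      have hJ2 := aux_J2 (t := t) (lam := lam) hα0 h0t hlam
      gcongr
    -- combine
    have hrw : (Real.Gamma α)⁻¹ * (L' * δ * (T ^ α / α)
          + 2 * L' * K * (Real.exp (lam * t) * ((1 / lam) ^ α * Real.Gamma α)))
        = C * δ + Q * K * Real.exp (lam * t) := by
      rw [hCdef, hQdef]
      field_simp
    have hft : ‖x₁ t - x₂ t‖ ≤ δ + (C * δ + Q * K * Real.exp (lam * t)) := by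
      calc ‖x₁ t - x₂ t‖
          ≤ ‖φ₁ 0 - φ₂ 0‖ + (Real.Gamma α)⁻¹ *
            ‖∫ s in Set.Ioc (0:ℝ) t, ((t - s) ^ (α - 1) : ℝ) •
              (G s (x₁ s) (x₁ (s - τ)) - G s (x₂ s) (x₂ (s - τ)))‖ := by
            rw [hsub]
            refine (norm_add_le _ _).trans (le_of_eq ?_)
            rw [norm_smul, Real.norm_eq_abs, abs_of_nonneg (inv_nonneg.mpr hΓ.le)]
        _ ≤ δ + (Real.Gamma α)⁻¹ * (L' * δ * (T ^ α / α)
            + 2 * L' * K * (Real.exp (lam * t) * ((1 / lam) ^ α * Real.Gamma α))) := by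
            apply add_le_add (hδ 0 ⟨hτ0, le_refl 0⟩)
            exact mul_le_mul_of_nonneg_left (hnorm.trans hintval) (inv_nonneg.mpr hΓ.le)
        _ = δ + (C * δ + Q * K * Real.exp (lam * t)) := by rw [hrw]
    have hee : Real.exp (-(lam * t)) * Real.exp (lam * t) = 1 := by
      rw [← Real.exp_add]; simp
    have hexp1 : Real.exp (-(lam * t)) ≤ 1 := by
      rw [Real.exp_le_one_iff]
      have : 0 ≤ lam * t := mul_nonneg hlam.le h0t
      linarith
    calc Real.exp (-(lam * t)) * ‖x₁ t - x₂ t‖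
        ≤ Real.exp (-(lam * t)) * (δ + (C * δ + Q * K * Real.exp (lam * t))) :=
          mul_le_mul_of_nonneg_left hft (Real.exp_nonneg _)
      _ = Real.exp (-(lam * t)) * ((1 + C) * δ)
          + Q * K * (Real.exp (-(lam * t)) * Real.exp (lam * t)) := by ring
      _ = Real.exp (-(lam * t)) * ((1 + C) * δ) + Q * K := by rw [hee, mul_one]
      _ ≤ 1 * ((1 + C) * δ) + 1 / 4 * K := by
          refine add_le_add (mul_le_mul_of_nonneg_right hexp1 (by positivity)) ?_
          exact mul_le_mul_of_nonneg_right hQ hK0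
      _ = (1 + C) * δ + 1 / 4 * K := by ring
  -- close the Gronwall loop
  have hKle : K ≤ (1 + C) * δ + 1 / 4 * K := by
    apply csSup_le (Set.Nonempty.image _ ⟨0, h0T⟩)
    rintro _ ⟨t, ht, rfl⟩
    exact main t ht
  have hK43 : K ≤ 4 / 3 * ((1 + C) * δ) := by linarith
  -- final bound
  rw [← hδeq]
  apply Real.iSup_le _ (mul_nonneg hM.le hδ0)
  rintro ⟨t, ht⟩
  calc ‖x₁ t - x₂ t‖ ≤ Real.exp (lam * t) * K := hfK t ht
    _ ≤ Real.exp (lam * T) * (4 / 3 * ((1 + C) * δ)) := by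
        apply mul_le_mul _ hK43 hK0 (Real.exp_nonneg _)
        exact Real.exp_le_exp.mpr (mul_le_mul_of_nonneg_left ht.2 hlam.le)
    _ = 4 / 3 * (1 + C) * Real.exp (lam * T) * δ := by ring
end

section
/- Let n ≥ 1, T > 0, α ∈ (0,1], and K, R > 0. Let S be the set of all functions x : [0, T] → ℝⁿ for which there exist x₀ ∈ ℝⁿ with ‖x₀‖ ≤ R and a continuous g : [0, T] → ℝⁿ with ‖g(s)‖ ≤ K for all s, such that x(t) = x₀ + (1/Γ(α)) ∫₀ᵗ (t-s)^{α-1} g(s) ds for all t ∈ [0, T]. Then S is a relatively compact subset of the space C([0, T], ℝⁿ) of continuous functions with the supremum norm. -/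
open MeasureTheory Set Real BoundedContinuousFunction

lemma frac_weight_integrableOn {α : ℝ} (hα : 0 < α) {a b c : ℝ} (hab : a ≤ b) (hbc : b ≤ c) :
    IntegrableOn (fun s => (c - s) ^ (α - 1)) (Ioc a b) := by
  have h1 : IntervalIntegrable (fun x : ℝ => x ^ (α - 1)) volume (c - b) (c - a) :=
    intervalIntegral.intervalIntegrable_rpow' (by linarith)
  have h2 := (h1.comp_sub_left c).symm
  simp only [sub_sub_cancel] at h2
  rwa [intervalIntegrable_iff_integrableOn_Ioc_of_le hab] at h2

lemma frac_weight_integral {α : ℝ} (hα : 0 < α) {a b c : ℝ} (hab : a ≤ b) (hbc : b ≤ c) :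
    ∫ s in Ioc a b, (c - s) ^ (α - 1) = ((c - a) ^ α - (c - b) ^ α) / α := by
  rw [← intervalIntegral.integral_of_le hab,
    intervalIntegral.integral_comp_sub_left (fun x => x ^ (α - 1)) c,
    integral_rpow (Or.inl (by linarith)), sub_add_cancel]

variable {E : Type*} [NormedAddCommGroup E] [NormedSpace ℝ E]

lemma frac_integrableOn {α K T : ℝ} (hα : 0 < α) {g : ℝ → E}
    (hg : ContinuousOn g (Icc 0 T)) (hgK : ∀ s ∈ Icc 0 T, ‖g s‖ ≤ K)
    {a b c : ℝ} (h0a : 0 ≤ a) (hab : a ≤ b) (hbc : b ≤ c) (hbT : b ≤ T) :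
    IntegrableOn (fun s => ((c - s) ^ (α - 1)) • g s) (Ioc a b) := by
  have hsub : Ioc a b ⊆ Icc 0 T := fun s hs => ⟨h0a.trans hs.1.le, hs.2.trans hbT⟩
  have hmeas : AEStronglyMeasurable (fun s => ((c - s) ^ (α - 1)) • g s)
      (volume.restrict (Ioc a b)) := by
    refine AEStronglyMeasurable.smul ?_ ?_
    · exact ((measurable_const.sub measurable_id).pow measurable_const).aestronglyMeasurable
    · exact ((hg.mono hsub).aestronglyMeasurable measurableSet_Ioc)
  refine Integrable.mono' ((frac_weight_integrableOn hα hab hbc).const_mul K) hmeas ?_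
  filter_upwards [ae_restrict_mem measurableSet_Ioc] with s hs
  have h1 : (0:ℝ) ≤ c - s := by linarith [hs.2]
  rw [norm_smul, Real.norm_eq_abs, abs_of_nonneg (Real.rpow_nonneg h1 _)]
  calc (c - s) ^ (α - 1) * ‖g s‖ ≤ (c - s) ^ (α - 1) * K :=
        mul_le_mul_of_nonneg_left (hgK s (hsub hs)) (Real.rpow_nonneg h1 _)
    _ = K * (c - s) ^ (α - 1) := mul_comm _ _

lemma frac_norm_integral_le {α K T : ℝ} (hα : 0 < α) {g : ℝ → E}
    (hg : ContinuousOn g (Icc 0 T)) (hgK : ∀ s ∈ Icc 0 T, ‖g s‖ ≤ K)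
    {a b c : ℝ} (h0a : 0 ≤ a) (hab : a ≤ b) (hbc : b ≤ c) (hbT : b ≤ T) :
    ‖∫ s in Ioc a b, ((c - s) ^ (α - 1)) • g s‖ ≤ K * (((c - a) ^ α - (c - b) ^ α) / α) := by
  have hsub : Ioc a b ⊆ Icc 0 T := fun s hs => ⟨h0a.trans hs.1.le, hs.2.trans hbT⟩
  have hb := norm_integral_le_of_norm_le (f := fun s => ((c - s) ^ (α - 1)) • g s)
    (μ := volume.restrict (Ioc a b))
    ((frac_weight_integrableOn hα hab hbc).const_mul K) ?_
  · rwa [MeasureTheory.integral_const_mul, frac_weight_integral hα hab hbc] at hb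
  · filter_upwards [ae_restrict_mem measurableSet_Ioc] with s hs
    have h1 : (0:ℝ) ≤ c - s := by linarith [hs.2]
    rw [norm_smul, Real.norm_eq_abs, abs_of_nonneg (Real.rpow_nonneg h1 _)]
    calc (c - s) ^ (α - 1) * ‖g s‖ ≤ (c - s) ^ (α - 1) * K :=
          mul_le_mul_of_nonneg_left (hgK s (hsub hs)) (Real.rpow_nonneg h1 _)
      _ = K * (c - s) ^ (α - 1) := mul_comm _ _

lemma frac_diff_integral_le {α K T : ℝ} (hα : 0 < α) (hα1 : α ≤ 1) {g : ℝ → E}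
    (hg : ContinuousOn g (Icc 0 T)) (hgK : ∀ s ∈ Icc 0 T, ‖g s‖ ≤ K)
    {t₁ t₂ : ℝ} (h0 : 0 ≤ t₁) (h12 : t₁ ≤ t₂) (h1T : t₁ ≤ T) :
    ‖∫ s in Ioc 0 t₁, (((t₂ - s) ^ (α - 1)) - ((t₁ - s) ^ (α - 1))) • g s‖
      ≤ K * ((t₁ ^ α - (t₂ ^ α - (t₂ - t₁) ^ α)) / α) := by
  have hw1 := frac_weight_integrableOn (a := 0) (b := t₁) (c := t₁) hα h0 le_rfl
  have hw2 := frac_weight_integrableOn (a := 0) (b := t₁) (c := t₂) hα h0 (h0.trans h12 |> fun _ => h12)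
  have hwd : IntegrableOn (fun s => K * (((t₁ - s) ^ (α - 1)) - ((t₂ - s) ^ (α - 1))))
      (Ioc 0 t₁) := ((hw1.sub hw2).const_mul K)
  have hsub : Ioc 0 t₁ ⊆ Icc 0 T := Ioc_subset_Icc_self.trans (Icc_subset_Icc le_rfl h1T)
  have hae : ∀ᵐ s ∂(volume.restrict (Ioc 0 t₁)), s ≠ t₁ := by
    rw [ae_iff]
    have hsub' : {a : ℝ | ¬a ≠ t₁} ⊆ ({t₁} : Set ℝ) := fun s hs => by
      simpa using not_not.mp hs
    exact measure_mono_null hsub'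
      (le_antisymm ((Measure.restrict_le_self _).trans_eq (measure_singleton t₁)) zero_le)
  have hb := norm_integral_le_of_norm_le
    (f := fun s => (((t₂ - s) ^ (α - 1)) - ((t₁ - s) ^ (α - 1))) • g s) hwd ?_
  · rw [MeasureTheory.integral_const_mul] at hb
    have : ∫ s in Ioc 0 t₁, (((t₁ - s) ^ (α - 1)) - ((t₂ - s) ^ (α - 1)))
        = ((t₁ ^ α - (t₂ ^ α - (t₂ - t₁) ^ α)) / α) := by
      rw [integral_sub hw1 hw2, frac_weight_integral hα h0 le_rfl,
        frac_weight_integral hα h0 h12]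
      rw [sub_zero, sub_zero, sub_self, Real.zero_rpow hα.ne']
      ring
    rwa [this] at hb
  · filter_upwards [ae_restrict_mem measurableSet_Ioc, hae] with s hs hsne
    have hs1 : s < t₁ := lt_of_le_of_ne hs.2 hsne
    have hmono : (t₂ - s) ^ (α - 1) ≤ (t₁ - s) ^ (α - 1) :=
      Real.rpow_le_rpow_of_nonpos (by linarith) (by linarith) (by linarith)
    rw [norm_smul, Real.norm_eq_abs, abs_sub_comm, abs_of_nonneg (by linarith)]
    have hKs : ‖g s‖ ≤ K := hgK s (hsub hs)
    have h0w : (0:ℝ) ≤ (t₁ - s) ^ (α - 1) - (t₂ - s) ^ (α - 1) := by linarith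
    calc ((t₁ - s) ^ (α - 1) - (t₂ - s) ^ (α - 1)) * ‖g s‖
        ≤ ((t₁ - s) ^ (α - 1) - (t₂ - s) ^ (α - 1)) * K :=
          mul_le_mul_of_nonneg_left hKs h0w
      _ = K * ((t₁ - s) ^ (α - 1) - (t₂ - s) ^ (α - 1)) := mul_comm _ _

lemma frac_holder {α K T : ℝ} (hα : 0 < α) (hα1 : α ≤ 1) (hK : 0 ≤ K) {g : ℝ → E}
    (hg : ContinuousOn g (Icc 0 T)) (hgK : ∀ s ∈ Icc 0 T, ‖g s‖ ≤ K)
    {t₁ t₂ : ℝ} (h1 : t₁ ∈ Icc (0:ℝ) T) (h2 : t₂ ∈ Icc (0:ℝ) T) (h12 : t₁ ≤ t₂) :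
    ‖(∫ s in Ioc (0:ℝ) t₂, ((t₂ - s) ^ (α - 1)) • g s)
        - ∫ s in Ioc (0:ℝ) t₁, ((t₁ - s) ^ (α - 1)) • g s‖
      ≤ 2 * K / α * (t₂ - t₁) ^ α := by
  have hi1 : IntegrableOn (fun s => ((t₂ - s) ^ (α - 1)) • g s) (Ioc 0 t₁) :=
    frac_integrableOn hα hg hgK le_rfl h1.1 h12 h1.2
  have hi2 : IntegrableOn (fun s => ((t₂ - s) ^ (α - 1)) • g s) (Ioc t₁ t₂) :=
    frac_integrableOn hα hg hgK h1.1 h12 le_rfl h2.2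
  have hi3 : IntegrableOn (fun s => ((t₁ - s) ^ (α - 1)) • g s) (Ioc 0 t₁) :=
    frac_integrableOn hα hg hgK le_rfl h1.1 le_rfl h1.2
  have hsplit : (∫ s in Ioc (0:ℝ) t₂, ((t₂ - s) ^ (α - 1)) • g s)
      = (∫ s in Ioc (0:ℝ) t₁, ((t₂ - s) ^ (α - 1)) • g s)
        + ∫ s in Ioc t₁ t₂, ((t₂ - s) ^ (α - 1)) • g s := by
    rw [← setIntegral_union (Ioc_disjoint_Ioc_of_le le_rfl) measurableSet_Ioc hi1 hi2,
      Ioc_union_Ioc_eq_Ioc h1.1 h12]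
  have hdiff : (∫ s in Ioc (0:ℝ) t₁, ((t₂ - s) ^ (α - 1)) • g s)
        - (∫ s in Ioc (0:ℝ) t₁, ((t₁ - s) ^ (α - 1)) • g s)
      = ∫ s in Ioc (0:ℝ) t₁, (((t₂ - s) ^ (α - 1)) - ((t₁ - s) ^ (α - 1))) • g s := by
    rw [← integral_sub hi1 hi3]
    congr 1
    funext s
    rw [sub_smul]
  have e1 : ‖∫ s in Ioc t₁ t₂, ((t₂ - s) ^ (α - 1)) • g s‖ ≤ K * ((t₂ - t₁) ^ α / α) := by
    have := frac_norm_integral_le hα hg hgK h1.1 h12 le_rfl h2.2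
    rwa [sub_self, Real.zero_rpow hα.ne', sub_zero] at this
  have e2 := frac_diff_integral_le hα hα1 hg hgK h1.1 h12 h1.2
  have e3 : t₁ ^ α ≤ t₂ ^ α := Real.rpow_le_rpow h1.1 h12 hα.le
  have e4 : K * ((t₁ ^ α - (t₂ ^ α - (t₂ - t₁) ^ α)) / α) ≤ K * ((t₂ - t₁) ^ α / α) :=
    mul_le_mul_of_nonneg_left
      (div_le_div_of_nonneg_right (by linarith) hα.le) hK
  calc ‖(∫ s in Ioc (0:ℝ) t₂, ((t₂ - s) ^ (α - 1)) • g s)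
        - ∫ s in Ioc (0:ℝ) t₁, ((t₁ - s) ^ (α - 1)) • g s‖
      = ‖(∫ s in Ioc t₁ t₂, ((t₂ - s) ^ (α - 1)) • g s)
        + ∫ s in Ioc (0:ℝ) t₁, (((t₂ - s) ^ (α - 1)) - ((t₁ - s) ^ (α - 1))) • g s‖ := by
        rw [hsplit, ← hdiff]
        congr 1
        abel
    _ ≤ ‖∫ s in Ioc t₁ t₂, ((t₂ - s) ^ (α - 1)) • g s‖
        + ‖∫ s in Ioc (0:ℝ) t₁, (((t₂ - s) ^ (α - 1)) - ((t₁ - s) ^ (α - 1))) • g s‖ :=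
        norm_add_le _ _
    _ ≤ K * ((t₂ - t₁) ^ α / α) + K * ((t₂ - t₁) ^ α / α) := add_le_add e1 (e2.trans e4)
    _ = 2 * K / α * (t₂ - t₁) ^ α := by ring


/-- **Relative compactness of fractional-integral orbits (Arzelà–Ascoli).**
The set of functions `x(t) = x₀ + (1/Γ(α)) ∫₀ᵗ (t-s)^(α-1) g(s) ds` on `[0,T]`,
with `‖x₀‖ ≤ R` and `g` continuous with `‖g‖ ≤ K`, is relatively compact in
`C([0,T], ℝⁿ)` with the supremum norm. -/
theorem fractional_integral_set_relatively_compact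
    (n : ℕ) (hn : 1 ≤ n) (T α K R : ℝ) (hT : 0 < T)
    (hα : α ∈ Set.Ioc (0:ℝ) 1) (hK : 0 < K) (hR : 0 < R) :
    IsCompact (closure
      {x : C(Set.Icc (0:ℝ) T, EuclideanSpace ℝ (Fin n)) |
        ∃ x₀ : EuclideanSpace ℝ (Fin n), ‖x₀‖ ≤ R ∧
        ∃ g : ℝ → EuclideanSpace ℝ (Fin n),
          ContinuousOn g (Set.Icc (0:ℝ) T) ∧
          (∀ s ∈ Set.Icc (0:ℝ) T, ‖g s‖ ≤ K) ∧
          ∀ t : Set.Icc (0:ℝ) T, x t =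
            x₀ + (Real.Gamma α)⁻¹ •
              ∫ s in Set.Ioc (0:ℝ) (t : ℝ), (((t : ℝ) - s) ^ (α - 1)) • g s}) := by

  obtain ⟨hα0, hα1⟩ := hα
  have hΓ : 0 < Real.Gamma α := Real.Gamma_pos_of_pos hα0
  set X := Set.Icc (0:ℝ) T
  set Eu := EuclideanSpace ℝ (Fin n)
  set A : Set C(X, Eu) :=
      {x : C(X, Eu) |
        ∃ x₀ : Eu, ‖x₀‖ ≤ R ∧
        ∃ g : ℝ → Eu,
          ContinuousOn g (Set.Icc (0:ℝ) T) ∧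
          (∀ s ∈ Set.Icc (0:ℝ) T, ‖g s‖ ≤ K) ∧
          ∀ t : X, x t =
            x₀ + (Real.Gamma α)⁻¹ •
              ∫ s in Set.Ioc (0:ℝ) (t : ℝ), (((t : ℝ) - s) ^ (α - 1)) • g s} with hA
  -- uniform bound
  set M : ℝ := R + (Real.Gamma α)⁻¹ * (K * (T ^ α / α)) with hM
  -- pointwise bound for members of A
  have hbdd : ∀ x ∈ A, ∀ t : X, ‖x t‖ ≤ M := by
    rintro x ⟨x₀, hx₀, g, hg, hgK, hx⟩ t
    have ht : (t:ℝ) ∈ Set.Icc (0:ℝ) T := t.2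
    have hI := frac_norm_integral_le (a := 0) (b := (t:ℝ)) (c := (t:ℝ))
      hα0 hg hgK le_rfl ht.1 le_rfl ht.2
    rw [sub_self, Real.zero_rpow hα0.ne', sub_zero, sub_zero] at hI
    have htT : ((t:ℝ)) ^ α ≤ T ^ α := Real.rpow_le_rpow ht.1 ht.2 hα0.le
    calc ‖x t‖ = ‖x₀ + (Real.Gamma α)⁻¹ •
          ∫ s in Set.Ioc (0:ℝ) (t : ℝ), (((t : ℝ) - s) ^ (α - 1)) • g s‖ := by rw [hx t]
      _ ≤ ‖x₀‖ + ‖(Real.Gamma α)⁻¹ •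
          ∫ s in Set.Ioc (0:ℝ) (t : ℝ), (((t : ℝ) - s) ^ (α - 1)) • g s‖ := norm_add_le _ _
      _ ≤ R + (Real.Gamma α)⁻¹ * (K * (((t:ℝ)) ^ α / α)) := by
          refine add_le_add hx₀ ?_
          rw [norm_smul, Real.norm_eq_abs, abs_of_nonneg (inv_nonneg.2 hΓ.le)]
          exact mul_le_mul_of_nonneg_left hI (inv_nonneg.2 hΓ.le)
      _ ≤ M := by
          rw [hM]
          gcongr
  -- Hölder estimate for members of A
  set C : ℝ := (Real.Gamma α)⁻¹ * (2 * K / α) with hC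
  have hC0 : 0 < C := by positivity
  have hhold : ∀ x ∈ A, ∀ t u : X, ‖x t - x u‖ ≤ C * |(t:ℝ) - (u:ℝ)| ^ α := by
    have main : ∀ x ∈ A, ∀ t u : X, (u:ℝ) ≤ (t:ℝ) → ‖x t - x u‖ ≤ C * |(t:ℝ) - (u:ℝ)| ^ α := by
      rintro x ⟨x₀, hx₀, g, hg, hgK, hx⟩ t u hut
      rw [hx t, hx u]
      have hh := frac_holder hα0 hα1 hK.le hg hgK u.2 t.2 hut
      have : x₀ + (Real.Gamma α)⁻¹ •
            (∫ s in Set.Ioc (0:ℝ) (t : ℝ), (((t : ℝ) - s) ^ (α - 1)) • g s)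
          - (x₀ + (Real.Gamma α)⁻¹ •
            (∫ s in Set.Ioc (0:ℝ) (u : ℝ), (((u : ℝ) - s) ^ (α - 1)) • g s))
          = (Real.Gamma α)⁻¹ •
            ((∫ s in Set.Ioc (0:ℝ) (t : ℝ), (((t : ℝ) - s) ^ (α - 1)) • g s)
             - ∫ s in Set.Ioc (0:ℝ) (u : ℝ), (((u : ℝ) - s) ^ (α - 1)) • g s) := by
        rw [smul_sub]; abel
      rw [this, norm_smul, Real.norm_eq_abs, abs_of_nonneg (inv_nonneg.2 hΓ.le),
        abs_of_nonneg (by linarith : (0:ℝ) ≤ (t:ℝ) - (u:ℝ))]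
      calc (Real.Gamma α)⁻¹ * ‖(∫ s in Set.Ioc (0:ℝ) (t : ℝ), (((t : ℝ) - s) ^ (α - 1)) • g s)
             - ∫ s in Set.Ioc (0:ℝ) (u : ℝ), (((u : ℝ) - s) ^ (α - 1)) • g s‖
          ≤ (Real.Gamma α)⁻¹ * (2 * K / α * ((t:ℝ) - (u:ℝ)) ^ α) :=
            mul_le_mul_of_nonneg_left hh (inv_nonneg.2 hΓ.le)
        _ = C * ((t:ℝ) - (u:ℝ)) ^ α := by rw [hC]; ring
    intro x hxA t u
    rcases le_total (u:ℝ) (t:ℝ) with h | h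
    · exact main x hxA t u h
    · rw [← norm_neg, neg_sub, abs_sub_comm]
      exact main x hxA u t h
  -- transfer to bounded continuous functions
  let e : C(X, Eu) ≃ₜ (X →ᵇ Eu) :=
    (ContinuousMap.equivBoundedOfCompact X Eu).toHomeomorphOfIsInducing
      (ContinuousMap.isUniformInducing_equivBoundedOfCompact X Eu).isInducing
  have hcomp : IsCompact (closure (e '' A)) := by
    refine BoundedContinuousFunction.arzela_ascoli (Metric.closedBall (0:Eu) M)
      (isCompact_closedBall _ _) (e '' A) ?_ ?_
    · rintro f t hf
      obtain ⟨x, hxA, rfl⟩ := hf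
      rw [Metric.mem_closedBall, dist_zero_right]
      exact hbdd x hxA t
    · intro t₀
      rw [Metric.equicontinuousAt_iff]
      intro ε hε
      have hδ : (0:ℝ) < (ε / (2 * C)) ^ α⁻¹ := Real.rpow_pos_of_pos (by positivity) _
      refine ⟨(ε / (2 * C)) ^ α⁻¹, hδ, fun t ht f => ?_⟩
      obtain ⟨x, hxA, hxe⟩ := f.2
      have hft : (f : X → Eu) t = x t := by rw [← hxe]; rfl
      have hft₀ : (f : X → Eu) t₀ = x t₀ := by rw [← hxe]; rfl
      rw [hft, hft₀, dist_eq_norm, norm_sub_rev]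
      have hd : |(t:ℝ) - (t₀:ℝ)| < (ε / (2 * C)) ^ α⁻¹ := by
        rwa [Subtype.dist_eq, Real.dist_eq] at ht
      calc ‖x t - x t₀‖ ≤ C * |(t:ℝ) - (t₀:ℝ)| ^ α := hhold x hxA t t₀
        _ ≤ C * ((ε / (2 * C)) ^ α⁻¹) ^ α :=
            mul_le_mul_of_nonneg_left
              (Real.rpow_le_rpow (abs_nonneg _) hd.le hα0.le) hC0.le
        _ = C * (ε / (2 * C)) := by
            rw [Real.rpow_inv_rpow (by positivity) hα0.ne']
        _ = ε / 2 := by field_simp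
        _ < ε := by linarith
  have himg : e.symm '' closure (e '' A) = closure A := by
    rw [Homeomorph.image_closure]
    congr 1
    simp [Set.image_image]
  rw [← himg]
  exact hcomp.image e.symm.continuous
end
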